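/- arXiv:math/0701354 — 7 statements merged into one kernel-verified Lean document; each statement's English description precedes it below -/
import Mathlib

section
/- Let X be a Banach space containing no unconditional basic sequence, let (x_n) be a seminormalized basic sequence in X, and let S : [(x_n)] → X be a bounded linear operator such that (S x_n)_n converges in norm, where [(x_n)] denotes the closed linear span of (x_n). Then there exists a subsequence (x_{n_k}) of (x_n) such that the restriction of S to the closed linear span of (x_{n_{2k}} − x_{n_{2k−1}})_k is a compact operator. -/
open Filter

noncomputable section

/-- `x` is a basic sequence: nonzero terms and uniformly bounded initial-segment projections. -/
def IsBasicSeq {X : Type*} [NormedAddCommGroup X] [NormedSpace ℝ X] (x : ℕ → X) : Prop :=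
  (∀ n, x n ≠ 0) ∧
  ∃ C : ℝ, 1 ≤ C ∧ ∀ (a : ℕ → ℝ) (m n : ℕ), m ≤ n →
    ‖∑ i ∈ Finset.range m, a i • x i‖ ≤ C * ‖∑ i ∈ Finset.range n, a i • x i‖

/-- `x` is seminormalized: `0 < inf ‖x n‖ ≤ sup ‖x n‖ < ∞`. -/
def IsSeminormalized {X : Type*} [NormedAddCommGroup X] (x : ℕ → X) : Prop :=
  ∃ c C : ℝ, 0 < c ∧ ∀ n, c ≤ ‖x n‖ ∧ ‖x n‖ ≤ C

/-- `xt` is a spreading model of the sequence `x`. -/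
def IsSpreadingModelOf {X W : Type*} [NormedAddCommGroup X] [NormedSpace ℝ X]
    [NormedAddCommGroup W] [NormedSpace ℝ W] (xt : ℕ → W) (x : ℕ → X) : Prop :=
  ∃ ε : ℕ → ℝ, (∀ n, 0 < ε n) ∧ Antitone ε ∧ Tendsto ε atTop (nhds 0) ∧
    ∀ (n : ℕ) (a : ℕ → ℝ), (∀ i < n, |a i| ≤ 1) →
      ∀ k : ℕ → ℕ, StrictMono k → n ≤ k 0 →
        |‖∑ i ∈ Finset.range n, a i • x (k i)‖ - ‖∑ i ∈ Finset.range n, a i • xt i‖| < ε n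

/-- `z` dominates `x` on small coefficients (`x << z`): `Δ_{(z),(x)}(ε) → 0` as `ε ↘ 0`. -/
def SCDominates {Z W : Type*} [NormedAddCommGroup Z] [NormedSpace ℝ Z]
    [NormedAddCommGroup W] [NormedSpace ℝ W] (z : ℕ → Z) (x : ℕ → W) : Prop :=
  ∀ δ : ℝ, 0 < δ → ∃ ε : ℝ, 0 < ε ∧ ∀ (N : ℕ) (a : ℕ → ℝ),
    (∀ i, |a i| ≤ ε) → ‖∑ i ∈ Finset.range N, a i • z i‖ ≤ 1 →
    ‖∑ i ∈ Finset.range N, a i • x i‖ ≤ δ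

/-- `x` dominates `y` (with some constant). -/
def Dominates {X Y : Type*} [NormedAddCommGroup X] [NormedSpace ℝ X]
    [NormedAddCommGroup Y] [NormedSpace ℝ Y] (x : ℕ → X) (y : ℕ → Y) : Prop :=
  ∃ C : ℝ, 0 < C ∧ ∀ (N : ℕ) (a : ℕ → ℝ),
    ‖∑ i ∈ Finset.range N, a i • y i‖ ≤ C * ‖∑ i ∈ Finset.range N, a i • x i‖

/-- Property P1: `liminf_n inf_{|A| = n} ‖∑_{i ∈ A} z i‖ = ∞`. -/
def PropertyP1 {Z : Type*} [NormedAddCommGroup Z] (z : ℕ → Z) : Prop :=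
  ∀ R : ℝ, ∃ N : ℕ, ∀ A : Finset ℕ, N ≤ A.card → R ≤ ‖∑ i ∈ A, z i‖

/-- Property P2. -/
def PropertyP2 {Z : Type*} [NormedAddCommGroup Z] [NormedSpace ℝ Z] (z : ℕ → Z) : Prop :=
  ∀ ρ : ℝ, 0 < ρ → ∃ M : ℕ, ∀ (N : ℕ) (a : ℕ → ℝ),
    ‖∑ i ∈ Finset.range N, a i • z i‖ = 1 →
    ((Finset.range N).filter fun i => ρ ≤ |a i|).card ≤ M

/-- `z` is an unconditional (basic) sequence. -/
def IsUnconditionalSeq {Z : Type*} [NormedAddCommGroup Z] [NormedSpace ℝ Z] (z : ℕ → Z) : Prop :=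
  ∃ C : ℝ, 1 ≤ C ∧ ∀ (a : ℕ → ℝ) (s A : Finset ℕ), A ⊆ s →
    ‖∑ i ∈ A, a i • z i‖ ≤ C * ‖∑ i ∈ s, a i • z i‖

/-- There is a closed subspace `Y` of `X` with a basis and an operator `T : Y → X` which is
not a compact perturbation of a multiple of the inclusion map. -/
def ExistsNontrivialOperator (X : Type*) [NormedAddCommGroup X] [NormedSpace ℝ X] : Prop :=
  ∃ Y : Submodule ℝ X, IsClosed (Y : Set X) ∧
    (∃ b : ℕ → X, IsBasicSeq b ∧ Y = (Submodule.span ℝ (Set.range b)).topologicalClosure) ∧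
    ∃ T : Y →L[ℝ] X,
      ¬ ∃ (c : ℝ) (K : Y →L[ℝ] X), IsCompactOperator K ∧ T = c • Y.subtypeL + K

lemma coeff_bound {X : Type*} [NormedAddCommGroup X] [NormedSpace ℝ X]
    (x : ℕ → X) (C c : ℝ) (hc : 0 < c) (hcx : ∀ n, c ≤ ‖x n‖)
    (hC : ∀ (a : ℕ → ℝ) (m n : ℕ), m ≤ n →
      ‖∑ i ∈ Finset.range m, a i • x i‖ ≤ C * ‖∑ i ∈ Finset.range n, a i • x i‖)
    (φ : ℕ → ℕ) (hφ : StrictMono φ) (N : ℕ) (a : ℕ → ℝ) (j : ℕ) (hj : j < N) :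
    |a j| ≤ (2*C/c) * ‖∑ k ∈ Finset.range N, a k • (x (φ (2*k+1)) - x (φ (2*k)))‖ := by
  classical
  set M := φ (2*N) with hM
  set b : ℕ → ℝ := fun i =>
    (∑ k ∈ Finset.range N, if i = φ (2*k+1) then a k else 0)
    - ∑ k ∈ Finset.range N, if i = φ (2*k) then a k else 0 with hbdef
  set v := ∑ k ∈ Finset.range N, a k • (x (φ (2*k+1)) - x (φ (2*k))) with hv
  have hlt1 : ∀ k < N, φ (2*k+1) < M := fun k hk => hφ (by omega)
  have hlt0 : ∀ k < N, φ (2*k) < M := fun k hk => hφ (by omega)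
  have hsum : ∑ i ∈ Finset.range M, b i • x i = v := by
    simp only [hbdef, sub_smul, Finset.sum_sub_distrib, Finset.sum_smul]
    rw [Finset.sum_comm, Finset.sum_comm (s := Finset.range M)]
    rw [hv]
    simp only [smul_sub, Finset.sum_sub_distrib]
    congr 1
    · refine Finset.sum_congr rfl fun k hk => ?_
      rw [Finset.sum_congr rfl (fun i _ => by split <;> simp :
          ∀ i ∈ Finset.range M, (if i = φ (2*k+1) then a k else 0) • x i
            = if i = φ (2*k+1) then a k • x i else 0),
        Finset.sum_ite_eq' (Finset.range M) (φ (2*k+1)) (fun i => a k • x i)]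
      simp [Finset.mem_range.mpr (hlt1 k (Finset.mem_range.mp hk))]
    · refine Finset.sum_congr rfl fun k hk => ?_
      rw [Finset.sum_congr rfl (fun i _ => by split <;> simp :
          ∀ i ∈ Finset.range M, (if i = φ (2*k) then a k else 0) • x i
            = if i = φ (2*k) then a k • x i else 0),
        Finset.sum_ite_eq' (Finset.range M) (φ (2*k)) (fun i => a k • x i)]
      simp [Finset.mem_range.mpr (hlt0 k (Finset.mem_range.mp hk))]
  have hb : b (φ (2*j+1)) = a j := by
    have h1 : (∑ k ∈ Finset.range N, if φ (2*j+1) = φ (2*k+1) then a k else 0) = a j := by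
      rw [Finset.sum_eq_single j]
      · simp
      · intro k _ hkj
        rw [if_neg]
        intro h
        have := hφ.injective h
        omega
      · intro h; exact absurd (Finset.mem_range.mpr hj) h
    have h2 : (∑ k ∈ Finset.range N, if φ (2*j+1) = φ (2*k) then a k else 0) = 0 := by
      refine Finset.sum_eq_zero fun k _ => ?_
      rw [if_neg]
      intro h
      have := hφ.injective h
      omega
    simp only [hbdef, h1, h2, sub_zero]
  have hi0 : φ (2*j+1) < M := hlt1 j hj
  have key : ‖b (φ (2*j+1)) • x (φ (2*j+1))‖ ≤ 2*C*‖v‖ := by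
    have e : b (φ (2*j+1)) • x (φ (2*j+1)) =
        (∑ i ∈ Finset.range (φ (2*j+1)+1), b i • x i) - ∑ i ∈ Finset.range (φ (2*j+1)), b i • x i := by
      rw [Finset.sum_range_succ]; abel
    rw [e]
    have h3 := hC b (φ (2*j+1)+1) M (by omega)
    have h4 := hC b (φ (2*j+1)) M (by omega)
    rw [hsum] at h3 h4
    calc ‖_ - _‖ ≤ ‖∑ i ∈ Finset.range (φ (2*j+1)+1), b i • x i‖
        + ‖∑ i ∈ Finset.range (φ (2*j+1)), b i • x i‖ := norm_sub_le _ _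
      _ ≤ C * ‖v‖ + C * ‖v‖ := add_le_add h3 h4
      _ = 2*C*‖v‖ := by ring
  rw [hb, norm_smul, Real.norm_eq_abs] at key
  have h1 : c * |a j| ≤ 2*C*‖v‖ :=
    le_trans (by nlinarith [abs_nonneg (a j), hcx (φ (2*j+1)), norm_nonneg (x (φ (2*j+1)))]) key
  rw [div_mul_eq_mul_div, le_div_iff₀ hc]
  nlinarith

/-- Remark 1.3. -/
theorem statement_4 {X : Type*} [NormedAddCommGroup X] [NormedSpace ℝ X] [CompleteSpace X]
    -- X contains no unconditional basic sequence
    (hnu : ¬ ∃ u : ℕ → X, IsBasicSeq u ∧ IsUnconditionalSeq u)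
    (x : ℕ → X) (hxsn : IsSeminormalized x) (hxb : IsBasicSeq x)
    (S : ↥((Submodule.span ℝ (Set.range x)).topologicalClosure) →L[ℝ] X)
    (L : X)
    (hconv : Tendsto (fun n => S ⟨x n,
        Submodule.le_topologicalClosure _ (Submodule.subset_span (Set.mem_range_self n))⟩)
      atTop (nhds L)) :
    ∃ φ : ℕ → ℕ, StrictMono φ ∧
      ∀ h : ∀ v : X,
          v ∈ (Submodule.span ℝ
              (Set.range fun k => x (φ (2 * k + 1)) - x (φ (2 * k)))).topologicalClosure →
          v ∈ (Submodule.span ℝ (Set.range x)).topologicalClosure,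
        IsCompactOperator
          (fun w : ↥((Submodule.span ℝ
              (Set.range fun k => x (φ (2 * k + 1)) - x (φ (2 * k)))).topologicalClosure) =>
            S ⟨(w : X), h w w.2⟩) := by
  classical
  obtain ⟨c, Cu, hc, hcx⟩ := hxsn
  obtain ⟨-, C, hC1, hC⟩ := hxb
  have hxZ : ∀ n, x n ∈ (Submodule.span ℝ (Set.range x)).topologicalClosure := fun n =>
    Submodule.le_topologicalClosure _ (Submodule.subset_span (Set.mem_range_self n))
  have hev : ∀ m : ℕ, ∀ᶠ k in atTop, ‖S ⟨x k, hxZ k⟩ - L‖ < (1/2:ℝ)^m := by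
    intro m
    obtain ⟨N0, hN0⟩ := Metric.tendsto_atTop.mp hconv ((1/2)^m) (by positivity)
    exact eventually_atTop.mpr ⟨N0, fun k hk => by simpa [dist_eq_norm] using hN0 k hk⟩
  obtain ⟨φ, hφ, hφ2⟩ := extraction_forall_of_eventually hev
  refine ⟨φ, hφ, ?_⟩
  intro h
  set z : ℕ → X := fun k => x (φ (2*k+1)) - x (φ (2*k)) with hzdef
  have hzZ : ∀ k, z k ∈ (Submodule.span ℝ (Set.range x)).topologicalClosure := fun k =>
    sub_mem (hxZ _) (hxZ _)
  set u : ℕ → X := fun k => S ⟨z k, hzZ k⟩ with hudef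
  have hu : ∀ k, ‖u k‖ ≤ 2 * (1/2:ℝ)^k := by
    intro k
    have e : (⟨z k, hzZ k⟩ : (Submodule.span ℝ (Set.range x)).topologicalClosure)
        = ⟨x (φ (2*k+1)), hxZ _⟩ - ⟨x (φ (2*k)), hxZ _⟩ := by
      apply Subtype.ext; simp [hzdef]
    have e2 : u k = (S ⟨x (φ (2*k+1)), hxZ _⟩ - L) - (S ⟨x (φ (2*k)), hxZ _⟩ - L) := by
      simp [hudef, e, map_sub]
    rw [e2]
    have b1 := (hφ2 (2*k+1)).le
    have b2 := (hφ2 (2*k)).le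
    have p1 : ((1:ℝ)/2)^(2*k+1) ≤ (1/2)^k :=
      pow_le_pow_of_le_one (by norm_num) (by norm_num) (by omega)
    have p2 : ((1:ℝ)/2)^(2*k) ≤ (1/2)^k :=
      pow_le_pow_of_le_one (by norm_num) (by norm_num) (by omega)
    calc ‖_ - _‖ ≤ ‖S ⟨x (φ (2*k+1)), hxZ _⟩ - L‖ + ‖S ⟨x (φ (2*k)), hxZ _⟩ - L‖ :=
          norm_sub_le _ _
      _ ≤ 2 * (1/2)^k := by linarith
  set K := 2*C/c with hK
  have hK0 : 0 < K := div_pos (by linarith) hc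
  set clamp : ℝ → ℝ := fun r => min (2*K) (max (-(2*K)) r) with hclamp
  have hclampabs : ∀ r, |clamp r| ≤ 2*K := by
    intro r
    refine abs_le.mpr ⟨le_min (by linarith) (le_max_left _ _), min_le_left _ _⟩
  have hclampid : ∀ r, |r| ≤ 2*K → clamp r = r := by
    intro r hr
    rw [hclamp]
    obtain ⟨h1, h2⟩ := abs_le.mp hr
    simp only []
    rw [max_eq_right h1, min_eq_right h2]
  set g : (ℕ → ℝ) → X := fun t => ∑' k, clamp (t k) • u k with hg
  have hbound : ∀ (t : ℕ → ℝ) k, ‖clamp (t k) • u k‖ ≤ (2*K) * (2*(1/2:ℝ)^k) := by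
    intro t k
    rw [norm_smul, Real.norm_eq_abs]
    exact mul_le_mul (hclampabs _) (hu k) (norm_nonneg _) (by linarith)
  have hsummable : Summable (fun k => (2*K) * (2*(1/2:ℝ)^k)) := by
    apply Summable.mul_left
    exact (summable_geometric_of_lt_one (by norm_num) (by norm_num)).mul_left 2
  have hgcont : Continuous g := by
    refine continuous_tsum (fun k => ?_) hsummable (fun k t => hbound t k)
    exact (continuous_const.min (continuous_const.max (continuous_apply k))).smul continuous_const
  set T : Set (ℕ → ℝ) := Set.pi Set.univ (fun _ => Set.Icc (-(2*K)) (2*K)) with hT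
  have hTcomp : IsCompact T := isCompact_univ_pi fun _ => isCompact_Icc
  refine ⟨g '' T, hTcomp.image hgcont, ?_⟩
  refine Filter.mem_of_superset (Metric.closedBall_mem_nhds 0 one_pos) ?_
  intro w hw
  simp only [Set.mem_preimage]
  have hwn : ‖(w : X)‖ ≤ 1 := by
    have h1 : ‖w‖ ≤ 1 := by simpa using Metric.mem_closedBall.mp hw
    simpa using h1
  have hspan : ∀ (v : X) (hv : v ∈ Submodule.span ℝ (Set.range z)), ‖v‖ ≤ 2 →
      S ⟨v, h v (Submodule.le_topologicalClosure _ hv)⟩ ∈ g '' T := by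
    intro v hv hv2
    obtain ⟨cf, hcf⟩ := (Finsupp.mem_span_range_iff_exists_finsupp).mp hv
    obtain ⟨N, hN⟩ : ∃ N, ∀ i ∈ cf.support, i < N :=
      ⟨(cf.support.sup id) + 1, fun i hi => Nat.lt_succ_of_le (Finset.le_sup (f := id) hi)⟩
    have hvsum : ∑ k ∈ Finset.range N, cf k • z k = v := by
      rw [← hcf, Finsupp.sum]
      exact (Finset.sum_subset (fun i hi => Finset.mem_range.mpr (hN i hi))
        (fun i _ hnp => by simp [Finsupp.notMem_support_iff.mp hnp])).symm
    have hcb : ∀ j < N, |cf j| ≤ 2*K := by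
      intro j hj
      have hb := coeff_bound x C c hc (fun n => (hcx n).1) hC φ hφ N cf j hj
      rw [show ∑ k ∈ Finset.range N, cf k • (x (φ (2*k+1)) - x (φ (2*k))) = v from hvsum] at hb
      calc |cf j| ≤ K * ‖v‖ := hb
        _ ≤ K * 2 := by nlinarith
        _ = 2*K := by ring
    set t : ℕ → ℝ := fun k => if k < N then cf k else 0 with ht
    have htT : t ∈ T := by
      intro k _
      simp only [ht, Set.mem_Icc]
      split
      · exact abs_le.mp (hcb k (by assumption))
      · constructor <;> linarith
    refine ⟨t, htT, ?_⟩
    have e1 : (⟨v, h v (Submodule.le_topologicalClosure _ hv)⟩ :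
          (Submodule.span ℝ (Set.range x)).topologicalClosure)
        = ∑ k ∈ Finset.range N, cf k • (⟨z k, hzZ k⟩ :
            (Submodule.span ℝ (Set.range x)).topologicalClosure) := by
      apply Subtype.ext
      push_cast
      exact hvsum.symm
    simp only [hg]
    rw [tsum_eq_sum (s := Finset.range N)
      (fun k hk => by
        have : t k = 0 := if_neg (fun hlt => hk (Finset.mem_range.mpr hlt))
        rw [this, hclampid 0 (by simp; linarith), zero_smul])]
    rw [e1, map_sum]
    refine (Finset.sum_congr rfl fun k hk => ?_).symm
    have htk : t k = cf k := if_pos (Finset.mem_range.mp hk)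
    rw [htk, hclampid _ (hcb k (Finset.mem_range.mp hk)), map_smul]
  have hwZ2 : (w : X) ∈ closure ((Submodule.span ℝ (Set.range z) : Submodule ℝ X) : Set X) := by
    have h2 := w.2
    rwa [← Submodule.topologicalClosure_coe]
  obtain ⟨s, hs_mem, hs_lim⟩ := mem_closure_iff_seq_limit.mp hwZ2
  have hlim_norm : Tendsto (fun n => ‖s n‖) atTop (nhds ‖(w : X)‖) := hs_lim.norm
  have hev2 : ∀ᶠ n in atTop, ‖s n‖ ≤ 2 := by
    have : ∀ᶠ n in atTop, ‖s n‖ < 2 :=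
      hlim_norm.eventually_lt_const (by linarith)
    exact this.mono fun n hn => hn.le
  have hlim2 : Tendsto (fun n => S ⟨s n, h (s n) (Submodule.le_topologicalClosure _ (hs_mem n))⟩)
      atTop (nhds (S ⟨(w : X), h w w.2⟩)) := by
    refine (S.continuous.tendsto _).comp ?_
    rw [tendsto_subtype_rng]
    exact hs_lim
  exact (hTcomp.image hgcont).isClosed.mem_of_tendsto hlim2
    (hev2.mono fun n hn => hspan (s n) (hs_mem n) hn)

end
end

section
/- Let X be a Banach space and for each i ∈ ℕ let (x_{i,j})_{j=i}^∞ be a seminormalized weakly null sequence in X. Then for every ε > 0 there exists a subarray (y_{i,j})_{(i,j)∈I} of (x_{i,j})_{(i,j)∈I} which is a regular array whose basis constant is at most 1 + ε. -/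
open Filter

noncomputable section

/-- The (strict) reverse lexicographic order on `ℕ × ℕ`. -/
def RLlt (p q : ℕ × ℕ) : Prop := p.2 < q.2 ∨ (p.2 = q.2 ∧ p.1 < q.1)

/-- An array in `X`: each row `(x i j)_{j ≥ i}` is a seminormalized weakly null sequence. -/
def IsArray {X : Type*} [NormedAddCommGroup X] [NormedSpace ℝ X] (x : ℕ → ℕ → X) : Prop :=
  ∀ i : ℕ,
    (∃ c C : ℝ, 0 < c ∧ ∀ j, i ≤ j → c ≤ ‖x i j‖ ∧ ‖x i j‖ ≤ C) ∧
    ∀ f : X →L[ℝ] ℝ, Tendsto (fun j => f (x i j)) atTop (nhds 0)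

/-- A regular array with basis constant at most `C`: the array, enumerated in the reverse
lexicographic order, is a basic sequence whose initial-segment projections have norm
at most `C`. -/
def IsRegularArrayWith {X : Type*} [NormedAddCommGroup X] [NormedSpace ℝ X]
    (C : ℝ) (x : ℕ → ℕ → X) : Prop :=
  IsArray x ∧ 1 ≤ C ∧
  ∀ s : Finset (ℕ × ℕ), (∀ q ∈ s, q.1 ≤ q.2) →
    ∀ (a : ℕ × ℕ → ℝ) (p : ℕ × ℕ),
      ‖∑ q ∈ s.filter (fun q => q.2 < p.2 ∨ (q.2 = p.2 ∧ q.1 ≤ p.1)), a q • x q.1 q.2‖ ≤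
        C * ‖∑ q ∈ s, a q • x q.1 q.2‖

/-- A regular array. -/
def IsRegularArray {X : Type*} [NormedAddCommGroup X] [NormedSpace ℝ X]
    (x : ℕ → ℕ → X) : Prop :=
  ∃ C : ℝ, IsRegularArrayWith C x

/-- `y` is a subarray of `x`. -/
def IsSubarrayOf {X : Type*} [NormedAddCommGroup X] (y x : ℕ → ℕ → X) : Prop :=
  ∃ h : ℕ → ℕ → ℕ,
    (∀ i j, i ≤ j → i ≤ h i j) ∧
    (∀ i j i' j', i ≤ j → i' ≤ j' → RLlt (i, j) (i', j') → RLlt (i, h i j) (i', h i' j')) ∧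
    ∀ i j, i ≤ j → y i j = x i (h i j)

/-- `f` has pattern `a` on `(k₀, F)` with respect to the array `x`: the values of `f` on
the `k₀`-th row of `x` along `F` (in increasing order) are exactly the entries of `a`. -/
def HasPatternOn {X : Type*} [NormedAddCommGroup X] [NormedSpace ℝ X]
    (x : ℕ → ℕ → X) (f : X →L[ℝ] ℝ) (k₀ : ℕ) (F : Finset ℕ) (a : List ℝ) : Prop :=
  (F.sort (· ≤ ·)).map (fun j => f (x k₀ j)) = a


/-- Triangular numbers. -/
def Tn (j : ℕ) : ℕ := ∑ k ∈ Finset.range j, (k+1)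

lemma Tn_succ (j : ℕ) : Tn (j+1) = Tn j + (j+1) := Finset.sum_range_succ _ _

lemma Tn_mono : Monotone Tn := by
  intro i j hij
  exact Finset.sum_le_sum_of_subset (Finset.range_subset_range.2 hij)

lemma le_Tn (j : ℕ) : j ≤ Tn j := by
  induction j with
  | zero => simp [Tn]
  | succ n ih => rw [Tn_succ]; omega

/-- Position of a pair in the reverse lexicographic enumeration. -/
def posFn (q : ℕ × ℕ) : ℕ := Tn q.2 + q.1

lemma posFn_lt_posFn {q q' : ℕ × ℕ} (hq : q.1 ≤ q.2) (h : RLlt q q') :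
    posFn q < posFn q' := by
  rcases h with h | ⟨h1, h2⟩
  · have h3 : Tn (q.2 + 1) ≤ Tn q'.2 := Tn_mono h
    have h4 := Tn_succ q.2
    unfold posFn; omega
  · unfold posFn; rw [h1]; omega

lemma rl_trichotomy (q q' : ℕ × ℕ) : RLlt q q' ∨ q = q' ∨ RLlt q' q := by
  unfold RLlt
  rcases lt_trichotomy q.2 q'.2 with h | h | h
  · exact Or.inl (Or.inl h)
  · rcases lt_trichotomy q.1 q'.1 with h' | h' | h'
    · exact Or.inl (Or.inr ⟨h, h'⟩)
    · exact Or.inr (Or.inl (Prod.ext h' h))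
    · exact Or.inr (Or.inr (Or.inr ⟨h.symm, h'⟩))
  · exact Or.inr (Or.inr (Or.inl h))

lemma posFn_inj {q q' : ℕ × ℕ} (hq : q.1 ≤ q.2) (hq' : q'.1 ≤ q'.2)
    (h : posFn q = posFn q') : q = q' := by
  rcases rl_trichotomy q q' with h' | h' | h'
  · exact absurd h (posFn_lt_posFn hq h').ne
  · exact h'
  · exact absurd h.symm (posFn_lt_posFn hq' h').ne

lemma posFn_surj (n : ℕ) : ∃ q : ℕ × ℕ, q.1 ≤ q.2 ∧ posFn q = n := by
  induction n with
  | zero => exact ⟨(0, 0), le_refl _, by simp [posFn, Tn]⟩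
  | succ n ih =>
    obtain ⟨⟨i, j⟩, hij, hpos⟩ := ih
    simp only [posFn] at hpos ⊢
    rcases lt_or_eq_of_le hij with h | h
    · exact ⟨(i+1, j), by omega, by simp at hpos ⊢; omega⟩
    · refine ⟨(0, j+1), by omega, ?_⟩
      have := Tn_succ j
      simp at hpos ⊢
      omega

/-- Iterate a choice function over natural numbers. -/
def natRecFun (F : ℕ → (ℕ → ℕ) → ℕ) : ℕ → ℕ → ℕ
  | 0 => fun _ => 0
  | (n+1) => fun k => if k = n then F n (natRecFun F n) else natRecFun F n k

lemma natRecFun_coh (F : ℕ → (ℕ → ℕ) → ℕ) :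
    ∀ n k, k < n → natRecFun F n k = F k (natRecFun F k) := by
  intro n
  induction n with
  | zero => omega
  | succ n ih =>
    intro k hk
    rcases eq_or_lt_of_le (Nat.lt_succ_iff.mp hk) with h | h
    · subst h; simp [natRecFun]
    · simp only [natRecFun]
      rw [if_neg h.ne, ih k h]

lemma mazur_step {X : Type*} [NormedAddCommGroup X] [NormedSpace ℝ X] [CompleteSpace X]
    (V : Submodule ℝ X) (hV : FiniteDimensional ℝ ↥V)
    (u : ℕ → X) (c₀ : ℝ) (hc₀ : 0 < c₀) (hu : ∀ᶠ j in atTop, c₀ ≤ ‖u j‖)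
    (hw : ∀ f : X →L[ℝ] ℝ, Tendsto (fun j => f (u j)) atTop (nhds 0))
    (δ : ℝ) (hδ : 0 < δ) (N : ℕ) :
    ∃ m, N ≤ m ∧ ∀ v ∈ V, ∀ t : ℝ, ‖v‖ ≤ (1 + δ) * ‖v + t • u m‖ := by
  classical
  have hδ1 : (0:ℝ) < 1 + δ := by linarith
  obtain ⟨η, hη, hη8, hηsmall⟩ :
      ∃ η : ℝ, 0 < η ∧ η * (8 * (1 + δ)) = δ ∧ η < 1 / 4 := by
    refine ⟨δ / (8 * (1 + δ)), by positivity, by field_simp, ?_⟩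
    rw [div_lt_div_iff₀ (by positivity) (by norm_num)]
    nlinarith
  -- compact unit sphere of V, as a subset of X
  haveI := hV
  have hK : IsCompact ((Subtype.val : V → X) '' Metric.sphere (0 : V) 1) :=
    (isCompact_sphere (0 : V) 1).image continuous_subtype_val
  obtain ⟨t0, ht0fin, ht0cov⟩ :=
    (Metric.totallyBounded_iff).mp hK.totallyBounded η hη
  -- dual functionals
  have hF : ∀ y : X, y ≠ 0 → ∃ f : X →L[ℝ] ℝ, ‖f‖ = 1 ∧ f y = ‖y‖ := by
    intro y hy
    obtain ⟨g, hg1, hg2⟩ := exists_dual_vector ℝ y (norm_ne_zero_iff.mpr hy)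
    exact ⟨g, hg1, by simpa using hg2⟩
  obtain ⟨F, hFprop⟩ :
      ∃ F : X → (X →L[ℝ] ℝ), ∀ y : X, y ≠ 0 → ‖F y‖ = 1 ∧ F y y = ‖y‖ := by
    refine ⟨fun y => if h : y ≠ 0 then (hF y h).choose else 0, fun y hy => ?_⟩
    simp only [dif_pos hy]
    exact (hF y hy).choose_spec
  -- eventually all functionals are small on u j
  have hev : ∀ᶠ j in atTop, ∀ y ∈ t0, |F y (u j)| < c₀ * η := by
    rw [eventually_all_finite ht0fin]
    intro y _
    have h1 := (hw (F y)).abs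
    simp only [abs_zero] at h1
    exact h1.eventually_lt_const (by positivity)
  obtain ⟨m, hmN, hmu, hmf⟩ := ((eventually_ge_atTop N).and (hu.and hev)).exists
  refine ⟨m, hmN, ?_⟩
  -- key estimate for unit vectors
  have key : ∀ w, w ∈ V → ‖w‖ = 1 → ∀ s : ℝ, 1 ≤ (1 + δ) * ‖w + s • u m‖ := by
    intro w hwV hw1 s
    have hwK : w ∈ (Subtype.val : V → X) '' Metric.sphere (0 : V) 1 := by
      refine ⟨⟨w, hwV⟩, ?_, rfl⟩
      simp [Metric.mem_sphere, dist_eq_norm]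
      exact hw1
    obtain ⟨y, hyt, hyball⟩ := by
      have := ht0cov hwK
      simpa using this
    have hdist : ‖w - y‖ < η := by
      rw [← dist_eq_norm]
      exact Metric.mem_ball.mp hyball
    have hynorm : 1 - η ≤ ‖y‖ := by
      have := norm_sub_norm_le w y
      rw [hw1] at this
      linarith
    have hy0 : y ≠ 0 := by
      intro h
      rw [h, norm_zero] at hynorm
      linarith
    obtain ⟨hFy1, hFyy⟩ := hFprop y hy0
    have hFyu : |F y (u m)| < c₀ * η := hmf y hyt
    by_cases hs : |s| ≤ 2 / c₀
    · -- small coefficient case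
      have hA : (0:ℝ) ≤ ‖w + s • u m‖ := norm_nonneg _
      have h5 : F y y + F y (w - y) + s * F y (u m) ≤ ‖w + s • u m‖ := by
        have heq : F y y + F y (w - y) + s * F y (u m) = F y (w + s • u m) := by
          have e1 : (F y) (w + s • u m) = F y w + s * F y (u m) := by
            rw [map_add, map_smul]; rfl
          have e2 : F y w = F y y + F y (w - y) := by
            rw [← map_add]
            congr 1
            abel
          rw [e1, e2]
        rw [heq]
        calc F y (w + s • u m) ≤ |F y (w + s • u m)| := le_abs_self _
          _ ≤ ‖F y‖ * ‖w + s • u m‖ := (F y).le_opNorm _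
          _ = ‖w + s • u m‖ := by rw [hFy1, one_mul]
      have h3 : -η ≤ F y (w - y) := by
        have h31 := (F y).le_opNorm (w - y)
        rw [hFy1, one_mul] at h31
        have habs : |F y (w - y)| ≤ ‖w - y‖ := h31
        have := abs_le.mp habs
        linarith
      have h4 : -(2 * η) ≤ s * F y (u m) := by
        have h41 : |s * F y (u m)| ≤ (2 / c₀) * (c₀ * η) := by
          rw [abs_mul]
          exact mul_le_mul hs hFyu.le (abs_nonneg _) (by positivity)
        have h42 : (2 / c₀) * (c₀ * η) = 2 * η := by
          field_simp
        rw [h42] at h41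
        linarith [(abs_le.mp h41).1]
      have hAbound : 1 - 4 * η ≤ ‖w + s • u m‖ := by
        rw [hFyy] at h5
        linarith
      have hfinal : (1 + δ) * (1 - 4 * η) ≤ (1 + δ) * ‖w + s • u m‖ :=
        mul_le_mul_of_nonneg_left hAbound hδ1.le
      have hcompute : (1 + δ) * (1 - 4 * η) = 1 + δ / 2 := by
        have h8 : η * (1 + δ) = δ / 8 := by linarith [hη8]
        have h9 : (1 + δ) * (1 - 4 * η) = 1 + δ - 4 * (η * (1 + δ)) := by ring
        rw [h9, h8]
        ring
      rw [hcompute] at hfinal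
      linarith
    · -- large coefficient case
      push_neg at hs
      have h1 : ‖s • u m‖ - ‖w‖ ≤ ‖w + s • u m‖ := by
        have h11 := norm_add_le (w + s • u m) (-w)
        have h12 : w + s • u m + -w = s • u m := by abel
        rw [h12, norm_neg] at h11
        linarith
      have h2 : 2 ≤ ‖s • u m‖ := by
        rw [norm_smul, Real.norm_eq_abs]
        calc (2:ℝ) = (2 / c₀) * c₀ := by field_simp
          _ ≤ |s| * c₀ := mul_le_mul_of_nonneg_right hs.le hc₀.le
          _ ≤ |s| * ‖u m‖ := mul_le_mul_of_nonneg_left hmu (abs_nonneg _)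
      have h3 : 1 ≤ ‖w + s • u m‖ := by rw [hw1] at h1; linarith
      nlinarith
  -- reduce general case to unit vectors by scaling
  intro v hvV t
  rcases eq_or_ne v 0 with rfl | hv0
  · simp only [norm_zero]
    positivity
  · have hr : 0 < ‖v‖ := norm_pos_iff.mpr hv0
    have hunit : ‖(‖v‖⁻¹ • v)‖ = 1 := by
      rw [norm_smul, norm_inv, norm_norm, inv_mul_cancel₀ hr.ne']
    have hk := key (‖v‖⁻¹ • v) (V.smul_mem _ hvV) hunit (‖v‖⁻¹ * t)
    have heq : ‖v‖⁻¹ • v + (‖v‖⁻¹ * t) • u m = ‖v‖⁻¹ • (v + t • u m) := by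
      rw [smul_add, mul_smul]
    rw [heq, norm_smul, norm_inv, norm_norm] at hk
    calc ‖v‖ = ‖v‖ * 1 := (mul_one _).symm
      _ ≤ ‖v‖ * ((1 + δ) * (‖v‖⁻¹ * ‖v + t • u m‖)) :=
          mul_le_mul_of_nonneg_left hk hr.le
      _ = (1 + δ) * ‖v + t • u m‖ * (‖v‖ * ‖v‖⁻¹) := by ring
      _ = (1 + δ) * ‖v + t • u m‖ := by rw [mul_inv_cancel₀ hr.ne', mul_one]

lemma cond_iff {q : ℕ × ℕ} (hq : q.1 ≤ q.2) (p : ℕ × ℕ) :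
    (q.2 < p.2 ∨ (q.2 = p.2 ∧ q.1 ≤ p.1)) ↔ posFn q < posFn (min p.1 p.2, p.2) + 1 := by
  have hp' : (min p.1 p.2, p.2).1 ≤ (min p.1 p.2, p.2).2 := min_le_right _ _
  constructor
  · intro h
    have hor : RLlt q (min p.1 p.2, p.2) ∨ q = (min p.1 p.2, p.2) := by
      rcases h with h | ⟨h1, h2⟩
      · exact Or.inl (Or.inl h)
      · have hq1 : q.1 ≤ min p.1 p.2 := le_min h2 (h1 ▸ hq)
        rcases lt_or_eq_of_le hq1 with h' | h'
        · exact Or.inl (Or.inr ⟨h1, h'⟩)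
        · exact Or.inr (Prod.ext h' h1)
    rcases hor with h' | h'
    · have := posFn_lt_posFn hq h'
      omega
    · rw [h']
      omega
  · intro h
    by_contra hc
    push_neg at hc
    obtain ⟨hc1, hc2⟩ := hc
    have hrl : RLlt (min p.1 p.2, p.2) q := by
      rcases lt_or_eq_of_le hc1 with h' | h'
      · exact Or.inl h'
      · have hlt : p.1 < q.1 := hc2 h'.symm
        exact Or.inr ⟨h', lt_of_le_of_lt (min_le_left _ _) hlt⟩
    have := posFn_lt_posFn hp' hrl
    omega

/-- Remark 2.3. -/
theorem statement_5 {X : Type*} [NormedAddCommGroup X] [NormedSpace ℝ X] [CompleteSpace X]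
    (x : ℕ → ℕ → X) (hx : IsArray x) (ε : ℝ) (hε : 0 < ε) :
    ∃ y : ℕ → ℕ → X, IsSubarrayOf y x ∧ IsRegularArrayWith (1 + ε) y := by
  classical
  -- seminormalization data
  choose clow Cup hclpos hclb using fun i => (hx i).1
  -- enumeration of the index set in reverse lexicographic order
  obtain ⟨e, he⟩ : ∃ e : ℕ → ℕ × ℕ, ∀ n, (e n).1 ≤ (e n).2 ∧ posFn (e n) = n :=
    ⟨fun n => (posFn_surj n).choose, fun n => (posFn_surj n).choose_spec⟩
  have he_pos : ∀ q : ℕ × ℕ, q.1 ≤ q.2 → e (posFn q) = q := fun q hq =>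
    posFn_inj (he (posFn q)).1 hq (he (posFn q)).2
  -- the weights
  obtain ⟨aw, haw1, hawle, hawlt⟩ : ∃ aw : ℕ → ℝ,
      (∀ n, 1 ≤ aw n) ∧ (∀ n, aw n ≤ 1 + ε) ∧ (∀ n, aw n < aw (n+1)) := by
    refine ⟨fun n => 1 + ε - ε / 2 ^ n, fun n => ?_, fun n => ?_, fun n => ?_⟩
    · have h2 : (1:ℝ) ≤ 2 ^ n := one_le_pow₀ (by norm_num)
      have := div_le_self hε.le h2
      simp only
      linarith
    · have : (0:ℝ) ≤ ε / 2 ^ n := by positivity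
      simp only
      linarith
    · have hp : (0:ℝ) < 2 ^ n := by positivity
      have hq : (2:ℝ) ^ (n+1) = 2 ^ n * 2 := pow_succ 2 n
      have : ε / 2 ^ (n+1) < ε / 2 ^ n :=
        div_lt_div_of_pos_left hε hp (by nlinarith)
      simp only
      linarith
  have hawpos : ∀ n, (0:ℝ) < aw n := fun n => lt_of_lt_of_le one_pos (haw1 n)
  -- the inductive choice of columns
  have step : ∀ (n : ℕ) (prev : ℕ → ℕ), ∃ m,
      (max (e n).1 ((Finset.range n).sup (fun k => prev k + 1))) ≤ m ∧
      ∀ v ∈ Submodule.span ℝ ((fun k => x (e k).1 (prev k)) '' Set.Iio n), ∀ t : ℝ,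
        ‖v‖ ≤ (aw (n+1) / aw n) * ‖v + t • x (e n).1 m‖ := by
    intro n prev
    have hfd : FiniteDimensional ℝ
        ↥(Submodule.span ℝ ((fun k => x (e k).1 (prev k)) '' Set.Iio n)) :=
      FiniteDimensional.span_of_finite ℝ ((Set.finite_Iio n).image _)
    have hδpos : 0 < aw (n+1) / aw n - 1 := by
      have := (one_lt_div (hawpos n)).2 (hawlt n)
      linarith
    obtain ⟨m, hm1, hm2⟩ := mazur_step _ hfd (x (e n).1) (clow (e n).1) (hclpos _)
      (eventually_atTop.2 ⟨(e n).1, fun j hj => (hclb (e n).1 j hj).1⟩)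
      (hx (e n).1).2 _ hδpos (max (e n).1 ((Finset.range n).sup (fun k => prev k + 1)))
    refine ⟨m, hm1, fun v hv t => ?_⟩
    have h := hm2 v hv t
    have heq : 1 + (aw (n+1) / aw n - 1) = aw (n+1) / aw n := by ring
    rwa [heq] at h
  choose Φ hΦ1 hΦ2 using step
  set cc : ℕ → ℕ := fun n => Φ n (natRecFun Φ n) with hccdef
  have hcoh : ∀ n k, k < n → natRecFun Φ n k = cc k := fun n k hk => natRecFun_coh Φ n k hk
  have hccrow : ∀ n, (e n).1 ≤ cc n := fun n => le_trans (le_max_left _ _) (hΦ1 n _)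
  have hccmono : StrictMono cc := by
    intro n n' h
    have h1 : natRecFun Φ n' n + 1 ≤ (Finset.range n').sup (fun k => natRecFun Φ n' k + 1) :=
      Finset.le_sup (f := fun k => natRecFun Φ n' k + 1) (Finset.mem_range.2 h)
    have h2 : (Finset.range n').sup (fun k => natRecFun Φ n' k + 1) ≤ cc n' :=
      le_trans (le_max_right _ _) (hΦ1 n' (natRecFun Φ n'))
    rw [hcoh n' n h] at h1
    omega
  set u : ℕ → X := fun k => x (e k).1 (cc k) with hudef
  have hstep : ∀ n, ∀ v ∈ Submodule.span ℝ (u '' Set.Iio n), ∀ t : ℝ,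
      ‖v‖ ≤ (aw (n+1) / aw n) * ‖v + t • u n‖ := by
    intro n
    have himg : (fun k => x (e k).1 (natRecFun Φ n k)) '' Set.Iio n = u '' Set.Iio n :=
      Set.image_congr (fun k hk => by rw [hudef]; simp only; rw [hcoh n k hk])
    have h := hΦ2 n (natRecFun Φ n)
    rw [himg] at h
    exact h
  -- the subarray
  have hrowle : ∀ i j, i ≤ j → i ≤ cc (posFn (i, j)) := by
    intro i j hij
    have h1 := hccrow (posFn (i, j))
    rwa [he_pos (i, j) hij] at h1
  refine ⟨fun i j => x i (cc (posFn (i, j))), ?_, ?_, by linarith, ?_⟩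
  · -- IsSubarrayOf
    refine ⟨fun i j => cc (posFn (i, j)), hrowle, ?_, fun i j _ => rfl⟩
    intro i j i' j' hij hij' hrl
    exact Or.inl (hccmono (posFn_lt_posFn hij hrl))
  · -- IsArray
    intro i
    constructor
    · exact ⟨clow i, Cup i, hclpos i, fun j hj => hclb i _ (hrowle i j hj)⟩
    · intro f
      have h1 : Tendsto (fun j => posFn (i, j)) atTop atTop :=
        tendsto_atTop_mono (fun j => le_trans (le_Tn j) (Nat.le_add_right _ _)) tendsto_id
      have h2 := ((hx i).2 f).comp ((hccmono.tendsto_atTop).comp h1)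
      exact h2
  · -- the projection bound
    intro s hs acoef p
    set b : ℕ → ℝ := fun k => if e k ∈ s then acoef (e k) else 0 with hbdef
    -- the chaining lemma
    have hchain : ∀ m n, m ≤ n →
        ‖∑ k ∈ Finset.range m, b k • u k‖ ≤
          (aw n / aw m) * ‖∑ k ∈ Finset.range n, b k • u k‖ := by
      intro m n hmn
      induction n, hmn using Nat.le_induction with
      | base =>
        rw [div_self (hawpos m).ne', one_mul]
      | succ n hmn ih =>
        have hmem : (∑ k ∈ Finset.range n, b k • u k) ∈ Submodule.span ℝ (u '' Set.Iio n) :=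
          Submodule.sum_mem _ (fun k hk => Submodule.smul_mem _ _
            (Submodule.subset_span ⟨k, Finset.mem_range.mp hk, rfl⟩))
        have h1 := hstep n _ hmem (b n)
        rw [Finset.sum_range_succ]
        have hmul : ∀ A : ℝ, (aw n / aw m) * ((aw (n+1) / aw n) * A) = (aw (n+1) / aw m) * A := by
          intro A
          field_simp [(hawpos n).ne', (hawpos m).ne']
        calc ‖∑ k ∈ Finset.range m, b k • u k‖
            ≤ (aw n / aw m) * ‖∑ k ∈ Finset.range n, b k • u k‖ := ih
          _ ≤ (aw n / aw m) * ((aw (n+1) / aw n) * ‖∑ k ∈ Finset.range n, b k • u k + b n • u n‖) :=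
              mul_le_mul_of_nonneg_left h1 (le_of_lt (div_pos (hawpos n) (hawpos m)))
          _ = (aw (n+1) / aw m) * ‖∑ k ∈ Finset.range n, b k • u k + b n • u n‖ := hmul _
    set M : ℕ := posFn (min p.1 p.2, p.2) + 1 with hMdef
    set N : ℕ := max M (s.sup posFn + 1) with hNdef
    have hMN : M ≤ N := le_max_left _ _
    -- rewriting sums over finsets of pairs as sums over ranges
    have key1 : ∀ T : Finset (ℕ × ℕ), T ⊆ s →
        ∑ q ∈ T, acoef q • x q.1 (cc (posFn (q.1, q.2))) = ∑ k ∈ T.image posFn, b k • u k := by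
      intro T hT
      rw [Finset.sum_image (fun q hq q' hq' h => posFn_inj (hs q (hT hq)) (hs q' (hT hq')) h)]
      apply Finset.sum_congr rfl
      intro q hq
      have he1 : e (posFn q) = q := he_pos q (hs q (hT hq))
      simp only [hbdef, hudef, he1, if_pos (hT hq)]
    have hsub : ∀ (T : Finset (ℕ × ℕ)) (n : ℕ), (T.image posFn ⊆ Finset.range n) →
        (∀ k, k < n → e k ∈ s → e k ∈ T) →
        ∑ k ∈ T.image posFn, b k • u k = ∑ k ∈ Finset.range n, b k • u k := by
      intro T n hTn hback
      apply Finset.sum_subset hTn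
      intro k hk hknot
      have hb0 : b k = 0 := by
        simp only [hbdef]
        rw [if_neg]
        intro hmem
        exact hknot (Finset.mem_image.2 ⟨e k, hback k (Finset.mem_range.mp hk) hmem, (he k).2⟩)
      rw [hb0, zero_smul]
    have e2 : ∑ q ∈ s, acoef q • x q.1 (cc (posFn (q.1, q.2))) = ∑ k ∈ Finset.range N, b k • u k := by
      rw [key1 s (Finset.Subset.refl s)]
      apply hsub
      · intro k hk
        obtain ⟨q, hq, rfl⟩ := Finset.mem_image.mp hk
        have := Finset.le_sup (f := posFn) hq
        rw [Finset.mem_range, hNdef]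
        omega
      · exact fun k _ hk => hk
    have e1 : ∑ q ∈ s.filter (fun q => q.2 < p.2 ∨ (q.2 = p.2 ∧ q.1 ≤ p.1)),
        acoef q • x q.1 (cc (posFn (q.1, q.2))) = ∑ k ∈ Finset.range M, b k • u k := by
      rw [key1 _ (Finset.filter_subset _ _)]
      apply hsub
      · intro k hk
        obtain ⟨q, hq, rfl⟩ := Finset.mem_image.mp hk
        rw [Finset.mem_filter] at hq
        have := (cond_iff (hs q hq.1) p).1 hq.2
        rw [Finset.mem_range, hMdef]
        omega
      · intro k hk hmem
        refine Finset.mem_filter.2 ⟨hmem, (cond_iff (he k).1 p).2 ?_⟩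
        rw [(he k).2]
        omega
    have e3 := hchain M N hMN
    have e4 : (aw N / aw M) * ‖∑ k ∈ Finset.range N, b k • u k‖ ≤
        (1 + ε) * ‖∑ k ∈ Finset.range N, b k • u k‖ := by
      apply mul_le_mul_of_nonneg_right _ (norm_nonneg _)
      rw [div_le_iff₀ (hawpos M)]
      nlinarith [hawle N, haw1 M, hε]
    have final : ‖∑ q ∈ s.filter (fun q => q.2 < p.2 ∨ (q.2 = p.2 ∧ q.1 ≤ p.1)),
        acoef q • x q.1 (cc (posFn (q.1, q.2)))‖ ≤
        (1 + ε) * ‖∑ q ∈ s, acoef q • x q.1 (cc (posFn (q.1, q.2)))‖ := by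
      rw [e1, e2]
      exact le_trans e3 e4
    exact final

end
end

section
/- Let (x_{i,j})_{(i,j)∈I} be a regular array in a Banach space X, let a⃗ be a p-pattern, let 𝓕 ⊆ 2Ba(X*), let δ > 0, and let i₀, j₀, k₀ ∈ ℕ with j₀ ≥ i₀. Then there exists a subarray (y_{i,j})_{(i,j)∈I} of (x_{i,j})_{(i,j)∈I} such that for every F ⊆ {k₀, k₀+1, k₀+2, …} with (i₀,j₀) <_{rℓ} (k₀, min F) and |F| = p the following holds: if there exists f ∈ 𝓕 having pattern a⃗ on (k₀,F) with respect to (y_{i,j})_{(i,j)∈I}, then there exists g ∈ 𝓕 having pattern a⃗ on (k₀,F) with respect to (y_{i,j})_{(i,j)∈I} and satisfying |g(y_{i₀,j₀})| < δ. Moreover, (y_{i,j}) can be chosen so that y_{i,j} = x_{i,j} for all (i,j) <_{rℓ} (i₀,j₀). -/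
open Filter

noncomputable section

/-- Infinite Ramsey theorem for `p`-subsets of an infinite subset of `ℕ`. -/
theorem myInfRamsey (p : ℕ) : ∀ (c : Finset ℕ → Prop) (S : Set ℕ), S.Infinite →
    ∃ M ⊆ S, M.Infinite ∧
      ((∀ G : Finset ℕ, ↑G ⊆ M → G.card = p → c G) ∨
       (∀ G : Finset ℕ, ↑G ⊆ M → G.card = p → ¬ c G)) := by
  classical
  induction p with
  | zero =>
    intro c S hS
    by_cases h : c ∅
    · refine ⟨S, subset_rfl, hS, Or.inl fun G _ hG => ?_⟩
      rwa [Finset.card_eq_zero.1 hG]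
    · refine ⟨S, subset_rfl, hS, Or.inr fun G _ hG => ?_⟩
      rwa [Finset.card_eq_zero.1 hG]
  | succ p ih =>
    intro c S hS
    have step : ∀ T : Set ℕ, T.Infinite →
        ∃ a, a ∈ T ∧ ∃ M, M ⊆ T ∧ M.Infinite ∧ (∀ x ∈ M, a < x) ∧
          ((∀ G : Finset ℕ, ↑G ⊆ M → G.card = p → c (insert a G)) ∨
           (∀ G : Finset ℕ, ↑G ⊆ M → G.card = p → ¬ c (insert a G))) := by
      intro T hT
      obtain ⟨a, ha⟩ := hT.nonempty
      have hT' : (T \ Set.Iic a).Infinite := hT.diff (Set.finite_Iic a)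
      obtain ⟨M, hMT, hMinf, hside⟩ := ih (fun G => c (insert a G)) _ hT'
      exact ⟨a, ha, M, fun z hz => (hMT hz).1, hMinf,
        fun z hz => by simpa using (hMT hz).2, hside⟩
    choose A hA Mf hMf1 hMf2 hMf3 hMf4 using step
    -- the nested sequence of sets
    let seq : ℕ → {T : Set ℕ // T.Infinite} := fun t =>
      Nat.rec ⟨S, hS⟩ (fun _ q => ⟨Mf q.1 q.2, hMf2 q.1 q.2⟩) t
    let a : ℕ → ℕ := fun t => A (seq t).1 (seq t).2
    have haMem : ∀ t, a t ∈ (seq t).1 := fun t => hA _ _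
    have hsub : ∀ t, (seq (t + 1)).1 ⊆ (seq t).1 := fun t => hMf1 _ _
    have hlt : ∀ t, ∀ x ∈ (seq (t + 1)).1, a t < x := fun t => hMf3 _ _
    have hnested : ∀ s t, s ≤ t → (seq t).1 ⊆ (seq s).1 := by
      intro s t hst
      induction t with
      | zero => cases Nat.le_zero.1 hst; exact subset_rfl
      | succ t iht =>
        rcases Nat.lt_or_ge s (t + 1) with h | h
        · exact (hsub t).trans (iht (Nat.lt_succ_iff.1 h))
        · cases le_antisymm hst h; exact subset_rfl
    have hamono : StrictMono a := strictMono_nat_of_lt_succ fun t =>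
      hlt t _ (haMem (t + 1))
    have haS : ∀ t, a t ∈ S := fun t => hnested 0 t (Nat.zero_le t) (haMem t)
    have haIn : ∀ s t, s ≤ t → a t ∈ (seq s).1 := fun s t hst => hnested s t hst (haMem t)
    -- a monochromatic set from an infinite set of indices carrying the same side
    have key : ∀ d : Finset ℕ → Prop,
        {t | ∀ G : Finset ℕ, ↑G ⊆ (seq (t + 1)).1 → G.card = p → d (insert (a t) G)}.Infinite →
        ∃ M ⊆ S, M.Infinite ∧ ∀ G : Finset ℕ, ↑G ⊆ M → G.card = p + 1 → d G := by
      intro d hK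
      set K := {t | ∀ G : Finset ℕ, ↑G ⊆ (seq (t + 1)).1 → G.card = p → d (insert (a t) G)}
      refine ⟨a '' K, ?_, hK.image (hamono.injective.injOn), ?_⟩
      · rintro _ ⟨t, _, rfl⟩; exact haS t
      · intro G hG hGcard
        have hGne : G.Nonempty := Finset.card_pos.1 (by omega)
        obtain ⟨t, htK, htm⟩ := hG (G.min'_mem hGne)
        have hmin := G.min'_mem hGne
        have hG' : ↑(G.erase (G.min' hGne)) ⊆ (seq (t + 1)).1 := by
          intro z hz
          simp only [Finset.coe_erase, Set.mem_diff] at hz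
          obtain ⟨hzG, hzne⟩ := hz
          obtain ⟨u, huK, rfl⟩ := hG hzG
          have h1 : G.min' hGne ≤ a u := G.min'_le _ hzG
          have h2 : a t < a u := by
            rcases lt_or_eq_of_le h1 with h | h
            · rw [htm]; exact h
            · exact absurd h.symm (by simpa using hzne)
          have hut : t < u := hamono.lt_iff_lt.1 h2
          exact haIn (t + 1) u hut
        have hcard : (G.erase (G.min' hGne)).card = p := by
          rw [Finset.card_erase_of_mem hmin, hGcard]; omega
        have := htK _ hG' hcard
        rw [htm] at this
        rwa [Finset.insert_erase hmin] at this
    -- one of the two sides occurs infinitely often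
    by_cases hfin : {t | ∀ G : Finset ℕ, ↑G ⊆ (seq (t + 1)).1 → G.card = p →
        c (insert (a t) G)}.Infinite
    · obtain ⟨M, hMS, hMinf, hM⟩ := key c hfin
      exact ⟨M, hMS, hMinf, Or.inl hM⟩
    · have h2 : {t | ∀ G : Finset ℕ, ↑G ⊆ (seq (t + 1)).1 → G.card = p →
          ¬ c (insert (a t) G)}.Infinite := by
        rw [Set.not_infinite] at hfin
        have huniv : {t : ℕ | True}.Infinite := by simpa using Set.infinite_univ (α := ℕ)
        have hsubU : {t : ℕ | True} ⊆
            {t | ∀ G : Finset ℕ, ↑G ⊆ (seq (t + 1)).1 → G.card = p → c (insert (a t) G)} ∪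
            {t | ∀ G : Finset ℕ, ↑G ⊆ (seq (t + 1)).1 → G.card = p → ¬ c (insert (a t) G)} := by
          intro t _
          rcases hMf4 (seq t).1 (seq t).2 with h | h
          · left; exact h
          · right; exact h
        by_contra hne
        rw [Set.not_infinite] at hne
        exact huniv (Set.Finite.subset (hfin.union hne) hsubU)
      obtain ⟨M, hMS, hMinf, hM⟩ := key (fun G => ¬ c G) h2
      exact ⟨M, hMS, hMinf, Or.inr hM⟩

/-- The analytic core: given a weakly null sequence `z` and a bounded-set-valued assignment `W`
on finite subsets of `ℕ`, there are `n ≥ j₀` and an infinite `M ⊆ (n, ∞)` such that every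
`p`-subset `G` of `M` with `W G` nonempty admits an element of `W G` small at `z n`. -/
theorem myKey {X : Type*} [NormedAddCommGroup X] [NormedSpace ℝ X]
    (z : ℕ → X) (hz : ∀ f : X →L[ℝ] ℝ, Tendsto (fun j => f (z j)) atTop (nhds 0))
    (W : Finset ℕ → Set (X →L[ℝ] ℝ)) (hW : ∀ G f, f ∈ W G → ‖f‖ ≤ 2)
    (δ : ℝ) (hδ : 0 < δ) (p j₀ : ℕ) :
    ∃ n, j₀ ≤ n ∧ ∃ M : Set ℕ, M.Infinite ∧ (∀ m ∈ M, n < m) ∧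
      ∀ G : Finset ℕ, ↑G ⊆ M → G.card = p → (W G).Nonempty →
        ∃ g ∈ W G, |g (z n)| < δ := by
  classical
  by_contra hcon
  push_neg at hcon
  have step : ∀ n, j₀ ≤ n → ∀ T : Set ℕ, T.Infinite →
      ∃ M, M ⊆ T ∧ M.Infinite ∧ (∀ m ∈ M, n < m) ∧
        ∀ G : Finset ℕ, ↑G ⊆ M → G.card = p →
          (W G).Nonempty ∧ ∀ g ∈ W G, δ ≤ |g (z n)| := by
    intro n hn T hT
    have h1 : (T \ Set.Iic n).Infinite := hT.diff (Set.finite_Iic n)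
    obtain ⟨M, hMS, hMinf, hside⟩ :=
      myInfRamsey p (fun G => (W G).Nonempty ∧ ∀ g ∈ W G, δ ≤ |g (z n)|) _ h1
    have hMgt : ∀ m ∈ M, n < m := fun m hm => by simpa using (hMS hm).2
    refine ⟨M, fun m hm => (hMS hm).1, hMinf, hMgt, ?_⟩
    rcases hside with h | h
    · exact h
    · obtain ⟨G, hG1, hG2, hG3, hG4⟩ := hcon n hn M hMinf hMgt
      exact absurd ⟨hG3, hG4⟩ (h G hG1 hG2)
  choose Mf hMf1 hMf2 hMf3 hMf4 using step
  let seq : ℕ → {T : Set ℕ // T.Infinite} := fun t =>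
    Nat.rec ⟨Set.univ, Set.infinite_univ⟩
      (fun t q => ⟨Mf (j₀ + t) (by omega) q.1 q.2, hMf2 _ _ _ _⟩) t
  have hsub : ∀ t, (seq (t + 1)).1 ⊆ (seq t).1 := fun t => hMf1 _ _ _ _
  have hbad : ∀ t, ∀ G : Finset ℕ, ↑G ⊆ (seq (t + 1)).1 → G.card = p →
      (W G).Nonempty ∧ ∀ g ∈ W G, δ ≤ |g (z (j₀ + t))| := fun t => hMf4 _ _ _ _
  have hnested : ∀ s t, s ≤ t → (seq t).1 ⊆ (seq s).1 := by
    intro s t hst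
    induction t with
    | zero => cases Nat.le_zero.1 hst; exact subset_rfl
    | succ t iht =>
      rcases Nat.lt_or_ge s (t + 1) with h | h
      · exact (hsub t).trans (iht (Nat.lt_succ_iff.1 h))
      · cases le_antisymm hst h; exact subset_rfl
  have hGk : ∀ k : ℕ, ∃ G : Finset ℕ, ↑G ⊆ (seq (k + 1)).1 ∧ G.card = p := by
    intro k
    obtain ⟨G, hG1, hG2⟩ := (seq (k + 1)).2.exists_subset_card_eq p
    exact ⟨G, hG1, hG2⟩
  choose G hG1 hG2 using hGk
  have hfk : ∀ k : ℕ, ∃ f ∈ W (G k), ∀ t ≤ k, δ ≤ |f (z (j₀ + t))| := by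
    intro k
    obtain ⟨f, hf⟩ := (hbad k (G k) (hG1 k) (hG2 k)).1
    refine ⟨f, hf, fun t ht => ?_⟩
    have hsubk : ↑(G k) ⊆ (seq (t + 1)).1 :=
      (hG1 k).trans (hnested (t + 1) (k + 1) (by omega))
    exact (hbad t (G k) hsubk (hG2 k)).2 f hf
  choose f hfW hfbig using hfk
  set s : Set (WeakDual ℝ X) :=
    WeakDual.toStrongDual ⁻¹' Metric.closedBall 0 2 with hs_def
  have hs : IsCompact s := WeakDual.isCompact_closedBall (0 : StrongDual ℝ X) 2
  let u : ℕ → WeakDual ℝ X := fun k => StrongDual.toWeakDual (f k)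
  have humem : ∀ k, u k ∈ s := by
    intro k
    simp only [hs_def, Set.mem_preimage, Metric.mem_closedBall, dist_zero_right]
    exact hW _ _ (hfW k)
  have hmaple : Filter.map u atTop ≤ Filter.principal s :=
    le_principal_iff.2 (Filter.mem_map.2 (Filter.Eventually.of_forall humem))
  obtain ⟨φ, hφs, hφ⟩ := hs.exists_mapClusterPt (u := u) (f := atTop) hmaple
  let ψ : X →L[ℝ] ℝ := WeakDual.toStrongDual φ
  have hψ : ∀ t : ℕ, δ ≤ |ψ (z (j₀ + t))| := by
    intro t
    have hev : Continuous fun g : WeakDual ℝ X => g (z (j₀ + t)) :=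
      WeakDual.eval_continuous _
    have h1 : MapClusterPt (φ (z (j₀ + t))) atTop (fun k => (u k) (z (j₀ + t))) :=
      hφ.continuousAt_comp hev.continuousAt
    have h2 : ∀ᶠ k in atTop, (fun k => (u k) (z (j₀ + t))) k ∈ {r : ℝ | δ ≤ |r|} := by
      filter_upwards [eventually_ge_atTop t] with k hk
      exact hfbig k t hk
    have hclosed : IsClosed {r : ℝ | δ ≤ |r|} := isClosed_le continuous_const continuous_abs
    have h3 : ClusterPt (φ (z (j₀ + t))) (Filter.principal {r : ℝ | δ ≤ |r|}) :=
      h1.clusterPt.mono (le_principal_iff.2 (Filter.mem_map.2 h2))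
    have h4 : φ (z (j₀ + t)) ∈ {r : ℝ | δ ≤ |r|} := by
      rw [← hclosed.closure_eq]
      exact mem_closure_iff_clusterPt.2 h3
    exact h4
  obtain ⟨N, hN⟩ := Metric.tendsto_atTop.1 (hz ψ) δ hδ
  have hlast := hN (j₀ + N) (by omega)
  rw [Real.dist_eq, sub_zero] at hlast
  exact absurd (hψ N) (not_le.2 hlast)

/-- Sorting commutes with the image under a strictly monotone map. -/
theorem mySortImage {τ : ℕ → ℕ} (hτ : StrictMono τ) (F : Finset ℕ) :
    (F.image τ).sort (· ≤ ·) = (F.sort (· ≤ ·)).map τ := by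
  classical
  set l : List ℕ := (F.sort (· ≤ ·)).map τ with hl
  have hnd : l.Nodup := (Finset.sort_nodup F _).map hτ.injective
  have hsorted : l.Pairwise (· ≤ ·) :=
    List.Pairwise.map τ (fun a b hab => hτ.monotone hab) (Finset.pairwise_sort F _)
  have htf : l.toFinset = F.image τ := by
    ext z
    simp [hl, List.mem_map, Finset.mem_sort, Finset.mem_image]
  have := (List.toFinset_sort (· ≤ ·) hnd).2 hsorted
  rw [htf] at this
  exact this

/-- Lemma 2.4. -/
theorem statement_6 {X : Type*} [NormedAddCommGroup X] [NormedSpace ℝ X] [CompleteSpace X]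
    (x : ℕ → ℕ → X) (hx : IsRegularArray x)
    (a : List ℝ)
    (𝓕 : Set (X →L[ℝ] ℝ)) (h𝓕 : ∀ f ∈ 𝓕, ‖f‖ ≤ 2)
    (δ : ℝ) (hδ : 0 < δ) (i₀ j₀ k₀ : ℕ) (hij : i₀ ≤ j₀) :
    ∃ y : ℕ → ℕ → X, IsSubarrayOf y x ∧
      (∀ i j, i ≤ j → RLlt (i, j) (i₀, j₀) → y i j = x i j) ∧
      ∀ F : Finset ℕ, (∀ m ∈ F, k₀ ≤ m) → (∀ m ∈ F, RLlt (i₀, j₀) (k₀, m)) →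
        F.card = a.length →
        (∃ f ∈ 𝓕, HasPatternOn y f k₀ F a) →
        ∃ g ∈ 𝓕, HasPatternOn y g k₀ F a ∧ |g (y i₀ j₀)| < δ := by
  classical
  obtain ⟨C, hxarr, -, -⟩ := hx
  have hz : ∀ f : X →L[ℝ] ℝ, Tendsto (fun j => f (x i₀ j)) atTop (nhds 0) := (hxarr i₀).2
  set W : Finset ℕ → Set (X →L[ℝ] ℝ) :=
    fun G => {f | f ∈ 𝓕 ∧ (G.sort (· ≤ ·)).map (fun j => f (x k₀ j)) = a} with hW_def
  have hWb : ∀ G f, f ∈ W G → ‖f‖ ≤ 2 := fun G f hf => h𝓕 f hf.1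
  obtain ⟨n, hj₀n, M, hMinf, hMgt, hgood⟩ :=
    myKey (fun j => x i₀ j) hz W hWb δ hδ a.length j₀
  -- a strictly monotone enumeration of M
  haveI : Infinite ↥M := hMinf.to_subtype
  set m : ℕ → ℕ := fun t => ((Nat.Subtype.orderIsoOfNat M t : ↥M) : ℕ) with hm_def
  have hmM : ∀ t, m t ∈ M := fun t => (Nat.Subtype.orderIsoOfNat M t).2
  have hmmono : StrictMono m := by
    intro u v huv
    exact (Nat.Subtype.orderIsoOfNat M).strictMono huv
  have hmgtn : ∀ t, n < m t := fun t => hMgt _ (hmM t)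
  have hmlb : ∀ t, n + 1 + t ≤ m t := by
    intro t
    induction t with
    | zero => simpa using hmgtn 0
    | succ t iht =>
      have h2 : m t < m (t + 1) := hmmono (by omega)
      omega
  -- the column reindexing
  set τ : ℕ → ℕ := fun j => if j < j₀ then j else m (j - j₀) with hτ_def
  have hτval : ∀ j, j₀ ≤ j → τ j = m (j - j₀) := by
    intro j hj; simp only [hτ_def]; rw [if_neg (by omega)]
  have hτmem : ∀ j, j₀ ≤ j → τ j ∈ M := by
    intro j hj; rw [hτval j hj]; exact hmM _
  have hτgtn : ∀ j, j₀ ≤ j → n < τ j := by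
    intro j hj; rw [hτval j hj]; exact hmgtn _
  have hτge : ∀ j, j ≤ τ j := by
    intro j
    by_cases hj : j < j₀
    · simp only [hτ_def]; rw [if_pos hj]
    · rw [hτval j (by omega)]
      have := hmlb (j - j₀); omega
  have hτmono : StrictMono τ := by
    intro u v huv
    by_cases hu : u < j₀
    · by_cases hv : v < j₀
      · simp only [hτ_def]; rw [if_pos hu, if_pos hv]; exact huv
      · simp only [hτ_def]; rw [if_pos hu, if_neg hv]
        have := hmlb (v - j₀); omega
    · have hv : ¬ v < j₀ := by omega
      rw [hτval u (by omega), hτval v (by omega)]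
      exact hmmono (by omega)
  -- the index map of the subarray
  set hfun : ℕ → ℕ → ℕ := fun i j =>
    if RLlt (i, j) (i₀, j₀) then j else if i = i₀ ∧ j = j₀ then n else τ j with hfun_def
  have hval : ∀ i j, hfun i j =
      if RLlt (i, j) (i₀, j₀) then j else if i = i₀ ∧ j = j₀ then n else τ j :=
    fun i j => rfl
  have hval_before : ∀ i j, RLlt (i, j) (i₀, j₀) → hfun i j = j := by
    intro i j hb; rw [hval, if_pos hb]
  have hnotself : ¬ RLlt (i₀, j₀) (i₀, j₀) := by
    intro hcon
    have h : j₀ < j₀ ∨ (j₀ = j₀ ∧ i₀ < i₀) := hcon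
    omega
  have hval_eq : hfun i₀ j₀ = n := by
    rw [hval, if_neg hnotself, if_pos ⟨rfl, rfl⟩]
  have hval_after : ∀ i j, ¬ RLlt (i, j) (i₀, j₀) → ¬ (i = i₀ ∧ j = j₀) →
      hfun i j = τ j := by
    intro i j hb he; rw [hval, if_neg hb, if_neg he]
  refine ⟨fun i j => x i (hfun i j), ⟨hfun, ?_, ?_, fun i j _ => rfl⟩, ?_, ?_⟩
  · -- i ≤ hfun i j
    intro i j hij'
    by_cases hb : RLlt (i, j) (i₀, j₀)
    · rw [hval_before i j hb]; exact hij'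
    · by_cases he : i = i₀ ∧ j = j₀
      · rw [hval, if_neg hb, if_pos he]
        obtain ⟨he1, he2⟩ := he
        omega
      · rw [hval_after i j hb he]; exact hij'.trans (hτge j)
  · -- order preservation
    intro i j i' j' hij1 hij2 hlt
    have hltA : j < j' ∨ (j = j' ∧ i < i') := hlt
    by_cases hb : RLlt (i, j) (i₀, j₀)
    · have hbA : j < j₀ ∨ (j = j₀ ∧ i < i₀) := hb
      rw [hval_before i j hb]
      by_cases hb' : RLlt (i', j') (i₀, j₀)
      · rw [hval_before i' j' hb']; exact hlt
      · have hbA' : ¬ (j' < j₀ ∨ (j' = j₀ ∧ i' < i₀)) := hb'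
        by_cases he' : i' = i₀ ∧ j' = j₀
        · rw [hval, if_neg hb', if_pos he']
          obtain ⟨he1', he2'⟩ := he'
          show j < n ∨ (j = n ∧ i < i')
          omega
        · rw [hval_after i' j' hb' he']
          have h1 : j₀ ≤ j' := by omega
          have h2 := hτgtn j' h1
          show j < τ j' ∨ (j = τ j' ∧ i < i')
          omega
    · have hbA : ¬ (j < j₀ ∨ (j = j₀ ∧ i < i₀)) := hb
      by_cases he : i = i₀ ∧ j = j₀
      · obtain ⟨he1, he2⟩ := he
        rw [hval, if_neg hb, if_pos ⟨he1, he2⟩]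
        by_cases hb' : RLlt (i', j') (i₀, j₀)
        · exfalso
          have hbA' : j' < j₀ ∨ (j' = j₀ ∧ i' < i₀) := hb'
          omega
        · have hbA' : ¬ (j' < j₀ ∨ (j' = j₀ ∧ i' < i₀)) := hb'
          by_cases he' : i' = i₀ ∧ j' = j₀
          · exfalso
            obtain ⟨he1', he2'⟩ := he'
            omega
          · rw [hval_after i' j' hb' he']
            have h1 : j₀ ≤ j' := by omega
            have h2 := hτgtn j' h1
            show n < τ j' ∨ (n = τ j' ∧ i < i')
            omega
      · have heA : ¬ (i = i₀ ∧ j = j₀) := he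
        rw [hval_after i j hb he]
        by_cases hb' : RLlt (i', j') (i₀, j₀)
        · exfalso
          have hbA' : j' < j₀ ∨ (j' = j₀ ∧ i' < i₀) := hb'
          omega
        · by_cases he' : i' = i₀ ∧ j' = j₀
          · exfalso
            obtain ⟨he1', he2'⟩ := he'
            omega
          · rw [hval_after i' j' hb' he']
            rcases hltA with h | ⟨h1, h2⟩
            · exact Or.inl (hτmono h)
            · exact Or.inr ⟨by rw [h1], h2⟩
  · -- y agrees with x before (i₀, j₀)
    intro i j _ hb
    show x i (hfun i j) = x i j
    rw [hval_before i j hb]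
  · -- the pattern property
    intro F hF1 hF2 hFcard ⟨f, hf𝓕, hfpat⟩
    have hFj₀ : ∀ q ∈ F, j₀ ≤ q := by
      intro q hq
      have h : j₀ < q ∨ (j₀ = q ∧ i₀ < k₀) := hF2 q hq
      omega
    have hrow : ∀ q ∈ F, hfun k₀ q = τ q := by
      intro q hq
      have h2 : j₀ < q ∨ (j₀ = q ∧ i₀ < k₀) := hF2 q hq
      refine hval_after k₀ q ?_ ?_
      · intro hcon
        have h3 : q < j₀ ∨ (q = j₀ ∧ k₀ < i₀) := hcon
        omega
      · intro hcon
        obtain ⟨h4, h5⟩ := hcon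
        omega
    set G : Finset ℕ := F.image τ with hG_def
    have hGsub : ↑G ⊆ M := by
      intro z hz'
      simp only [hG_def, Finset.coe_image, Set.mem_image, Finset.mem_coe] at hz'
      obtain ⟨q, hq, rfl⟩ := hz'
      exact hτmem q (hFj₀ q hq)
    have hGcard : G.card = a.length := by
      rw [hG_def, Finset.card_image_of_injective F hτmono.injective, hFcard]
    have htrans : ∀ g : X →L[ℝ] ℝ,
        (F.sort (· ≤ ·)).map (fun j => g (x k₀ (hfun k₀ j))) =
        (G.sort (· ≤ ·)).map (fun j => g (x k₀ j)) := by
      intro g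
      rw [hG_def, mySortImage hτmono F, List.map_map]
      refine List.map_congr_left ?_
      intro q hq
      rw [Finset.mem_sort] at hq
      simp only [Function.comp]
      rw [hrow q hq]
    have hfpat' : f ∈ W G := by
      refine ⟨hf𝓕, ?_⟩
      rw [← htrans f]
      exact hfpat
    obtain ⟨g, hgW, hgsmall⟩ := hgood G hGsub hGcard ⟨f, hfpat'⟩
    refine ⟨g, hgW.1, ?_, ?_⟩
    · show (F.sort (· ≤ ·)).map (fun j => g (x k₀ (hfun k₀ j))) = a
      rw [htrans g]
      exact hgW.2
    · show |g (x i₀ (hfun i₀ j₀))| < δ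
      rw [hval_eq]
      exact hgsmall

end
end

section
/- Let (x_{i,j})_{(i,j)∈I} be a regular array in a Banach space X, let A⃗ be a finite set of patterns, let 𝓕 ⊆ 2Ba(X*), let δ > 0 and let i₀, k₀ ∈ ℕ. Then there exists a subarray (y_{i,j})_{(i,j)∈I} of (x_{i,j})_{(i,j)∈I} such that for every a⃗ ∈ A⃗, every F ⊆ {k₀, k₀+1, k₀+2, …} with |F| = |a⃗|, and every j₀ ∈ ℕ with j₀ ≥ i₀ and (i₀,j₀) <_{rℓ} (k₀, min F), the following holds: if there exists f ∈ 𝓕 having pattern a⃗ on (k₀,F) with respect to (y_{i,j})_{(i,j)∈I}, then there exists g ∈ 𝓕 having pattern a⃗ on (k₀,F) with respect to (y_{i,j})_{(i,j)∈I} and satisfying |g(y_{i₀,j₀})| < δ. Moreover, (y_{i,j}) can be chosen so that y_{i,j} = x_{i,j} for all (i,j) <_{rℓ} (i₀,i₀). -/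
open Filter

noncomputable section

lemma ramsey_step {p : ℕ}
    (ih : ∀ (c : Finset ℕ → Bool) (S : Set ℕ), S.Infinite →
      ∃ S', S' ⊆ S ∧ S'.Infinite ∧ ∃ b, ∀ T : Finset ℕ, ↑T ⊆ S' → T.card = p → c T = b)
    (c : Finset ℕ → Bool) (S : Set ℕ) (hS : S.Infinite) :
    ∃ n ∈ S, ∃ S', S' ⊆ S ∧ S'.Infinite ∧ (∀ m ∈ S', n < m) ∧
      ∃ b, ∀ T : Finset ℕ, ↑T ⊆ S' → T.card = p → c (insert n T) = b := by
  obtain ⟨n, hn⟩ := hS.nonempty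
  have h2 : {m ∈ S | n < m}.Infinite := by
    have hsub : S \ Set.Iic n ⊆ {m ∈ S | n < m} := fun m hm => ⟨hm.1, not_le.mp hm.2⟩
    exact (hS.diff (Set.finite_Iic n)).mono hsub
  obtain ⟨S', hsub, hinf, b, hb⟩ := ih (fun T => c (insert n T)) _ h2
  exact ⟨n, hn, S', fun m hm => (hsub hm).1, hinf, fun m hm => (hsub hm).2, b, hb⟩

theorem ramsey (p : ℕ) (c : Finset ℕ → Bool) (S : Set ℕ) (hS : S.Infinite) :
    ∃ S', S' ⊆ S ∧ S'.Infinite ∧ ∃ b, ∀ T : Finset ℕ, ↑T ⊆ S' → T.card = p → c T = b := by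
  induction p generalizing c S with
  | zero =>
    refine ⟨S, subset_rfl, hS, c ∅, fun T _ hT => ?_⟩
    rw [Finset.card_eq_zero] at hT; subst hT; rfl
  | succ p ih =>
    classical
    let St := {s : Set ℕ // s.Infinite ∧ s ⊆ S}
    have next : ∀ s : St, ∃ n ∈ s.1, ∃ S', S' ⊆ s.1 ∧ S'.Infinite ∧ (∀ m ∈ S', n < m) ∧
        ∃ b, ∀ T : Finset ℕ, ↑T ⊆ S' → T.card = p → c (insert n T) = b :=
      fun s => ramsey_step ih c s.1 s.2.1
    choose nn hmem S' hsub hinf hgt b hb using next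
    -- iterate
    let f : ℕ → St := fun k => Nat.rec ⟨S, hS, subset_rfl⟩
      (fun _ st => ⟨S' st, hinf st, fun m hm => st.2.2 (hsub st hm)⟩) k
    have hf_succ : ∀ k, (f (k+1)).1 = S' (f k) := fun k => rfl
    have hf_sub : ∀ k, (f (k+1)).1 ⊆ (f k).1 := fun k m hm => hsub (f k) hm
    have hf_chain : ∀ k j, k ≤ j → (f j).1 ⊆ (f k).1 := by
      intro k j hkj
      induction j with
      | zero => cases Nat.le_zero.mp hkj; exact subset_rfl
      | succ j ihj =>
        rcases Nat.lt_or_ge k (j+1) with h | h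
        · exact (hf_sub j).trans (ihj (Nat.lt_succ_iff.mp h))
        · cases Nat.le_antisymm hkj h; exact subset_rfl
    have hmemf : ∀ k, nn (f k) ∈ (f k).1 := fun k => hmem (f k)
    have hmono : ∀ k j, k < j → nn (f k) < nn (f j) := by
      intro k j hkj
      have : nn (f j) ∈ (f (k+1)).1 := hf_chain (k+1) j hkj (hmemf j)
      exact hgt (f k) _ this
    -- pigeonhole on b
    have : ∃ v : Bool, {k : ℕ | b (f k) = v}.Infinite := by
      by_contra hcon
      push_neg at hcon
      have h1 : ¬ {k : ℕ | b (f k) = true}.Infinite := Set.not_infinite.mpr (hcon true)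
      have h2 : ¬ {k : ℕ | b (f k) = false}.Infinite := Set.not_infinite.mpr (hcon false)
      rw [Set.not_infinite] at h1 h2
      have : (Set.univ : Set ℕ).Finite := by
        refine (h1.union h2).subset ?_
        intro k _
        rcases Bool.eq_false_or_eq_true (b (f k)) with h | h
        · exact Or.inl (by simpa using h)
        · exact Or.inr (by simpa using h)
      exact Set.infinite_univ this
    obtain ⟨v, hK⟩ := this
    set K := {k : ℕ | b (f k) = v} with hKdef
    refine ⟨(fun k => nn (f k)) '' K, ?_, ?_, v, ?_⟩
    · rintro m ⟨k, _, rfl⟩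
      exact (f k).2.2 (hmemf k)
    · exact hK.image (Set.injOn_of_injective (fun k j hkj => by
        rcases lt_trichotomy k j with h | h | h
        · exact absurd hkj (ne_of_lt (hmono k j h))
        · exact h
        · exact absurd hkj.symm (ne_of_lt (hmono j k h))))
    · intro T hT hcard
      have hTne : T.Nonempty := Finset.card_pos.mp (by omega)
      obtain ⟨k, hkK, hkmin⟩ := hT (T.min'_mem hTne)
      have herase : ↑(T.erase (T.min' hTne)) ⊆ (f (k+1)).1 := by
        intro m hm
        rcases Finset.mem_erase.mp hm with ⟨hne, hmT⟩
        obtain ⟨j, hjK, hje⟩ := hT hmT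
        have hmin : T.min' hTne < m := lt_of_le_of_ne (T.min'_le m hmT) (Ne.symm hne)
        have : k < j := by
          by_contra hc
          push_neg at hc
          rcases lt_or_eq_of_le hc with h | h
          · exact absurd (hje ▸ hkmin ▸ hmono j k h) (not_lt.mpr (le_of_lt hmin))
          · rw [h] at hje; rw [hje] at hkmin; omega
        rw [← hje]
        exact hf_chain (k+1) j this (hmemf j)
      have hcard' : (T.erase (T.min' hTne)).card = p := by
        rw [Finset.card_erase_of_mem (T.min'_mem hTne), hcard]; omega
      have := hb (f k) _ herase hcard'
      simp only at hkmin
      rw [hkmin, Finset.insert_erase (T.min'_mem hTne)] at this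
      rw [this]
      exact hkK


theorem ramseyList (l : List (ℕ × (Finset ℕ → Bool))) (S : Set ℕ) (hS : S.Infinite)
    (hram : ∀ (p : ℕ) (c : Finset ℕ → Bool) (S : Set ℕ), S.Infinite →
      ∃ S', S' ⊆ S ∧ S'.Infinite ∧ ∃ b, ∀ T : Finset ℕ, ↑T ⊆ S' → T.card = p → c T = b) :
    ∃ S', S' ⊆ S ∧ S'.Infinite ∧
      ∀ pc ∈ l, ∃ b, ∀ T : Finset ℕ, ↑T ⊆ S' → T.card = pc.1 → pc.2 T = b := by
  induction l generalizing S with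
  | nil => exact ⟨S, subset_rfl, hS, fun pc h => absurd h List.not_mem_nil⟩
  | cons pc l ihl =>
    obtain ⟨S1, hS1sub, hS1inf, b, hb⟩ := hram pc.1 pc.2 S hS
    obtain ⟨S', hS'sub, hS'inf, h'⟩ := ihl S1 hS1inf
    refine ⟨S', hS'sub.trans hS1sub, hS'inf, fun qc hqc => ?_⟩
    rcases List.mem_cons.mp hqc with h | h
    · subst h; exact ⟨b, fun T hT hc => hb T (hT.trans hS'sub) hc⟩
    · exact h' qc h

lemma weak_star_cluster {X : Type*} [NormedAddCommGroup X] [NormedSpace ℝ X]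
    (g : ℕ → X →L[ℝ] ℝ) (hg : ∀ n, ‖g n‖ ≤ 2) :
    ∃ φ : X →L[ℝ] ℝ,
      ∀ x : X, Tendsto (fun n => g n x) (Ultrafilter.of (atTop : Filter ℕ) : Filter ℕ)
        (nhds (φ x)) := by
  classical
  set U : Ultrafilter ℕ := Ultrafilter.of atTop
  have hlim : ∀ x : X, ∃ a : ℝ, Tendsto (fun n => g n x) (U : Filter ℕ) (nhds a) := by
    intro x
    have hK : IsCompact (Set.Icc (-(2*‖x‖)) (2*‖x‖)) := isCompact_Icc
    have hle : ↑(U.map (fun n => g n x)) ≤ Filter.principal (Set.Icc (-(2*‖x‖)) (2*‖x‖)) := by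
      rw [Filter.le_principal_iff]
      rw [Ultrafilter.mem_coe, Ultrafilter.mem_map]
      refine Filter.mem_of_superset Filter.univ_mem ?_
      intro n _
      have h1 : |g n x| ≤ 2 * ‖x‖ := by
        calc |g n x| = ‖g n x‖ := rfl
        _ ≤ ‖g n‖ * ‖x‖ := (g n).le_opNorm x
        _ ≤ 2 * ‖x‖ := by
            apply mul_le_mul_of_nonneg_right (hg n) (norm_nonneg x)
      simp only [Set.mem_preimage, Set.mem_Icc]
      constructor
      · linarith [neg_abs_le (g n x)]
      · linarith [le_abs_self (g n x)]
    obtain ⟨a, _, ha⟩ := hK.ultrafilter_le_nhds _ hle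
    exact ⟨a, ha⟩
  choose φ0 hφ0 using hlim
  have hadd : ∀ x y : X, φ0 (x + y) = φ0 x + φ0 y := by
    intro x y
    have h1 : Tendsto (fun n => g n (x + y)) (U : Filter ℕ) (nhds (φ0 x + φ0 y)) := by
      have := (hφ0 x).add (hφ0 y)
      simpa [map_add] using this
    exact tendsto_nhds_unique (hφ0 (x+y)) h1
  have hsmul : ∀ (c : ℝ) (x : X), φ0 (c • x) = c * φ0 x := by
    intro c x
    have h1 : Tendsto (fun n => g n (c • x)) (U : Filter ℕ) (nhds (c * φ0 x)) := by
      have := (hφ0 x).const_mul c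
      simpa [map_smul, smul_eq_mul] using this
    exact tendsto_nhds_unique (hφ0 (c • x)) h1
  have hbound : ∀ x : X, ‖φ0 x‖ ≤ 2 * ‖x‖ := by
    intro x
    have h1 : Tendsto (fun n => |g n x|) (U : Filter ℕ) (nhds |φ0 x|) :=
      (continuous_abs.tendsto _).comp (hφ0 x)
    have h2 : ∀ n, |g n x| ≤ 2 * ‖x‖ := fun n => by
      calc |g n x| = ‖g n x‖ := rfl
      _ ≤ ‖g n‖ * ‖x‖ := (g n).le_opNorm x
      _ ≤ 2 * ‖x‖ := mul_le_mul_of_nonneg_right (hg n) (norm_nonneg x)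
    exact le_of_tendsto h1 (Filter.Eventually.of_forall h2)
  refine ⟨LinearMap.mkContinuous
    { toFun := φ0, map_add' := hadd, map_smul' := hsmul } 2 (fun x => hbound x), fun x => hφ0 x⟩

lemma no_uniform_large {X : Type*} [NormedAddCommGroup X] [NormedSpace ℝ X]
    (w : ℕ → X) (hwn : ∀ φ : X →L[ℝ] ℝ, Tendsto (fun j => φ (w j)) atTop (nhds 0))
    (l : ℕ → ℕ) (hl : StrictMono l) (g : ℕ → X →L[ℝ] ℝ) (hgn : ∀ q, ‖g q‖ ≤ 2)
    (δ : ℝ) (hδ : 0 < δ) (hbig : ∀ q k, k ≤ q → δ ≤ |g q (w (l k))|) : False := by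
  obtain ⟨φ, hφ⟩ := weak_star_cluster g hgn
  have hk : ∀ k, δ ≤ |φ (w (l k))| := by
    intro k
    have h1 : Tendsto (fun q => |g q (w (l k))|)
        (Ultrafilter.of (atTop : Filter ℕ) : Filter ℕ) (nhds |φ (w (l k))|) :=
      (continuous_abs.tendsto _).comp (hφ (w (l k)))
    refine ge_of_tendsto h1 ?_
    exact Filter.Eventually.filter_mono (Ultrafilter.of_le _)
      (Filter.eventually_atTop.mpr ⟨k, fun q hq => hbig q k hq⟩)
  have h0 : Tendsto (fun k => φ (w (l k))) atTop (nhds 0) :=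
    (hwn φ).comp hl.tendsto_atTop
  have h2 : Tendsto (fun k => |φ (w (l k))|) atTop (nhds 0) := by
    simpa [Function.comp_def] using (continuous_abs.tendsto 0).comp h0
  obtain ⟨k, hlt⟩ := (h2.eventually_lt_const hδ).exists
  exact absurd (hk k) (not_le.mpr hlt)


section ClaimD

variable {X : Type*} [NormedAddCommGroup X] [NormedSpace ℝ X]
variable (x : ℕ → ℕ → X) (𝓕 : Set (X →L[ℝ] ℝ)) (A : Finset (List ℝ)) (δ : ℝ) (i₀ k₀ : ℕ)

/-- `f` takes pattern `a` on the columns `T` of row `k₀`. -/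
def PatT (f : X →L[ℝ] ℝ) (a : List ℝ) (T : Finset ℕ) : Prop :=
  (T.sort (· ≤ ·)).map (fun n => f (x k₀ n)) = a

/-- goodness of a tuple `T` for the vector `x i₀ l` and pattern `a`. -/
def GoodT (l : ℕ) (a : List ℝ) (T : Finset ℕ) : Prop :=
  (∃ f ∈ 𝓕, PatT x k₀ f a T) → ∃ g ∈ 𝓕, PatT x k₀ g a T ∧ |g (x i₀ l)| < δ

lemma claimD
    (hwn : ∀ φ : X →L[ℝ] ℝ, Tendsto (fun j => φ (x i₀ j)) atTop (nhds 0))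
    (h𝓕 : ∀ f ∈ 𝓕, ‖f‖ ≤ 2) (hδ : 0 < δ)
    (Q : Set ℕ) (hQ : Q.Infinite) (L : ℕ) :
    ∃ l ∈ Q, L ≤ l ∧ ∃ Q', Q' ⊆ Q ∧ Q'.Infinite ∧ (∀ n ∈ Q', l < n) ∧
      ∀ a ∈ A, ∀ T : Finset ℕ, ↑T ⊆ Q' → T.card = a.length →
        GoodT x 𝓕 δ i₀ k₀ l a T := by
  classical
  by_contra hcon
  push_neg at hcon
  -- step lemma
  have stepD : ∀ R : Set ℕ, R ⊆ Q → R.Infinite → ∀ B : ℕ,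
      ∃ l ∈ R, B ≤ l ∧ ∃ S', S' ⊆ R ∧ S'.Infinite ∧ (∀ n ∈ S', l < n) ∧
        ∃ a ∈ A, ∀ T : Finset ℕ, ↑T ⊆ S' → T.card = a.length →
          ¬ GoodT x 𝓕 δ i₀ k₀ l a T := by
    intro R hRQ hRinf B
    obtain ⟨l, hlR, hlgt⟩ := hRinf.exists_gt (max B L)
    have hR' : {n ∈ R | l < n}.Infinite := by
      have hsub : R \ Set.Iic l ⊆ {n ∈ R | l < n} := fun n hn => ⟨hn.1, not_le.mp hn.2⟩
      exact (hRinf.diff (Set.finite_Iic l)).mono hsub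
    obtain ⟨S', hS'sub, hS'inf, hb⟩ := ramseyList
      (A.toList.map (fun a => (a.length, fun T => decide (GoodT x 𝓕 δ i₀ k₀ l a T))))
      _ hR' ramsey
    have hS'Q : S' ⊆ Q := fun n hn => hRQ (hS'sub hn).1
    have hS'gt : ∀ n ∈ S', l < n := fun n hn => (hS'sub hn).2
    obtain ⟨a, haA, T₀, hT₀sub, hT₀card, hT₀bad⟩ :=
      hcon l (hRQ hlR) (le_of_lt (lt_of_le_of_lt (le_max_right B L) hlgt))
        S' hS'Q hS'inf hS'gt
    refine ⟨l, hlR, le_of_lt (lt_of_le_of_lt (le_max_left B L) hlgt),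
      S', fun n hn => (hS'sub hn).1, hS'inf, hS'gt, a, haA, ?_⟩
    obtain ⟨b, hbconst⟩ := hb (a.length, fun T => decide (GoodT x 𝓕 δ i₀ k₀ l a T))
      (List.mem_map.mpr ⟨a, Finset.mem_toList.mpr haA, rfl⟩)
    intro T hTsub hTcard hgood
    have h1 := hbconst T hTsub hTcard
    have h2 := hbconst T₀ hT₀sub hT₀card
    exact hT₀bad (of_decide_eq_true (h2.trans (h1.symm.trans (decide_eq_true hgood))))
  -- iterate stepD
  let St := {s : Set ℕ // s.Infinite ∧ s ⊆ Q}
  have next : ∀ sB : St × ℕ, ∃ l ∈ sB.1.1, sB.2 ≤ l ∧ ∃ S', S' ⊆ sB.1.1 ∧ S'.Infinite ∧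
      (∀ n ∈ S', l < n) ∧ ∃ a ∈ A, ∀ T : Finset ℕ, ↑T ⊆ S' → T.card = a.length →
        ¬ GoodT x 𝓕 δ i₀ k₀ l a T :=
    fun sB => stepD sB.1.1 sB.1.2.2 sB.1.2.1 sB.2
  choose ll hllmem hllge SS hSSsub hSSinf hSSgt aa haaA hbad using next
  let f : ℕ → St × ℕ := fun k => Nat.rec (⟨⟨Q, hQ, subset_rfl⟩, 0⟩)
    (fun _ sB => ⟨⟨SS sB, hSSinf sB, fun n hn => sB.1.2.2 (hSSsub sB hn)⟩, ll sB + 1⟩) k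
  have hpool_succ : ∀ k, (f (k+1)).1.1 = SS (f k) := fun k => rfl
  have hpool_sub : ∀ k, (f (k+1)).1.1 ⊆ (f k).1.1 := fun k m hm => hSSsub (f k) hm
  have hpool_chain : ∀ k j, k ≤ j → (f j).1.1 ⊆ (f k).1.1 := by
    intro k j hkj
    induction j with
    | zero => cases Nat.le_zero.mp hkj; exact subset_rfl
    | succ j ihj =>
      rcases Nat.lt_or_ge k (j+1) with h | h
      · exact (hpool_sub j).trans (ihj (Nat.lt_succ_iff.mp h))
      · cases Nat.le_antisymm hkj h; exact subset_rfl
  have hllmemf : ∀ k, ll (f k) ∈ (f k).1.1 := fun k => hllmem (f k)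
  have hllmono : ∀ k, ll (f k) < ll (f (k+1)) := by
    intro k
    have h1 : ll (f (k+1)) ∈ SS (f k) := hllmemf (k+1)
    exact hSSgt (f k) _ h1
  have hllsm : StrictMono (fun k => ll (f k)) := strictMono_nat_of_lt_succ hllmono
  -- elements of later pools are in earlier SS
  have hmem_SS : ∀ k j, k < j → ll (f j) ∈ SS (f k) := by
    intro k j hkj
    exact hpool_chain (k+1) j hkj (hllmemf j)
  -- pigeonhole over A
  have hfin : Finite {a : List ℝ // a ∈ A} := by
    have : Fintype {a : List ℝ // a ∈ A} := FinsetCoe.fintype A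
    exact Finite.of_fintype _
  obtain ⟨a₀, ha₀⟩ := @Finite.exists_infinite_fiber ℕ {a : List ℝ // a ∈ A} _ hfin
    (fun k => ⟨aa (f k), haaA (f k)⟩)
  have hKinf : {k : ℕ | aa (f k) = (a₀ : List ℝ)}.Infinite := by
    rw [← Set.infinite_coe_iff]
    have hset : ((fun k => (⟨aa (f k), haaA (f k)⟩ : {a : List ℝ // a ∈ A})) ⁻¹' {a₀})
        = {k | aa (f k) = (a₀ : List ℝ)} := by
      ext k
      simp [Subtype.ext_iff]
    rw [← hset]
    exact ha₀
  set p := (a₀ : List ℝ).length with hp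
  let kk : ℕ → ℕ := Nat.nth (fun k => aa (f k) = (a₀ : List ℝ))
  have hkkmem : ∀ r, aa (f (kk r)) = (a₀ : List ℝ) := fun r => Nat.nth_mem_of_infinite hKinf r
  have hkksm : StrictMono kk := Nat.nth_strictMono hKinf
  have hLsm : StrictMono (fun r => ll (f (kk r))) := hllsm.comp hkksm
  let Tq : ℕ → Finset ℕ := fun q => Finset.image (fun s => ll (f (kk (q+1+s)))) (Finset.range p)
  have hTcard : ∀ q, (Tq q).card = p := by
    intro q
    rw [Finset.card_image_of_injOn, Finset.card_range]
    have hsm : StrictMono (fun s => ll (f (kk (q+1+s)))) :=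
      fun s t h => hLsm (by omega)
    exact Set.injOn_of_injective hsm.injective
  have hTsub : ∀ q r, r ≤ q → ↑(Tq q) ⊆ SS (f (kk r)) := by
    intro q r hrq n hn
    simp only [Tq, Finset.coe_image, Set.mem_image, Finset.mem_coe, Finset.mem_range] at hn
    obtain ⟨s, _, rfl⟩ := hn
    exact hmem_SS (kk r) (kk (q+1+s)) (hkksm (by omega))
  have hbadq : ∀ q r, r ≤ q →
      ¬ GoodT x 𝓕 δ i₀ k₀ (ll (f (kk r))) (a₀ : List ℝ) (Tq q) := by
    intro q r hrq
    have h1 := hbad (f (kk r)) (Tq q) (hTsub q r hrq)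
    rw [hkkmem r] at h1
    exact h1 (hTcard q)
  have hex : ∀ q, ∃ fq, fq ∈ 𝓕 ∧ PatT x k₀ fq (a₀ : List ℝ) (Tq q) := by
    intro q
    have hb0 := hbadq q 0 (Nat.zero_le q)
    unfold GoodT at hb0
    obtain ⟨⟨fq, hfq, hpat⟩, _⟩ := _root_.not_imp.mp hb0
    exact ⟨fq, hfq, hpat⟩
  choose gq hgqF hgqpat using hex
  refine no_uniform_large (fun j => x i₀ j) hwn (fun r => ll (f (kk r))) hLsm gq
    (fun q => h𝓕 _ (hgqF q)) δ hδ ?_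
  intro q r hrq
  have hb := hbadq q r hrq
  unfold GoodT at hb
  obtain ⟨_, hno⟩ := _root_.not_imp.mp hb
  push_neg at hno
  exact hno (gq q) (hgqF q) (hgqpat q)

lemma stepEx
    (hwn : ∀ φ : X →L[ℝ] ℝ, Tendsto (fun j => φ (x i₀ j)) atTop (nhds 0))
    (h𝓕 : ∀ f ∈ 𝓕, ‖f‖ ≤ 2) (hδ : 0 < δ)
    (R : Set ℕ) (hR : R.Infinite) :
    ∃ sv av bv : ℕ, ∃ GP R' : Set ℕ,
      sv ∈ R ∧ av ∈ R ∧ bv ∈ R ∧ (∀ n ∈ R, sv ≤ n) ∧ sv ≤ av ∧ av < bv ∧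
      GP ⊆ R ∧ bv ∈ GP ∧ R' ⊆ GP ∧ R'.Infinite ∧ (∀ n ∈ R', bv < n) ∧
      (∀ a ∈ A, ∀ T : Finset ℕ, ↑T ⊆ GP → T.card = a.length →
        GoodT x 𝓕 δ i₀ k₀ av a T) := by
  have hRne : R.Nonempty := hR.nonempty
  set sv := sInf R with hsv
  have hsvmem : sv ∈ R := Nat.sInf_mem hRne
  have hsvle : ∀ n ∈ R, sv ≤ n := fun n hn => Nat.sInf_le hn
  obtain ⟨l, hlR, hlL, Q', hQ'sub, hQ'inf, hQ'gt, hgood⟩ :=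
    claimD x 𝓕 A δ i₀ k₀ hwn h𝓕 hδ R hR sv
  have hQ'ne : Q'.Nonempty := hQ'inf.nonempty
  set bv := sInf Q' with hbv
  have hbvmem : bv ∈ Q' := Nat.sInf_mem hQ'ne
  refine ⟨sv, l, bv, Q', Q' \ Set.Iic bv, hsvmem, hlR, hQ'sub hbvmem, hsvle, hlL,
    hQ'gt bv hbvmem, hQ'sub, hbvmem, fun n hn => hn.1, ?_, fun n hn => not_le.mp hn.2, hgood⟩
  exact hQ'inf.diff (Set.finite_Iic bv)

end ClaimD

lemma sort_image_strictMono (F : Finset ℕ) (κ : ℕ → ℕ) (hκ : StrictMono κ) :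
    (F.image κ).sort (· ≤ ·) = (F.sort (· ≤ ·)).map κ := by
  refine (List.perm_of_nodup_nodup_toFinset_eq ?_ ?_ ?_).eq_of_pairwise'
    (Finset.pairwise_sort _ _) ?_
  · exact Finset.sort_nodup _ _
  · exact (Finset.sort_nodup _ _).map hκ.injective
  · ext n
    simp only [Finset.sort_toFinset, List.mem_toFinset, List.mem_map, Finset.mem_image]
    constructor
    · rintro ⟨m, hm, rfl⟩
      exact ⟨m, by simpa [Finset.mem_sort] using hm, rfl⟩
    · rintro ⟨m, hm, rfl⟩
      exact ⟨m, by simpa [Finset.mem_sort] using hm, rfl⟩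
  · exact List.Pairwise.map κ (fun a b hab => hκ.monotone hab) (Finset.pairwise_sort F (· ≤ ·))

theorem main' {X : Type*} [NormedAddCommGroup X] [NormedSpace ℝ X]
    (x : ℕ → ℕ → X) (hArr : IsArray x)
    (A : Finset (List ℝ))
    (𝓕 : Set (X →L[ℝ] ℝ)) (h𝓕 : ∀ f ∈ 𝓕, ‖f‖ ≤ 2)
    (δ : ℝ) (hδ : 0 < δ) (i₀ k₀ : ℕ) :
    ∃ h : ℕ → ℕ → ℕ,
      (∀ i j, i ≤ j → i ≤ h i j) ∧
      (∀ i j i' j', i ≤ j → i' ≤ j' → RLlt (i, j) (i', j') → RLlt (i, h i j) (i', h i' j')) ∧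
      (∀ i j, i ≤ j → RLlt (i, j) (i₀, i₀) → h i j = j) ∧
      ∀ a ∈ A, ∀ F : Finset ℕ, (∀ m ∈ F, k₀ ≤ m) → F.card = a.length →
        ∀ j₀ : ℕ, i₀ ≤ j₀ → (∀ m ∈ F, RLlt (i₀, j₀) (k₀, m)) →
        (∃ f ∈ 𝓕, HasPatternOn (fun i j => x i (h i j)) f k₀ F a) →
        ∃ g ∈ 𝓕, HasPatternOn (fun i j => x i (h i j)) g k₀ F a ∧
          |g (x i₀ (h i₀ j₀))| < δ := by
  classical
  have hwn : ∀ φ : X →L[ℝ] ℝ, Tendsto (fun j => φ (x i₀ j)) atTop (nhds 0) := (hArr i₀).2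
  let St := {R : Set ℕ // R.Infinite}
  have next : ∀ s : St, ∃ sv av bv : ℕ, ∃ gp R' : Set ℕ,
      sv ∈ s.1 ∧ av ∈ s.1 ∧ bv ∈ s.1 ∧ (∀ n ∈ s.1, sv ≤ n) ∧ sv ≤ av ∧ av < bv ∧
      gp ⊆ s.1 ∧ bv ∈ gp ∧ R' ⊆ gp ∧ R'.Infinite ∧ (∀ n ∈ R', bv < n) ∧
      (∀ a ∈ A, ∀ T : Finset ℕ, ↑T ⊆ gp → T.card = a.length →
        GoodT x 𝓕 δ i₀ k₀ av a T) :=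
    fun s => stepEx x 𝓕 A δ i₀ k₀ hwn h𝓕 hδ s.1 s.2
  choose SV AV BV GP NR hSVmem hAVmem hBVmem hSVle hsa hab hGPsub hbvGP hNRsub hNRinf
    hNRgt hGood using next
  have hbase : ({n : ℕ | i₀ ≤ n}).Infinite := by
    have : Set.Ici i₀ = {n : ℕ | i₀ ≤ n} := rfl
    rw [← this]
    exact Set.Ici_infinite i₀
  let st : ℕ → St := fun t => Nat.rec ⟨{n : ℕ | i₀ ≤ n}, hbase⟩ (fun _ s => ⟨NR s, hNRinf s⟩) t
  have hst_succ : ∀ t, (st (t+1)).1 = NR (st t) := fun t => rfl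
  have hst_sub : ∀ t, (st (t+1)).1 ⊆ (st t).1 :=
    fun t m hm => hGPsub (st t) (hNRsub (st t) hm)
  have hchain : ∀ t t', t ≤ t' → (st t').1 ⊆ (st t).1 := by
    intro t t' htt'
    induction t' with
    | zero => cases Nat.le_zero.mp htt'; exact subset_rfl
    | succ t' iht =>
      rcases Nat.lt_or_ge t (t'+1) with h | h
      · exact (hst_sub t').trans (iht (Nat.lt_succ_iff.mp h))
      · cases Nat.le_antisymm htt' h; exact subset_rfl
  have hlow : ∀ t, ∀ n ∈ (st t).1, i₀ + t ≤ n := by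
    intro t
    induction t with
    | zero => intro n hn; exact hn
    | succ t iht =>
      intro n hn
      have h1 : BV (st t) < n := hNRgt (st t) n hn
      have h2 : i₀ + t ≤ BV (st t) := iht _ (hBVmem (st t))
      omega
  have hcross : ∀ t t', t < t' → ∀ n ∈ (st t').1, BV (st t) < n := by
    intro t t' htt' n hn
    exact hNRgt (st t) n (hchain (t+1) t' htt' hn)
  -- the column-selection function
  set val : ℕ → ℕ → ℕ := fun i j =>
    if j < i₀ then j else if i < i₀ then SV (st (j - i₀)) else
      if i = i₀ then AV (st (j - i₀)) else BV (st (j - i₀)) with hval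
  have hvalmem : ∀ i j, i₀ ≤ j → val i j ∈ (st (j - i₀)).1 := by
    intro i j hij
    simp only [hval, if_neg (not_lt.mpr hij)]
    split_ifs
    · exact hSVmem _
    · exact hAVmem _
    · exact hBVmem _
  have hvalleBV : ∀ i j, i₀ ≤ j → val i j ≤ BV (st (j - i₀)) := by
    intro i j hij
    simp only [hval, if_neg (not_lt.mpr hij)]
    split_ifs
    · exact le_trans (hSVle _ _ (hAVmem _)) (le_of_lt (hab _))
    · exact le_of_lt (hab _)
    · exact le_rfl
  have hvalge : ∀ i j, i₀ ≤ j → j ≤ val i j := by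
    intro i j hij
    have := hlow (j - i₀) _ (hvalmem i j hij)
    omega
  have hvalmono : ∀ i i' j j', j < j' → val i j < val i' j' := by
    intro i i' j j' hjj'
    rcases Nat.lt_or_ge j' i₀ with h1 | h1
    · simp only [hval, if_pos h1, if_pos (lt_trans hjj' h1)]
      exact hjj'
    rcases Nat.lt_or_ge j i₀ with h2 | h2
    · have hge := hvalge i' j' h1
      have hx1 : val i j = j := by simp only [hval, if_pos h2]
      omega
    · have hBVlt : BV (st (j - i₀)) < val i' j' := by
        apply hcross (j - i₀) (j' - i₀) (by omega)
        exact hvalmem i' j' h1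
      exact lt_of_le_of_lt (hvalleBV i j h2) hBVlt
  have hvalrow : ∀ i i' j, i₀ ≤ j → i < i' → val i j ≤ val i' j := by
    intro i i' j hj hii'
    simp only [hval, if_neg (not_lt.mpr hj)]
    split_ifs with h1 h2 h3 h4 h5 h6
    all_goals try exact le_rfl
    all_goals try omega
    · exact hSVle _ _ (hAVmem _)
    · exact hSVle _ _ (hBVmem _)
    · exact le_of_lt (hab _)
  refine ⟨val, ?_, ?_, ?_, ?_⟩
  · intro i j hij
    rcases Nat.lt_or_ge j i₀ with h | h
    · simp only [hval, if_pos h]; exact hij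
    · exact le_trans hij (hvalge i j h)
  · rintro i j i' j' hij hij' (h | ⟨rfl, h⟩)
    · exact Or.inl (hvalmono i i' j j' h)
    · rcases Nat.lt_or_ge j i₀ with h1 | h1
      · simp only [hval, if_pos h1]
        exact Or.inr ⟨rfl, h⟩
      · rcases lt_or_eq_of_le (hvalrow i i' j h1 h) with h2 | h2
        · exact Or.inl h2
        · exact Or.inr ⟨h2, h⟩
  · rintro i j hij hrl
    rcases hrl with h | ⟨heq, h⟩
    · simp only [hval, if_pos h]
    · have heq' : j = i₀ := heq
      have h' : i < i₀ := h
      have h0 : val i j = SV (st 0) := by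
        simp only [hval, if_pos h']
        rw [heq', if_neg (lt_irrefl i₀), Nat.sub_self]
      have hge : i₀ + 0 ≤ SV (st 0) := hlow 0 _ (hSVmem (st 0))
      have hle : SV (st 0) ≤ i₀ := hSVle (st 0) i₀ (le_rfl : i₀ ≤ i₀)
      omega
  · rintro a haA F hFk hcard j₀ hj₀ hRL ⟨f, hf, hpat⟩
    set t₀ := j₀ - i₀ with ht₀
    set κ : ℕ → ℕ := fun m => val k₀ m with hκ
    have hκsm : StrictMono κ := fun m m' h => hvalmono k₀ k₀ m m' h
    set T : Finset ℕ := F.image κ with hT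
    have hpat_iff : ∀ φ : X →L[ℝ] ℝ,
        HasPatternOn (fun i j => x i (val i j)) φ k₀ F a ↔ PatT x k₀ φ a T := by
      intro φ
      unfold HasPatternOn PatT
      rw [hT, sort_image_strictMono F κ hκsm, List.map_map]
      rfl
    have hTsub : ↑T ⊆ GP (st t₀) := by
      intro n hn
      rw [hT] at hn
      simp only [Finset.coe_image, Set.mem_image, Finset.mem_coe] at hn
      obtain ⟨m, hmF, rfl⟩ := hn
      rcases hRL m hmF with h | ⟨heq2, h⟩
      · -- j₀ < m
        have hlt : j₀ < m := h
        have h1 : κ m ∈ (st (m - i₀)).1 := hvalmem k₀ m (by omega)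
        have h2 : (st (m - i₀)).1 ⊆ (st (t₀ + 1)).1 := hchain (t₀+1) (m - i₀) (by omega)
        exact hNRsub (st t₀) (h2 h1)
      · -- m = j₀ and i₀ < k₀
        have heq' : j₀ = m := heq2
        have h' : i₀ < k₀ := h
        have hmeq : m - i₀ = t₀ := by omega
        have h1 : κ m = BV (st t₀) := by
          simp only [hκ, hval]
          rw [if_neg (by omega : ¬ m < i₀), if_neg (by omega : ¬ k₀ < i₀),
            if_neg (by omega : ¬ k₀ = i₀), hmeq]
        rw [h1]
        exact hbvGP (st t₀)
    have hTcard : T.card = a.length := by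
      rw [hT, Finset.card_image_of_injOn (Set.injOn_of_injective hκsm.injective), hcard]
    have hgd := hGood (st t₀) a haA T hTsub hTcard ⟨f, hf, (hpat_iff f).mp hpat⟩
    obtain ⟨g, hg, hgpat, hglt⟩ := hgd
    refine ⟨g, hg, (hpat_iff g).mpr hgpat, ?_⟩
    have h1 : val i₀ j₀ = AV (st t₀) := by
      simp only [hval, if_neg (not_lt.mpr hj₀), if_neg (lt_irrefl i₀), if_pos rfl, ht₀,
        ite_true, eq_self_iff_true]
    rw [h1]
    exact hglt

/-- Lemma 2.5. -/
theorem statement_7 {X : Type*} [NormedAddCommGroup X] [NormedSpace ℝ X] [CompleteSpace X]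
    (x : ℕ → ℕ → X) (hx : IsRegularArray x)
    (A : Finset (List ℝ))
    (𝓕 : Set (X →L[ℝ] ℝ)) (h𝓕 : ∀ f ∈ 𝓕, ‖f‖ ≤ 2)
    (δ : ℝ) (hδ : 0 < δ) (i₀ k₀ : ℕ) :
    ∃ y : ℕ → ℕ → X, IsSubarrayOf y x ∧
      (∀ i j, i ≤ j → RLlt (i, j) (i₀, i₀) → y i j = x i j) ∧
      ∀ a ∈ A, ∀ F : Finset ℕ, (∀ m ∈ F, k₀ ≤ m) → F.card = a.length →
        ∀ j₀ : ℕ, i₀ ≤ j₀ → (∀ m ∈ F, RLlt (i₀, j₀) (k₀, m)) →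
        (∃ f ∈ 𝓕, HasPatternOn y f k₀ F a) →
        ∃ g ∈ 𝓕, HasPatternOn y g k₀ F a ∧ |g (y i₀ j₀)| < δ := by
  obtain ⟨C, hArr, -, -⟩ := hx
  obtain ⟨val, h1, h2, h3, h4⟩ := main' x hArr A 𝓕 h𝓕 δ hδ i₀ k₀
  refine ⟨fun i j => x i (val i j), ⟨val, h1, h2, fun i j _ => rfl⟩, ?_, h4⟩
  intro i j hij hrl
  show x i (val i j) = x i j
  rw [h3 i j hij hrl]

end
end

section
/- Let (x_{i,j})_{(i,j)∈I} be a regular array in a Banach space X, let A⃗ be a finite set of patterns, let 𝓕 ⊆ 2Ba(X*) and let δ > 0. Then there exists a subarray (y_{i,j})_{(i,j)∈I} of (x_{i,j})_{(i,j)∈I} such that for every a⃗ ∈ A⃗, every k₀ ∈ ℕ, every F ⊆ {k₀, k₀+1, k₀+2, …} with |F| = |a⃗|, and every (i₀,j₀) ∈ I with (1,k₀) ≤_{rℓ} (i₀,j₀) <_{rℓ} (k₀, min F), the following holds: if there exists f ∈ 𝓕 having pattern a⃗ on (k₀,F) with respect to (y_{i,j})_{(i,j)∈I}, then there exists g ∈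 𝓕 having pattern a⃗ on (k₀,F) with respect to (y_{i,j})_{(i,j)∈I} and satisfying |g(y_{i₀,j₀})| < δ. -/
open Filter

noncomputable section

private lemma iterChain {α : Type*} (Q : ℕ → α → α → Prop) (a₀ : α)
    (h : ∀ r a, ∃ b, Q r a b) :
    ∃ f : ℕ → α, f 0 = a₀ ∧ ∀ r, Q r (f r) (f (r + 1)) :=
  ⟨fun n => Nat.rec a₀ (fun r a => Classical.choose (h r a)) n, rfl,
    fun r => Classical.choose_spec (h r _)⟩

private lemma inter_Ioi_infinite {S : Set ℕ} (hS : S.Infinite) (a : ℕ) :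
    (S ∩ Set.Ioi a).Infinite := by
  have h : S \ Set.Iic a = S ∩ Set.Ioi a := by
    ext m; simp [Set.mem_Ioi, Set.mem_Iic, not_le]
  rw [← h]
  exact hS.diff (Set.finite_Iic a)

private lemma ramsey_s8 (p : ℕ) (P : Finset ℕ → Prop) (R : Set ℕ) (hR : R.Infinite) :
    ∃ R' : Set ℕ, R' ⊆ R ∧ R'.Infinite ∧
      ((∀ s : Finset ℕ, ↑s ⊆ R' → s.card = p → P s) ∨
       (∀ s : Finset ℕ, ↑s ⊆ R' → s.card = p → ¬ P s)) := by
  induction p generalizing P R with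
  | zero =>
    refine ⟨R, subset_rfl, hR, ?_⟩
    by_cases h : P ∅
    · left; intro s _ hs; rwa [Finset.card_eq_zero.mp hs]
    · right; intro s _ hs; rwa [Finset.card_eq_zero.mp hs]
  | succ p ih =>
    have step : ∀ S : {T : Set ℕ // T.Infinite ∧ T ⊆ R},
        ∃ b : ℕ × Bool × {T : Set ℕ // T.Infinite ∧ T ⊆ R},
          b.1 ∈ S.1 ∧ b.2.2.1 ⊆ S.1 ∧ (∀ m ∈ b.2.2.1, b.1 < m) ∧
          (∀ t : Finset ℕ, ↑t ⊆ b.2.2.1 → t.card = p →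
            (P (insert b.1 t) ↔ b.2.1 = true)) := by
      rintro ⟨S, hSinf, hSR⟩
      obtain ⟨a, ha⟩ := hSinf.nonempty
      obtain ⟨M, hM1, hM2, hM3⟩ := ih (fun t => P (insert a t)) _ (inter_Ioi_infinite hSinf a)
      have hMS : M ⊆ S := fun m hm => (hM1 hm).1
      have hMa : ∀ m ∈ M, a < m := fun m hm => (hM1 hm).2
      rcases hM3 with h3 | h3
      · exact ⟨(a, true, ⟨M, hM2, fun m hm => hSR (hMS hm)⟩), ha, hMS, hMa,
          fun t ht hc => by simp [h3 t ht hc]⟩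
      · exact ⟨(a, false, ⟨M, hM2, fun m hm => hSR (hMS hm)⟩), ha, hMS, hMa,
          fun t ht hc => by simp [h3 t ht hc]⟩
    obtain ⟨f, hf0, hfs⟩ := iterChain
      (fun _ a b => b.1 ∈ a.2.2.1 ∧ b.2.2.1 ⊆ a.2.2.1 ∧ (∀ m ∈ b.2.2.1, b.1 < m) ∧
        (∀ t : Finset ℕ, ↑t ⊆ b.2.2.1 → t.card = p → (P (insert b.1 t) ↔ b.2.1 = true)))
      ((0, true, ⟨R, hR, subset_rfl⟩) : ℕ × Bool × {T : Set ℕ // T.Infinite ∧ T ⊆ R})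
      (fun _ a => step a.2.2)
    set M : ℕ → Set ℕ := fun k => (f k).2.2.1 with hM
    set aseq : ℕ → ℕ := fun k => (f (k + 1)).1 with haseq
    set ε : ℕ → Bool := fun k => (f (k + 1)).2.1 with hε
    have hmem : ∀ k, aseq k ∈ M k := fun k => (hfs k).1
    have hsub : ∀ k, M (k + 1) ⊆ M k := fun k => (hfs k).2.1
    have hlt : ∀ k, ∀ m ∈ M (k + 1), aseq k < m := fun k => (hfs k).2.2.1
    have hcol : ∀ k, ∀ t : Finset ℕ, ↑t ⊆ M (k + 1) → t.card = p →
        (P (insert (aseq k) t) ↔ ε k = true) := fun k => (hfs k).2.2.2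
    have hMR : ∀ k, M k ⊆ R := fun k => (f k).2.2.2.2
    have hmono : ∀ k l, k ≤ l → M l ⊆ M k := by
      intro k l hkl
      induction l, hkl using Nat.le_induction with
      | base => exact subset_rfl
      | succ l hkl ihl => exact (hsub l).trans ihl
    have hastrict : StrictMono aseq := by
      apply strictMono_nat_of_lt_succ
      intro k
      exact hlt k _ (hmem (k + 1))
    have haM : ∀ k l, k < l → aseq l ∈ M (k + 1) :=
      fun k l hkl => hmono (k + 1) l hkl (hmem l)
    obtain ⟨b, hb⟩ := Finite.exists_infinite_fiber ε
    have hK : (ε ⁻¹' {b}).Infinite := Set.infinite_coe_iff.mp hb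
    refine ⟨aseq '' (ε ⁻¹' {b}), ?_, hK.image (hastrict.injective.injOn), ?_⟩
    · rintro z ⟨k, _, rfl⟩
      exact hMR k (hmem k)
    have key : ∀ s : Finset ℕ, ↑s ⊆ aseq '' (ε ⁻¹' {b}) → s.card = p + 1 →
        (P s ↔ b = true) := by
      intro s hs hcard
      have hne : s.Nonempty := Finset.card_pos.mp (by omega)
      set a₀ := s.min' hne with ha₀
      obtain ⟨k, hkK, hka⟩ := hs (s.min'_mem hne)
      have htsub : ↑(s.erase a₀) ⊆ M (k + 1) := by
        intro m hm
        rcases hm with hm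
        have hms : m ∈ s.erase a₀ := hm
        have hmmem : m ∈ s := Finset.mem_of_mem_erase hms
        have hmne : m ≠ a₀ := Finset.ne_of_mem_erase hms
        obtain ⟨l, hlK, hla⟩ := hs hmmem
        have : a₀ < m := lt_of_le_of_ne (s.min'_le m hmmem) (Ne.symm hmne)
        have hkl : k < l := by
          have : aseq k < aseq l := by rw [hka, hla]; exact this
          exact hastrict.lt_iff_lt.mp this
        rw [← hla]
        exact haM k l hkl
      have hcardt : (s.erase a₀).card = p := by
        rw [Finset.card_erase_of_mem (s.min'_mem hne)]; omega
      have := hcol k (s.erase a₀) htsub hcardt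
      rw [hka, Finset.insert_erase (s.min'_mem hne)] at this
      have hεk : ε k = b := hkK
      rw [hεk] at this
      exact this
    cases b with
    | true => exact Or.inl (fun s hs hc => (key s hs hc).mpr rfl)
    | false => exact Or.inr (fun s hs hc hP => by simpa using (key s hs hc).mp hP)

private lemma ramsey_family {γ : Type*} (C : Finset γ) (ar : γ → ℕ) (P : γ → Finset ℕ → Prop)
    (R : Set ℕ) (hR : R.Infinite) :
    ∃ R' : Set ℕ, R' ⊆ R ∧ R'.Infinite ∧ ∀ c ∈ C,
      (∀ s : Finset ℕ, ↑s ⊆ R' → s.card = ar c → P c s) ∨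
      (∀ s : Finset ℕ, ↑s ⊆ R' → s.card = ar c → ¬ P c s) := by
  induction C using Finset.cons_induction generalizing R with
  | empty => exact ⟨R, subset_rfl, hR, fun c hc => absurd hc (Finset.notMem_empty c)⟩
  | cons c C hc ih =>
    obtain ⟨R₁, hR₁R, hR₁inf, hR₁⟩ := ih R hR
    obtain ⟨R₂, hR₂R, hR₂inf, hR₂⟩ := ramsey_s8 (ar c) (P c) R₁ hR₁inf
    refine ⟨R₂, hR₂R.trans hR₁R, hR₂inf, ?_⟩
    intro c' hc'
    rcases Finset.mem_cons.mp hc' with rfl | hc'C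
    · exact hR₂
    · rcases hR₁ c' hc'C with h | h
      · exact Or.inl (fun s hs => h s (fun z hz => hR₂R (hs hz)))
      · exact Or.inr (fun s hs => h s (fun z hz => hR₂R (hs hz)))

private lemma sort_image (F : Finset ℕ) (g : ℕ → ℕ)
    (hg : ∀ a ∈ F, ∀ b ∈ F, a < b → g a < g b) :
    (F.image g).sort (· ≤ ·) = (F.sort (· ≤ ·)).map g := by
  have hinj : Set.InjOn g F := by
    intro a ha b hb hab
    rcases lt_trichotomy a b with h | h | h
    · exact absurd hab (hg a ha b hb h).ne
    · exact h
    · exact absurd hab.symm (hg b hb a ha h).ne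
  haveI : IsAntisymm ℕ (· < ·) := ⟨fun a b h h' => absurd h' (lt_asymm h)⟩
  refine List.Perm.eq_of_pairwise (le := (· < · : ℕ → ℕ → Prop)) (fun a b _ _ h h' => absurd h' (lt_asymm h)) ?_ ?_ ?_
  rotate_right
  · apply Multiset.coe_eq_coe.mp
    rw [Finset.sort_eq, Finset.image_val_of_injOn hinj]
    have : (F.sort (· ≤ ·) : Multiset ℕ) = F.1 := Finset.sort_eq _ _
    calc (F.1.map g : Multiset ℕ) = (Multiset.map g ↑(F.sort (· ≤ ·))) := by rw [this]
    _ = ↑((F.sort (· ≤ ·)).map g) := by rw [Multiset.map_coe]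
  · exact (Finset.sortedLT_sort _).pairwise
  · have hs := (Finset.sortedLT_sort F).pairwise
    rw [List.pairwise_map]
    refine hs.imp_of_mem ?_
    intro a b ha hb hab
    exact hg a ((Finset.mem_sort _).mp ha) b ((Finset.mem_sort _).mp hb) hab

private def pos : ℕ → ℕ × ℕ
  | 0 => (0, 0)
  | r + 1 => if (pos r).1 < (pos r).2 then ((pos r).1 + 1, (pos r).2) else (0, (pos r).2 + 1)

private lemma pos_valid : ∀ r, (pos r).1 ≤ (pos r).2 := by
  intro r
  induction r with
  | zero => simp [pos]
  | succ r ih =>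
    rw [pos]
    split <;> simp <;> omega

private lemma RLlt_of_lt {q q' : ℕ × ℕ} (h : q.2 < q'.2 ∨ (q.2 = q'.2 ∧ q.1 < q'.1)) :
    RLlt q q' := h

private lemma pos_succ_rl (r : ℕ) : RLlt (pos r) (pos (r + 1)) := by
  simp only [pos]
  split
  · exact Or.inr ⟨rfl, Nat.lt_succ_self _⟩
  · exact Or.inl (Nat.lt_succ_self _)

private lemma RLlt_trans {a b c : ℕ × ℕ} (h1 : RLlt a b) (h2 : RLlt b c) : RLlt a c := by
  rcases h1 with h1 | ⟨h1, h1'⟩ <;> rcases h2 with h2 | ⟨h2, h2'⟩ <;>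
    unfold RLlt <;> omega

private lemma pos_lt_rl : ∀ {r r' : ℕ}, r < r' → RLlt (pos r) (pos r') := by
  intro r r' h
  induction r', h using Nat.le_induction with
  | base => exact pos_succ_rl r
  | succ r' hr ih => exact RLlt_trans ih (pos_succ_rl r')

private lemma pos_surj : ∀ j i, i ≤ j → ∃ r, pos r = (i, j) := by
  intro j
  induction j with
  | zero => intro i hi; interval_cases i; exact ⟨0, rfl⟩
  | succ j ihj =>
    have h0 : ∃ r, pos r = (0, j + 1) := by
      obtain ⟨r, hr⟩ := ihj j le_rfl
      refine ⟨r + 1, ?_⟩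
      rw [pos, hr]
      simp
    intro i
    induction i with
    | zero => intro _; exact h0
    | succ i ihi =>
      intro hi
      obtain ⟨r, hr⟩ := ihi (by omega)
      refine ⟨r + 1, ?_⟩
      rw [pos, hr]
      have : i < j + 1 := by omega
      simp [this]

private def rank (q : ℕ × ℕ) : ℕ :=
  if h : q.1 ≤ q.2 then Nat.find (pos_surj q.2 q.1 h) else 0

private lemma pos_rank {q : ℕ × ℕ} (h : q.1 ≤ q.2) : pos (rank q) = q := by
  rw [rank, dif_pos h]
  exact Nat.find_spec (pos_surj q.2 q.1 h)

private lemma RLlt_asymm {a b : ℕ × ℕ} (h1 : RLlt a b) (h2 : RLlt b a) : False := by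
  rcases h1 with h1 | ⟨h1, h1'⟩ <;> rcases h2 with h2 | ⟨h2, h2'⟩ <;> omega

private lemma RLlt_irrefl (a : ℕ × ℕ) (h : RLlt a a) : False := RLlt_asymm h h

private lemma rank_lt_rank {q q' : ℕ × ℕ} (hq : q.1 ≤ q.2) (hq' : q'.1 ≤ q'.2)
    (h : RLlt q q') : rank q < rank q' := by
  by_contra hle
  push_neg at hle
  rcases eq_or_lt_of_le hle with heq | hlt
  · have : pos (rank q) = pos (rank q') := by rw [heq]
    rw [pos_rank hq, pos_rank hq'] at this
    rw [this] at h
    exact RLlt_irrefl _ h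
  · have := pos_lt_rl hlt
    rw [pos_rank hq, pos_rank hq'] at this
    exact RLlt_asymm h this

private lemma keystep {X : Type*} [NormedAddCommGroup X] [NormedSpace ℝ X]
    (x : ℕ → ℕ → X) (𝓕 : Set (X →L[ℝ] ℝ)) (h𝓕 : ∀ f ∈ 𝓕, ‖f‖ ≤ 2)
    (δ : ℝ) (hδ : 0 < δ) (ρ : ℕ)
    (hwn : ∀ f : X →L[ℝ] ℝ, Tendsto (fun j => f (x ρ j)) atTop (nhds 0))
    (C : Finset (List ℝ × ℕ)) (R : Set ℕ) (hR : R.Infinite) :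
    ∃ n₀ ∈ R, ∃ R' : Set ℕ, R' ⊆ R ∧ R'.Infinite ∧ (∀ m ∈ R', n₀ < m) ∧
      ∀ c ∈ C, ∀ s : Finset ℕ, ↑s ⊆ R' → s.card = c.1.length →
        (∃ f ∈ 𝓕, HasPatternOn x f c.2 s c.1) →
        ∃ g ∈ 𝓕, HasPatternOn x g c.2 s c.1 ∧ |g (x ρ n₀)| < δ := by
  by_contra hcon
  push_neg at hcon
  -- hcon : ∀ n₀ ∈ R, ∀ R', R' ⊆ R → R'.Infinite → (∀ m ∈ R', n₀ < m) →
  --   ∃ c ∈ C, ∃ s, ↑s ⊆ R' ∧ s.card = c.1.length ∧ (∃ f ∈ 𝓕, ...) ∧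
  --     ∀ g ∈ 𝓕, HasPatternOn → δ ≤ |g (x ρ n₀)|
  have step : ∀ S : {T : Set ℕ // T.Infinite ∧ T ⊆ R},
      ∃ b : (ℕ × (List ℝ × ℕ)) × {T : Set ℕ // T.Infinite ∧ T ⊆ R},
        b.1.1 ∈ S.1 ∧ b.2.1 ⊆ S.1 ∧ (∀ m ∈ b.2.1, b.1.1 < m) ∧ b.1.2 ∈ C ∧
        ∀ s : Finset ℕ, ↑s ⊆ b.2.1 → s.card = b.1.2.1.length →
          ((∃ f ∈ 𝓕, HasPatternOn x f b.1.2.2 s b.1.2.1) ∧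
           ∀ g ∈ 𝓕, HasPatternOn x g b.1.2.2 s b.1.2.1 → δ ≤ |g (x ρ b.1.1)|) := by
    rintro ⟨S, hSinf, hSR⟩
    obtain ⟨ν, hν⟩ := hSinf.nonempty
    obtain ⟨T, hT1, hT2, hT3⟩ := ramsey_family C (fun c => c.1.length)
      (fun c s => (∃ f ∈ 𝓕, HasPatternOn x f c.2 s c.1) ∧
        ∀ g ∈ 𝓕, HasPatternOn x g c.2 s c.1 → δ ≤ |g (x ρ ν)|)
      (S ∩ Set.Ioi ν) (inter_Ioi_infinite hSinf ν)
    have hTS : T ⊆ S := fun m hm => (hT1 hm).1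
    have hTν : ∀ m ∈ T, ν < m := fun m hm => (hT1 hm).2
    obtain ⟨c, hcC, s₀, hs₀T, hs₀card, hs₀att, hs₀big⟩ :=
      hcon ν (hSR hν) T (hTS.trans hSR) hT2 hTν
    have hP : (∃ f ∈ 𝓕, HasPatternOn x f c.2 s₀ c.1) ∧
        ∀ g ∈ 𝓕, HasPatternOn x g c.2 s₀ c.1 → δ ≤ |g (x ρ ν)| :=
      ⟨hs₀att, fun g hg hpat => hs₀big g hg hpat⟩
    rcases hT3 c hcC with hall | hnone
    · exact ⟨((ν, c), ⟨T, hT2, hTS.trans hSR⟩), hν, hTS, hTν, hcC, hall⟩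
    · exact absurd hP (hnone s₀ hs₀T hs₀card)
  obtain ⟨f, hf0, hfs⟩ := iterChain
    (fun _ a b => b.1.1 ∈ a.2.1 ∧ b.2.1 ⊆ a.2.1 ∧ (∀ m ∈ b.2.1, b.1.1 < m) ∧ b.1.2 ∈ C ∧
      ∀ s : Finset ℕ, ↑s ⊆ b.2.1 → s.card = b.1.2.1.length →
        ((∃ f ∈ 𝓕, HasPatternOn x f b.1.2.2 s b.1.2.1) ∧
         ∀ g ∈ 𝓕, HasPatternOn x g b.1.2.2 s b.1.2.1 → δ ≤ |g (x ρ b.1.1)|))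
    (((0, (([] : List ℝ), 0)), ⟨R, hR, subset_rfl⟩) :
      (ℕ × (List ℝ × ℕ)) × {T : Set ℕ // T.Infinite ∧ T ⊆ R})
    (fun _ a => step a.2)
  set M : ℕ → Set ℕ := fun k => (f k).2.1 with hMdef
  set ν : ℕ → ℕ := fun k => (f (k + 1)).1.1 with hνdef
  set cs : ℕ → List ℝ × ℕ := fun k => (f (k + 1)).1.2 with hcsdef
  have hmem : ∀ k, ν k ∈ M k := fun k => (hfs k).1
  have hsub : ∀ k, M (k + 1) ⊆ M k := fun k => (hfs k).2.1
  have hlt : ∀ k, ∀ m ∈ M (k + 1), ν k < m := fun k => (hfs k).2.2.1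
  have hcsC : ∀ k, cs k ∈ C := fun k => (hfs k).2.2.2.1
  have hprop : ∀ k, ∀ s : Finset ℕ, ↑s ⊆ M (k + 1) → s.card = (cs k).1.length →
      ((∃ f ∈ 𝓕, HasPatternOn x f (cs k).2 s (cs k).1) ∧
       ∀ g ∈ 𝓕, HasPatternOn x g (cs k).2 s (cs k).1 → δ ≤ |g (x ρ (ν k))|) :=
    fun k => (hfs k).2.2.2.2
  have hmono : ∀ k l, k ≤ l → M l ⊆ M k := by
    intro k l hkl
    induction l, hkl using Nat.le_induction with
    | base => exact subset_rfl
    | succ l hkl ihl => exact (hsub l).trans ihl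
  have hνstrict : StrictMono ν := by
    apply strictMono_nat_of_lt_succ
    intro k
    exact hlt k _ (hmem (k + 1))
  -- pigeonhole on contexts
  have : ∃ z : {z : List ℝ × ℕ // z ∈ C}, ((fun k => (⟨cs k, hcsC k⟩ : {z // z ∈ C})) ⁻¹' {z}).Infinite := by
    obtain ⟨z, hz⟩ := Finite.exists_infinite_fiber (fun k => (⟨cs k, hcsC k⟩ : {z : List ℝ × ℕ // z ∈ C}))
    exact ⟨z, Set.infinite_coe_iff.mp hz⟩
  obtain ⟨z, hzinf⟩ := this
  set K : Set ℕ := (fun k => (⟨cs k, hcsC k⟩ : {z : List ℝ × ℕ // z ∈ C})) ⁻¹' {z} with hKdef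
  have hKcs : ∀ k ∈ K, cs k = z.1 := by
    intro k hk
    have : (⟨cs k, hcsC k⟩ : {z : List ℝ × ℕ // z ∈ C}) = z := hk
    exact congrArg Subtype.val this
  have hKset : (setOf (· ∈ K)).Infinite := by exact hzinf
  set e : ℕ → ℕ := Nat.nth (· ∈ K) with hedef
  have hemono : StrictMono e := Nat.nth_strictMono hKset
  have hemem : ∀ n, e n ∈ K := fun n => Nat.nth_mem_of_infinite hKset n
  -- construct the big functionals
  have hbig : ∀ N : ℕ, ∃ fN ∈ 𝓕, ∀ s' ≤ N, δ ≤ |fN (x ρ (ν (e s')))| := by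
    intro N
    obtain ⟨sN, hsN1, hsN2⟩ := (f (e N + 1)).2.2.1.exists_subset_card_eq z.1.1.length
    have hsNM : ∀ s' ≤ N, ↑sN ⊆ M (e s' + 1) := by
      intro s' hs'
      have h1 : e s' + 1 ≤ e N + 1 := by
        have := hemono.monotone hs'
        omega
      exact fun m hm => hmono (e s' + 1) (e N + 1) h1 (hsN1 hm)
    have hattained := (hprop (e N) sN (hsNM N le_rfl) (by rw [hsN2, hKcs (e N) (hemem N)])).1
    rw [hKcs (e N) (hemem N)] at hattained
    obtain ⟨fN, hfN𝓕, hfNpat⟩ := hattained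
    refine ⟨fN, hfN𝓕, ?_⟩
    intro s' hs'
    have h2 := (hprop (e s') sN (hsNM s' hs') (by rw [hsN2, hKcs (e s') (hemem s')])).2
    rw [hKcs (e s') (hemem s')] at h2
    exact h2 fN hfN𝓕 hfNpat
  choose F hF𝓕 hFbig using hbig
  -- Banach-Alaoglu
  set K2 : Set (WeakDual ℝ X) :=
    WeakDual.toStrongDual ⁻¹' Metric.closedBall (0 : StrongDual ℝ X) 2 with hK2def
  have hK2 : IsCompact K2 := WeakDual.isCompact_closedBall (𝕜 := ℝ) (E := X) 0 2
  set T : ℕ → WeakDual ℝ X := fun N => StrongDual.toWeakDual (F N) with hTdef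
  have hTK : ∀ N, T N ∈ K2 := by
    intro N
    simp only [hK2def, Set.mem_preimage, mem_closedBall_zero_iff]
    show ‖WeakDual.toStrongDual (StrongDual.toWeakDual (F N))‖ ≤ 2
    exact h𝓕 (F N) (hF𝓕 N)
  have hle : map T atTop ≤ 𝓟 K2 :=
    le_principal_iff.mpr (mem_map.mpr (Eventually.of_forall hTK))
  obtain ⟨φ, hφK, hφcl⟩ := hK2.exists_clusterPt hle
  -- transfer the cluster
  have hbigφ : ∀ s' : ℕ, δ ≤ |φ (x ρ (ν (e s')))| := by
    intro s'
    set w : X := x ρ (ν (e s')) with hwdef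
    have hev : Continuous (fun ψ : WeakDual ℝ X => ψ w) := WeakDual.eval_continuous w
    have hcl2 : ClusterPt (φ w) (map (fun N => (T N) w) atTop) := by
      refine hφcl.map hev.continuousAt ?_
      rw [tendsto_map'_iff]
      exact tendsto_map
    have hSclosed : IsClosed {r : ℝ | δ ≤ |r|} :=
      isClosed_le continuous_const continuous_abs
    have hev2 : ∀ᶠ N in atTop, (T N) w ∈ {r : ℝ | δ ≤ |r|} := by
      filter_upwards [eventually_ge_atTop s'] with N hN
      exact hFbig N s' hN
    have hle2 : map (fun N => (T N) w) atTop ≤ 𝓟 {r : ℝ | δ ≤ |r|} :=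
      le_principal_iff.mpr (mem_map.mpr hev2)
    have := (hcl2.mono hle2)
    have hcls : φ w ∈ closure {r : ℝ | δ ≤ |r|} := mem_closure_iff_clusterPt.mpr this
    rwa [hSclosed.closure_eq] at hcls
  -- contradiction with weak nullness
  set φ' : X →L[ℝ] ℝ := WeakDual.toStrongDual φ with hφ'def
  have hφ'eq : ∀ w : X, φ' w = φ w := fun w => rfl
  have htendcol : Tendsto (fun s' : ℕ => ν (e s')) atTop atTop :=
    (hνstrict.comp hemono).tendsto_atTop
  have htend : Tendsto (fun s' : ℕ => φ' (x ρ (ν (e s')))) atTop (nhds 0) :=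
    (hwn φ').comp htendcol
  have habs : Tendsto (fun s' : ℕ => |φ' (x ρ (ν (e s')))|) atTop (nhds 0) := by
    have := htend.abs
    rwa [abs_zero] at this
  have hlt2 : ∀ᶠ s' in atTop, |φ' (x ρ (ν (e s')))| < δ := habs.eventually_lt_const hδ
  obtain ⟨s', hs'⟩ := hlt2.exists
  have := hbigφ s'
  rw [← hφ'eq] at this
  linarith

/-- Lemma 2.7. -/
theorem statement_8 {X : Type*} [NormedAddCommGroup X] [NormedSpace ℝ X] [CompleteSpace X]
    (x : ℕ → ℕ → X) (hx : IsRegularArray x)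
    (A : Finset (List ℝ))
    (𝓕 : Set (X →L[ℝ] ℝ)) (h𝓕 : ∀ f ∈ 𝓕, ‖f‖ ≤ 2)
    (δ : ℝ) (hδ : 0 < δ) :
    ∃ y : ℕ → ℕ → X, IsSubarrayOf y x ∧
      ∀ a ∈ A, ∀ (k₀ : ℕ) (F : Finset ℕ), (∀ m ∈ F, k₀ ≤ m) → F.card = a.length →
        ∀ i₀ j₀ : ℕ, i₀ ≤ j₀ →
          -- (1, k₀) ≤_{rℓ} (i₀, j₀) (with rows indexed from 0, i.e. (0, k₀) ≤_{rℓ} (i₀, j₀))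
          k₀ ≤ j₀ →
          -- (i₀, j₀) <_{rℓ} (k₀, min F)
          (∀ m ∈ F, RLlt (i₀, j₀) (k₀, m)) →
        (∃ f ∈ 𝓕, HasPatternOn y f k₀ F a) →
        ∃ g ∈ 𝓕, HasPatternOn y g k₀ F a ∧ |g (y i₀ j₀)| < δ := by
  obtain ⟨C₀, harr, -⟩ := hx
  have hwn : ∀ i (f : X →L[ℝ] ℝ), Tendsto (fun j => f (x i j)) atTop (nhds 0) :=
    fun i => (harr i).2
  have main_step : ∀ (r : ℕ) (S : {T : Set ℕ // T.Infinite}),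
      ∃ b : ℕ × {T : Set ℕ // T.Infinite},
        b.1 ∈ S.1 ∧ (pos r).2 < b.1 ∧ b.2.1 ⊆ S.1 ∧ (∀ m ∈ b.2.1, b.1 < m) ∧
        ∀ c ∈ A ×ˢ Finset.range ((pos r).2 + 1), ∀ s : Finset ℕ, ↑s ⊆ b.2.1 →
          s.card = c.1.length →
          (∃ f ∈ 𝓕, HasPatternOn x f c.2 s c.1) →
          ∃ g ∈ 𝓕, HasPatternOn x g c.2 s c.1 ∧ |g (x (pos r).1 b.1)| < δ := by
    rintro r ⟨S, hS⟩
    obtain ⟨n₀, hn₀, R', hR'1, hR'2, hR'3, hR'4⟩ := keystep x 𝓕 h𝓕 δ hδ (pos r).1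
      (hwn (pos r).1) (A ×ˢ Finset.range ((pos r).2 + 1)) (S ∩ Set.Ioi (pos r).2)
      (inter_Ioi_infinite hS (pos r).2)
    exact ⟨(n₀, ⟨R', hR'2⟩), hn₀.1, hn₀.2, fun m hm => (hR'1 hm).1, hR'3, hR'4⟩
  obtain ⟨f, hf0, hfs⟩ := iterChain
    (fun r a b => b.1 ∈ a.2.1 ∧ (pos r).2 < b.1 ∧ b.2.1 ⊆ a.2.1 ∧ (∀ m ∈ b.2.1, b.1 < m) ∧
      ∀ c ∈ A ×ˢ Finset.range ((pos r).2 + 1), ∀ s : Finset ℕ, ↑s ⊆ b.2.1 →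
        s.card = c.1.length →
        (∃ f ∈ 𝓕, HasPatternOn x f c.2 s c.1) →
        ∃ g ∈ 𝓕, HasPatternOn x g c.2 s c.1 ∧ |g (x (pos r).1 b.1)| < δ)
    ((0, ⟨Set.univ, Set.infinite_univ⟩) : ℕ × {T : Set ℕ // T.Infinite})
    (fun r a => main_step r a.2)
  set N : ℕ → ℕ := fun r => (f (r + 1)).1 with hNdef
  set Rr : ℕ → Set ℕ := fun r => (f (r + 1)).2.1 with hRrdef
  have hjlt : ∀ r, (pos r).2 < N r := fun r => (hfs r).2.1
  have hNlt : ∀ r, ∀ m ∈ Rr r, N r < m := fun r => (hfs r).2.2.2.1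
  have hkey : ∀ r, ∀ c ∈ A ×ˢ Finset.range ((pos r).2 + 1), ∀ s : Finset ℕ, ↑s ⊆ Rr r →
      s.card = c.1.length →
      (∃ f ∈ 𝓕, HasPatternOn x f c.2 s c.1) →
      ∃ g ∈ 𝓕, HasPatternOn x g c.2 s c.1 ∧ |g (x (pos r).1 (N r))| < δ :=
    fun r => (hfs r).2.2.2.2
  have hsub : ∀ r, Rr (r + 1) ⊆ Rr r := fun r => (hfs (r + 1)).2.2.1
  have hmem : ∀ r, N (r + 1) ∈ Rr r := fun r => (hfs (r + 1)).1
  have hmono : ∀ k l, k ≤ l → Rr l ⊆ Rr k := by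
    intro k l hkl
    induction l, hkl using Nat.le_induction with
    | base => exact subset_rfl
    | succ l hkl ihl => exact (hsub l).trans ihl
  have hNmemR : ∀ r r', r < r' → N r' ∈ Rr r := by
    intro r r' hrr'
    obtain ⟨d, rfl⟩ : ∃ d, r' = (r + d) + 1 := ⟨r' - r - 1, by omega⟩
    exact hmono r (r + d) (by omega) (hmem (r + d))
  have hNmono : ∀ r r', r < r' → N r < N r' :=
    fun r r' h => hNlt r (N r') (hNmemR r r' h)
  -- the subarray
  set h' : ℕ → ℕ → ℕ := fun i j => N (rank (i, j)) with hh'def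
  refine ⟨fun i j => x i (h' i j), ⟨h', ?_, ?_, fun _ _ _ => rfl⟩, ?_⟩
  · intro i j hij
    have h := hjlt (rank (i, j))
    rw [pos_rank hij] at h
    show i ≤ N (rank (i, j))
    omega
  · intro i j i' j' hij hij' hrl
    exact Or.inl (hNmono _ _ (rank_lt_rank hij hij' hrl))
  intro a ha k₀ F hFk hcard i₀ j₀ h1 h2 h3 hex
  set r₀ : ℕ := rank (i₀, j₀) with hr₀def
  have hpos₀ : pos r₀ = (i₀, j₀) := pos_rank h1
  set g : ℕ → ℕ := fun m => h' k₀ m with hgdef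
  have hgm : ∀ m ∈ F, ∀ m' ∈ F, m < m' → g m < g m' := by
    intro m hm m' hm' hmm'
    exact hNmono _ _ (rank_lt_rank (hFk m hm) (hFk m' hm') (Or.inl hmm'))
  set s : Finset ℕ := F.image g with hsdef
  have hginj : Set.InjOn g F := by
    intro m hm m' hm' heq
    by_contra hne
    rcases lt_or_gt_of_ne hne with h | h
    · exact absurd heq (hgm m hm m' hm' h).ne
    · exact absurd heq.symm (hgm m' hm' m hm h).ne
  have hscard : s.card = a.length := by
    rw [hsdef, Finset.card_image_of_injOn hginj, hcard]
  have hssub : ↑s ⊆ Rr r₀ := by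
    intro z hz
    obtain ⟨m, hm, rfl⟩ := Finset.mem_image.mp hz
    exact hNmemR r₀ (rank (k₀, m)) (rank_lt_rank h1 (hFk m hm) (h3 m hm))
  have hbridge : ∀ fo : X →L[ℝ] ℝ,
      (HasPatternOn (fun i j => x i (h' i j)) fo k₀ F a ↔ HasPatternOn x fo k₀ s a) := by
    intro fo
    unfold HasPatternOn
    rw [hsdef, sort_image F g hgm, List.map_map]
    rfl
  have hctx : (a, k₀) ∈ A ×ˢ Finset.range ((pos r₀).2 + 1) := by
    rw [Finset.mem_product, hpos₀]
    exact ⟨ha, Finset.mem_range.mpr (by omega)⟩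
  obtain ⟨fw, hfw𝓕, hfwpat⟩ := hex
  obtain ⟨gw, hgw𝓕, hgwpat, hgwsmall⟩ := hkey r₀ (a, k₀) hctx s hssub hscard
    ⟨fw, hfw𝓕, (hbridge fw).mp hfwpat⟩
  refine ⟨gw, hgw𝓕, (hbridge gw).mpr hgwpat, ?_⟩
  have : x (pos r₀).1 (N r₀) = x i₀ (h' i₀ j₀) := by rw [hpos₀]
  rwa [this] at hgwsmall


end
end

section
/- Let X be a Banach space, let (x_n) be a seminormalized basic sequence in X having Property P2, and let (z_n) be a seminormalized basic sequence (not necessarily in X). Assume that (x_n) has a spreading model (x̃_n) such that (x̃_n) << (z_n). Then for every sequence (δ_n)_{n=2}^∞ of positive reals there exist δ₁ > 0, an increasing sequence M₁ < M₂ < ⋯ of positive integers, and a subsequence (x_{n_i}) of (x_i) such that for all finitely supported scalars (a_i): ‖∑_i a_i x_{n_i}‖ ≤ sup_{n∈ℕ} sup{ δ_n ‖∑_{i∈F} a_i z_i‖ : F ⊆ ℕ finite, n ≤ min F, |F| ≤ M_n }. -/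
open Filter

noncomputable section

lemma my_extend {m : ℕ} (s : Fin m → ℕ) (hs : StrictMono s) (B : ℕ) (hB : ∀ j, s j ≤ B) :
    ∃ k : ℕ → ℕ, StrictMono k ∧ ∀ (j : ℕ) (h : j < m), k j = s ⟨j, h⟩ := by
  refine ⟨fun j => if h : j < m then s ⟨j, h⟩ else B + 1 + j, ?_, fun j h => dif_pos h⟩
  intro i j hij
  dsimp only
  by_cases hi : i < m <;> by_cases hj : j < m
  · rw [dif_pos hi, dif_pos hj]; exact hs (by exact hij)
  · rw [dif_pos hi, dif_neg hj]; exact lt_of_le_of_lt (hB _) (by omega)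
  · omega
  · rw [dif_neg hi, dif_neg hj]; omega

lemma my_sum_emb {V : Type*} [AddCommMonoid V] (F : Finset ℕ) (g : ℕ → V) :
    ∑ j ∈ Finset.range F.card, (if h : j < F.card then g (F.orderEmbOfFin rfl ⟨j, h⟩) else 0)
      = ∑ i ∈ F, g i := by
  rw [← Fin.sum_univ_eq_sum_range]
  have h1 : ∀ j : Fin F.card,
      (if h : (j : ℕ) < F.card then g (F.orderEmbOfFin rfl ⟨j, h⟩) else 0)
        = g (F.orderEmbOfFin rfl j) := by
    intro j; rw [dif_pos j.2]
  rw [Finset.sum_congr rfl fun j _ => h1 j]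
  rw [← Finset.sum_attach F g]
  refine Fintype.sum_equiv (F.orderIsoOfFin rfl).toEquiv _ _ (fun j => ?_)
  rw [← Finset.coe_orderIsoOfFin_apply]; rfl

lemma spread_compare {X W : Type*} [NormedAddCommGroup X] [NormedSpace ℝ X]
    [NormedAddCommGroup W] [NormedSpace ℝ W]
    (x : ℕ → X) (xt : ℕ → W) (ε : ℕ → ℝ) (hanti : Antitone ε)
    (hkey : ∀ (n : ℕ) (a : ℕ → ℝ), (∀ i < n, |a i| ≤ 1) →
      ∀ k : ℕ → ℕ, StrictMono k → n ≤ k 0 →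
        |‖∑ i ∈ Finset.range n, a i • x (k i)‖ - ‖∑ i ∈ Finset.range n, a i • xt i‖| < ε n)
    (φ : ℕ → ℕ) (hφ : Monotone φ) (F : Finset ℕ) (hne : F.Nonempty)
    (hcard : F.card ≤ φ (F.min' hne))
    (a : ℕ → ℝ) (ρ : ℝ) (hρ : 0 < ρ) (ha : ∀ i ∈ F, |a i| ≤ ρ)
    (hφs : StrictMono φ) :
    |‖∑ i ∈ F, a i • x (φ i)‖ - ‖∑ i ∈ F, a i • xt i‖| ≤ 3 * ε 0 * ρ := by
  classical
  set m := F.card with hm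
  have hm0 : 0 < m := Finset.card_pos.mpr hne
  set e : Fin m ↪o ℕ := F.orderEmbOfFin rfl with he
  have hemem : ∀ j, e j ∈ F := fun j => F.orderEmbOfFin_mem rfl j
  set n' : ℕ := F.max' hne + 1 with hn'
  have hFn' : ∀ i ∈ F, i < n' := fun i hi => Nat.lt_succ_of_le (F.le_max' i hi)
  have hmn' : m ≤ n' := by
    have : F ⊆ Finset.range n' := fun i hi => Finset.mem_range.mpr (hFn' i hi)
    simpa [hm] using (Finset.card_le_card this).trans_eq (Finset.card_range n')
  -- the compressed coefficients
  set b : ℕ → ℝ := fun j => if h : j < m then a (e ⟨j, h⟩) / ρ else 0 with hb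
  have hb1 : ∀ j < m, |b j| ≤ 1 := by
    intro j hj
    rw [hb]; dsimp only; rw [dif_pos hj, abs_div, abs_of_pos hρ]
    exact div_le_one_of_le₀ (ha _ (hemem _)) hρ.le
  have hb1' : ∀ j, |b j| ≤ 1 := by
    intro j
    by_cases hj : j < m
    · exact hb1 j hj
    · rw [hb]; dsimp only; rw [dif_neg hj]; simp
  -- step A
  obtain ⟨kA, hkA, hkAeq⟩ := my_extend (fun j : Fin m => φ (e j))
    (fun i j hij => hφs (e.strictMono hij)) (φ (F.max' hne))
    (fun j => hφ (F.le_max' _ (hemem j)))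
  have hkA0 : m ≤ kA 0 := by
    rw [hkAeq 0 hm0]
    calc m ≤ φ (F.min' hne) := hcard
    _ ≤ φ (e ⟨0, hm0⟩) := hφ (F.min'_le _ (hemem _))
  have hA := hkey m b hb1 kA hkA hkA0
  -- step B
  obtain ⟨kB, hkB, hkBeq⟩ := my_extend (fun j : Fin m => n' + e j)
    (fun i j hij => by dsimp only; exact Nat.add_lt_add_left (e.strictMono hij) n')
    (n' + F.max' hne)
    (fun j => by exact Nat.add_le_add_left (F.le_max' _ (hemem j)) n')
  have hkB0 : m ≤ kB 0 := by
    rw [hkBeq 0 hm0]; exact hmn'.trans (Nat.le_add_right _ _)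
  have hB := hkey m b hb1 kB hkB hkB0
  -- step C
  set aC : ℕ → ℝ := fun i => if i ∈ F then a i / ρ else 0 with haC
  have hC1 : ∀ i < n', |aC i| ≤ 1 := by
    intro i _
    rw [haC]; dsimp only
    by_cases hi : i ∈ F
    · rw [if_pos hi, abs_div, abs_of_pos hρ]; exact div_le_one_of_le₀ (ha _ hi) hρ.le
    · rw [if_neg hi]; simp
  have hC := hkey n' aC hC1 (fun i => n' + i)
    (fun i j hij => by dsimp only; exact Nat.add_lt_add_left hij n') (by simp)
  -- identifications
  have sumA : ∑ j ∈ Finset.range m, b j • x (kA j) = ρ⁻¹ • ∑ i ∈ F, a i • x (φ i) := by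
    have h1 : ∀ j ∈ Finset.range m, b j • x (kA j)
        = (if h : j < m then (a (e ⟨j, h⟩) / ρ) • x (φ (e ⟨j, h⟩)) else 0) := by
      intro j hj
      have hj' := Finset.mem_range.mp hj
      rw [hb]; dsimp only; rw [dif_pos hj', dif_pos hj', hkAeq j hj']
    rw [Finset.sum_congr rfl h1, my_sum_emb F (fun i => (a i / ρ) • x (φ i)),
      Finset.smul_sum]
    exact Finset.sum_congr rfl fun i _ => by rw [div_eq_inv_mul, mul_smul]
  have sumBC : ∑ j ∈ Finset.range m, b j • x (kB j)
      = ∑ i ∈ Finset.range n', aC i • x (n' + i) := by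
    have h1 : ∀ j ∈ Finset.range m, b j • x (kB j)
        = (if h : j < m then (a (e ⟨j, h⟩) / ρ) • x (n' + e ⟨j, h⟩) else 0) := by
      intro j hj
      have hj' := Finset.mem_range.mp hj
      rw [hb]; dsimp only; rw [dif_pos hj', dif_pos hj', hkBeq j hj']
    rw [Finset.sum_congr rfl h1, my_sum_emb F (fun i => (a i / ρ) • x (n' + i))]
    have h2 : ∀ i ∈ Finset.range n', aC i • x (n' + i)
        = if i ∈ F then (a i / ρ) • x (n' + i) else 0 := by
      intro i _
      rw [haC]; dsimp only
      by_cases hi : i ∈ F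
      · rw [if_pos hi, if_pos hi]
      · rw [if_neg hi, if_neg hi, zero_smul]
    rw [Finset.sum_congr rfl h2, Finset.sum_ite_mem,
      Finset.inter_eq_right.mpr (fun i hi => Finset.mem_range.mpr (hFn' i hi))]
  have sumBxt : ∑ j ∈ Finset.range m, b j • xt j
      = ∑ j ∈ Finset.range m, b j • xt j := rfl
  have sumC : ∑ i ∈ Finset.range n', aC i • xt i = ρ⁻¹ • ∑ i ∈ F, a i • xt i := by
    have h2 : ∀ i ∈ Finset.range n', aC i • xt i
        = if i ∈ F then (a i / ρ) • xt i else 0 := by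
      intro i _
      rw [haC]; dsimp only
      by_cases hi : i ∈ F
      · rw [if_pos hi, if_pos hi]
      · rw [if_neg hi, if_neg hi, zero_smul]
    rw [Finset.sum_congr rfl h2, Finset.sum_ite_mem,
      Finset.inter_eq_right.mpr (fun i hi => Finset.mem_range.mpr (hFn' i hi)),
      Finset.smul_sum]
    exact Finset.sum_congr rfl fun i _ => by rw [div_eq_inv_mul, mul_smul]
  -- combine
  rw [sumA] at hA
  rw [sumBC] at hB
  rw [sumC] at hC
  have hεm : ε m ≤ ε 0 := hanti (Nat.zero_le m)
  have hεn' : ε n' ≤ ε 0 := hanti (Nat.zero_le n')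
  have habs : |‖ρ⁻¹ • ∑ i ∈ F, a i • x (φ i)‖ - ‖ρ⁻¹ • ∑ i ∈ F, a i • xt i‖| ≤ 3 * ε 0 := by
    have t1 := hA; have t2 := hB; have t3 := hC
    have : |‖ρ⁻¹ • ∑ i ∈ F, a i • x (φ i)‖ - ‖ρ⁻¹ • ∑ i ∈ F, a i • xt i‖|
        ≤ |‖ρ⁻¹ • ∑ i ∈ F, a i • x (φ i)‖ - ‖∑ j ∈ Finset.range m, b j • xt j‖|
          + |‖∑ j ∈ Finset.range m, b j • xt j‖ - ‖∑ i ∈ Finset.range n', aC i • x (n' + i)‖|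
          + |‖∑ i ∈ Finset.range n', aC i • x (n' + i)‖ - ‖ρ⁻¹ • ∑ i ∈ F, a i • xt i‖| := by
      have := abs_sub_le (‖ρ⁻¹ • ∑ i ∈ F, a i • x (φ i)‖)
        (‖∑ i ∈ Finset.range n', aC i • x (n' + i)‖) (‖ρ⁻¹ • ∑ i ∈ F, a i • xt i‖)
      have h2 := abs_sub_le (‖ρ⁻¹ • ∑ i ∈ F, a i • x (φ i)‖)
        (‖∑ j ∈ Finset.range m, b j • xt j‖) (‖∑ i ∈ Finset.range n', aC i • x (n' + i)‖)
      linarith [abs_nonneg (‖ρ⁻¹ • ∑ i ∈ F, a i • x (φ i)‖ - ‖∑ j ∈ Finset.range m, b j • xt j‖)]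
    refine this.trans ?_
    rw [abs_sub_comm] at t2
    have e1 : |‖ρ⁻¹ • ∑ i ∈ F, a i • x (φ i)‖ - ‖∑ j ∈ Finset.range m, b j • xt j‖| < ε m := t1
    have e2 : |‖∑ j ∈ Finset.range m, b j • xt j‖ - ‖∑ i ∈ Finset.range n', aC i • x (n' + i)‖| < ε m := t2
    have e3 : |‖∑ i ∈ Finset.range n', aC i • x (n' + i)‖ - ‖ρ⁻¹ • ∑ i ∈ F, a i • xt i‖| < ε n' := t3
    linarith
  rw [norm_smul, norm_smul, Real.norm_eq_abs, abs_of_pos (inv_pos.mpr hρ)] at habs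
  rw [← mul_sub, abs_mul, abs_of_pos (inv_pos.mpr hρ)] at habs
  calc |‖∑ i ∈ F, a i • x (φ i)‖ - ‖∑ i ∈ F, a i • xt i‖|
      = ρ * (ρ⁻¹ * |‖∑ i ∈ F, a i • x (φ i)‖ - ‖∑ i ∈ F, a i • xt i‖|) := by
        rw [← mul_assoc, mul_inv_cancel₀ hρ.ne', one_mul]
    _ ≤ ρ * (3 * ε 0) := mul_le_mul_of_nonneg_left habs hρ.le
    _ = 3 * ε 0 * ρ := by ring

lemma sum_range_ite_div {V : Type*} [AddCommMonoid V] [Module ℝ V]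
    (F : Finset ℕ) (K : ℕ) (hFK : ∀ i ∈ F, i < K) (a : ℕ → ℝ) (t : ℝ) (w : ℕ → V) :
    ∑ i ∈ Finset.range K, (if i ∈ F then a i / t else 0) • w i
      = t⁻¹ • ∑ i ∈ F, a i • w i := by
  have h2 : ∀ i ∈ Finset.range K, (if i ∈ F then a i / t else 0) • w i
      = if i ∈ F then (a i / t) • w i else 0 := by
    intro i _
    by_cases hi : i ∈ F
    · rw [if_pos hi, if_pos hi]
    · rw [if_neg hi, if_neg hi, zero_smul]
  rw [Finset.sum_congr rfl h2, Finset.sum_ite_mem,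
    Finset.inter_eq_right.mpr (fun i hi => Finset.mem_range.mpr (hFK i hi)),
    Finset.smul_sum]
  exact Finset.sum_congr rfl fun i _ => by rw [div_eq_inv_mul, mul_smul]

lemma sc_bound {Z W : Type*} [NormedAddCommGroup Z] [NormedSpace ℝ Z]
    [NormedAddCommGroup W] [NormedSpace ℝ W]
    (z : ℕ → Z) (xt : ℕ → W) (δ' ε : ℝ) (hδ' : 0 < δ') (hε : 0 < ε)
    (hprop : ∀ (K : ℕ) (b : ℕ → ℝ), (∀ i, |b i| ≤ ε) →
      ‖∑ i ∈ Finset.range K, b i • z i‖ ≤ 1 → ‖∑ i ∈ Finset.range K, b i • xt i‖ ≤ δ')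
    (F : Finset ℕ) (a : ℕ → ℝ) (ρ : ℝ) (hρ : 0 < ρ) (ha : ∀ i ∈ F, |a i| ≤ ρ) :
    ‖∑ i ∈ F, a i • xt i‖ ≤ δ' * ‖∑ i ∈ F, a i • z i‖ + δ' * (ρ / ε) := by
  classical
  set t : ℝ := max (‖∑ i ∈ F, a i • z i‖) (ρ / ε) with ht
  have htpos : 0 < t := lt_max_of_lt_right (div_pos hρ hε)
  set K : ℕ := if h : F.Nonempty then F.max' h + 1 else 0 with hK
  have hFK : ∀ i ∈ F, i < K := by
    intro i hi
    rw [hK, dif_pos ⟨i, hi⟩]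
    exact Nat.lt_succ_of_le (F.le_max' i hi)
  set b : ℕ → ℝ := fun i => if i ∈ F then a i / t else 0 with hb
  have keyz : ∑ i ∈ Finset.range K, b i • z i = t⁻¹ • ∑ i ∈ F, a i • z i :=
    sum_range_ite_div F K hFK a t z
  have keyxt : ∑ i ∈ Finset.range K, b i • xt i = t⁻¹ • ∑ i ∈ F, a i • xt i :=
    sum_range_ite_div F K hFK a t xt
  have hbε : ∀ i, |b i| ≤ ε := by
    intro i
    rw [hb]; dsimp only
    by_cases hi : i ∈ F
    · rw [if_pos hi, abs_div, abs_of_pos htpos, div_le_iff₀ htpos]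
      calc |a i| ≤ ρ := ha i hi
        _ = (ρ / ε) * ε := by field_simp
        _ ≤ ε * t := by rw [mul_comm]; exact mul_le_mul_of_nonneg_left (le_max_right _ _) hε.le
    · rw [if_neg hi]; simpa using hε.le
  have hz1 : ‖∑ i ∈ Finset.range K, b i • z i‖ ≤ 1 := by
    rw [keyz, norm_smul, Real.norm_eq_abs, abs_of_pos (inv_pos.mpr htpos),
      inv_mul_le_iff₀ htpos, mul_one]
    exact le_max_left _ _
  have := hprop K b hbε hz1
  rw [keyxt, norm_smul, Real.norm_eq_abs, abs_of_pos (inv_pos.mpr htpos)] at this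
  have h3 : ‖∑ i ∈ F, a i • xt i‖ ≤ δ' * t := by
    calc ‖∑ i ∈ F, a i • xt i‖ = t * (t⁻¹ * ‖∑ i ∈ F, a i • xt i‖) := by
          rw [← mul_assoc, mul_inv_cancel₀ htpos.ne', one_mul]
      _ ≤ t * δ' := mul_le_mul_of_nonneg_left this htpos.le
      _ = δ' * t := mul_comm _ _
  calc ‖∑ i ∈ F, a i • xt i‖ ≤ δ' * t := h3
    _ ≤ δ' * (‖∑ i ∈ F, a i • z i‖ + ρ / ε) := by
        refine mul_le_mul_of_nonneg_left ?_ hδ'.le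
        exact max_le (le_add_of_nonneg_right (le_of_lt (div_pos hρ hε)))
          (le_add_of_nonneg_left (norm_nonneg _))
    _ = δ' * ‖∑ i ∈ F, a i • z i‖ + δ' * (ρ / ε) := by ring

lemma p2_transfer {X : Type*} [NormedAddCommGroup X] [NormedSpace ℝ X]
    (x : ℕ → X) (φ : ℕ → ℕ) (hφ : StrictMono φ) (ρ : ℝ) (M : ℕ)
    (hM : ∀ (K : ℕ) (b : ℕ → ℝ), ‖∑ i ∈ Finset.range K, b i • x i‖ = 1 →
      ((Finset.range K).filter fun i => ρ ≤ |b i|).card ≤ M)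
    (N : ℕ) (a : ℕ → ℝ)
    (hv : 0 < ‖∑ i ∈ Finset.range N, a i • x (φ i)‖) :
    ((Finset.range N).filter
      fun i => ρ * ‖∑ i ∈ Finset.range N, a i • x (φ i)‖ ≤ |a i|).card ≤ M := by
  classical
  set v : ℝ := ‖∑ i ∈ Finset.range N, a i • x (φ i)‖ with hvdef
  set b : ℕ → ℝ := fun j => if j ∈ (Finset.range N).image φ then a (Function.invFun φ j) / v else 0
    with hb
  have hinj := hφ.injective
  have hleft : ∀ i, Function.invFun φ (φ i) = i := Function.leftInverse_invFun hinj
  set K : ℕ := φ N with hK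
  have himsub : (Finset.range N).image φ ⊆ Finset.range K := by
    intro j hj
    obtain ⟨i, hi, rfl⟩ := Finset.mem_image.mp hj
    exact Finset.mem_range.mpr (hφ (Finset.mem_range.mp hi))
  have hbφ : ∀ i ∈ Finset.range N, b (φ i) = a i / v := by
    intro i hi
    rw [hb]; dsimp only
    rw [if_pos (Finset.mem_image_of_mem φ hi), hleft]
  have hsum : ∑ j ∈ Finset.range K, b j • x j = v⁻¹ • ∑ i ∈ Finset.range N, a i • x (φ i) := by
    rw [← Finset.sum_subset himsub (by
      intro j _ hj
      rw [hb]; dsimp only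
      rw [if_neg hj, zero_smul])]
    rw [Finset.sum_image (fun i _ j _ h => hinj h)]
    rw [Finset.smul_sum]
    refine Finset.sum_congr rfl fun i hi => ?_
    rw [hbφ i hi, div_eq_inv_mul, mul_smul]
  have hnorm : ‖∑ j ∈ Finset.range K, b j • x j‖ = 1 := by
    rw [hsum, norm_smul, Real.norm_eq_abs, abs_of_pos (inv_pos.mpr hv), ← hvdef,
      inv_mul_cancel₀ hv.ne']
  have hcard := hM K b hnorm
  refine le_trans ?_ hcard
  refine Finset.card_le_card_of_injOn φ ?_ ?_
  · intro i hi
    obtain ⟨hiN, hia⟩ := Finset.mem_filter.mp hi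
    refine Finset.mem_filter.mpr ⟨himsub (Finset.mem_image_of_mem φ hiN), ?_⟩
    rw [hbφ i hiN, abs_div, abs_of_pos hv, le_div_iff₀ hv]
    exact hia
  · exact fun i _ j _ h => hinj h
lemma my_geom (T c : ℕ) : ∑ n ∈ Finset.range T, ((1:ℝ)/2)^(n + c) ≤ 2 * (1/2)^c := by
  have h1 : ∀ n : ℕ, ((1:ℝ)/2)^(n+c) = (1/2)^n * (1/2)^c := fun n => pow_add _ _ _
  rw [Finset.sum_congr rfl fun n _ => h1 n, ← Finset.sum_mul]
  have h2 : ∑ n ∈ Finset.range T, ((1:ℝ)/2)^n ≤ 2 := by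
    have := sum_geometric_two_le T
    simpa [one_div] using this
  have h3 : (0:ℝ) ≤ (1/2)^c := by positivity
  exact mul_le_mul_of_nonneg_right h2 h3

set_option maxHeartbeats 2000000 in
/-- Lemma 3.2. -/
theorem statement_11
    {X Z W : Type*} [NormedAddCommGroup X] [NormedSpace ℝ X] [CompleteSpace X]
    [NormedAddCommGroup Z] [NormedSpace ℝ Z]
    [NormedAddCommGroup W] [NormedSpace ℝ W]
    (x : ℕ → X) (hxsn : IsSeminormalized x) (hxb : IsBasicSeq x) (hP2 : PropertyP2 x)
    (z : ℕ → Z) (hzsn : IsSeminormalized z) (hzb : IsBasicSeq z)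
    (xt : ℕ → W) (hsm : IsSpreadingModelOf xt x) (hsc : SCDominates z xt)
    -- the given sequence (δ_n)_{n ≥ 1} of positive reals (δ₀ will be produced below)
    (δ : ℕ → ℝ) (hδ : ∀ n, 1 ≤ n → 0 < δ n) :
    ∃ δ₀ : ℝ, 0 < δ₀ ∧
    ∃ M : ℕ → ℕ, StrictMono M ∧ (∀ n, 0 < M n) ∧
    ∃ φ : ℕ → ℕ, StrictMono φ ∧
      ∀ (N : ℕ) (a : ℕ → ℝ), (∀ i, N ≤ i → a i = 0) →
        ‖∑ i ∈ Finset.range N, a i • x (φ i)‖ ≤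
          sSup {r : ℝ | ∃ (n : ℕ) (F : Finset ℕ), (∀ m ∈ F, n ≤ m) ∧ F.card ≤ M n ∧
            r = (Function.update δ 0 δ₀) n * ‖∑ i ∈ F, a i • z i‖} := by
  classical
  obtain ⟨cx, Cx0, hcx, hxbnd⟩ := hxsn
  obtain ⟨cz, Cz, hcz, hzbnd⟩ := hzsn
  obtain ⟨εsm, hεsm_pos, hεsm_anti, _, hkey⟩ := hsm
  have hE0 : 0 < εsm 0 := hεsm_pos 0
  obtain ⟨CX, hCXeq⟩ : ∃ c : ℝ, c = max Cx0 1 := ⟨_, rfl⟩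
  have hCX1 : (1:ℝ) ≤ CX := hCXeq ▸ le_max_right _ _
  have hCX0 : (0:ℝ) < CX := lt_of_lt_of_le one_pos hCX1
  have hxCX : ∀ n, ‖x n‖ ≤ CX := fun n => le_trans (hxbnd n).2 (hCXeq ▸ le_max_left _ _)
  -- δ' and εf
  obtain ⟨δ', hδ'eq⟩ : ∃ f : ℕ → ℝ, ∀ n, f n = δ n * ((1:ℝ)/2)^(n+2) := ⟨_, fun _ => rfl⟩
  have hδ'pos : ∀ n, 1 ≤ n → 0 < δ' n := fun n hn => by
    rw [hδ'eq]; exact mul_pos (hδ n hn) (by positivity)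
  obtain ⟨εf, hεfpos, hεfprop⟩ : ∃ f : ℕ → ℝ, (∀ n, 0 < f n) ∧ ∀ n, 1 ≤ n →
      ∀ (K : ℕ) (b : ℕ → ℝ), (∀ i, |b i| ≤ f n) →
        ‖∑ i ∈ Finset.range K, b i • z i‖ ≤ 1 → ‖∑ i ∈ Finset.range K, b i • xt i‖ ≤ δ' n := by
    refine ⟨fun n => if h : 0 < δ' n then (hsc (δ' n) h).choose else 1, fun n => ?_,
      fun n hn K b hb h1 => ?_⟩
    · dsimp only; split_ifs with h
      exacts [(hsc _ h).choose_spec.1, one_pos]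
    · have hpos := hδ'pos n hn
      refine (hsc (δ' n) hpos).choose_spec.2 K b (fun i => ?_) h1
      have h2 : |b i| ≤ if h : 0 < δ' n then (hsc (δ' n) h).choose else 1 := hb i
      rwa [dif_pos hpos] at h2
  -- ρ
  obtain ⟨cand, hcandeq⟩ : ∃ f : ℕ → ℝ,
      ∀ n, f n = ((1:ℝ)/2)^(n+5) / ((n:ℝ) * CX + 3 * εsm 0 + δ' n / εf n + 1) := ⟨_, fun _ => rfl⟩
  have hden : ∀ n : ℕ, 1 ≤ n → 0 < (n:ℝ) * CX + 3 * εsm 0 + δ' n / εf n + 1 := by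
    intro n hn
    have h1 : (0:ℝ) ≤ (n:ℝ) * CX := by positivity
    have h2 : 0 < δ' n / εf n := div_pos (hδ'pos n hn) (hεfpos n)
    linarith
  have hcandpos : ∀ n, 1 ≤ n → 0 < cand n := by
    intro n hn; rw [hcandeq]
    exact div_pos (by positivity) (hden n hn)
  obtain ⟨ρ, hρ0, hρS⟩ : ∃ ρ : ℕ → ℝ, ρ 0 = 1 ∧ ∀ n, ρ (n+1) = min (ρ n / 2) (cand (n+1)) :=
    ⟨fun n => Nat.rec (motive := fun _ => ℝ) 1 (fun n r => min (r / 2) (cand (n+1))) n,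
      rfl, fun n => rfl⟩
  have hρpos : ∀ n, 0 < ρ n := by
    intro n; induction n with
    | zero => rw [hρ0]; exact one_pos
    | succ n ih => rw [hρS]; exact lt_min (by linarith) (hcandpos (n+1) (by omega))
  have hρhalf : ∀ n, ρ (n+1) ≤ ρ n / 2 := fun n => by rw [hρS]; exact min_le_left _ _
  have hρanti : Antitone ρ := antitone_nat_of_succ_le
    (fun n => le_trans (hρhalf n) (by linarith [hρpos n]))
  have hρcand : ∀ n, ρ (n+1) ≤ cand (n+1) := fun n => by rw [hρS]; exact min_le_right _ _
  have hρsmall : ∀ n, ρ n ≤ ((1:ℝ)/2)^n := by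
    intro n; induction n with
    | zero => rw [hρ0]; norm_num
    | succ n ih =>
      calc ρ (n+1) ≤ ρ n / 2 := hρhalf n
        _ ≤ (1/2)^n / 2 := by linarith
        _ = (1/2)^(n+1) := by rw [pow_succ]; ring
  -- p, msq, φ
  obtain ⟨p, hpprop⟩ : ∃ p : ℕ → ℕ, ∀ n (K : ℕ) (b : ℕ → ℝ),
      ‖∑ i ∈ Finset.range K, b i • x i‖ = 1 →
      ((Finset.range K).filter fun i => ρ n ≤ |b i|).card ≤ p n :=
    ⟨fun n => (hP2 (ρ n) (hρpos n)).choose, fun n => (hP2 (ρ n) (hρpos n)).choose_spec⟩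
  obtain ⟨msq, hmsqeq⟩ : ∃ f : ℕ → ℕ,
      ∀ n, f n = (∑ k ∈ Finset.range (n+1), p k) + n + 1 := ⟨_, fun _ => rfl⟩
  have hmsqmono : StrictMono msq := strictMono_nat_of_lt_succ (by
    intro n
    rw [hmsqeq, hmsqeq]
    have h1 : ∑ k ∈ Finset.range (n+1), p k ≤ ∑ k ∈ Finset.range (n+1+1), p k :=
      Finset.sum_le_sum_of_subset (Finset.range_subset_range.mpr (by omega))
    omega)
  have hmsqge : ∀ n, p n ≤ msq n := by
    intro n; rw [hmsqeq]
    have : p n ≤ ∑ k ∈ Finset.range (n+1), p k :=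
      Finset.single_le_sum (fun k _ => Nat.zero_le _) (Finset.self_mem_range_succ n)
    omega
  have hmsqpos : ∀ n, 0 < msq n := fun n => by rw [hmsqeq]; omega
  obtain ⟨φ, hφeq⟩ : ∃ f : ℕ → ℕ, ∀ i, f i = msq (i+1) + i := ⟨_, fun _ => rfl⟩
  have hφs : StrictMono φ := strictMono_nat_of_lt_succ (by
    intro i
    rw [hφeq, hφeq]
    have := hmsqmono (show i+1 < i+1+1 by omega)
    omega)
  have hφge : ∀ i, msq (i+1) ≤ φ i := fun i => by rw [hφeq]; omega
  -- the chosen δ₀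
  obtain ⟨δ₀, hδ₀eq⟩ : ∃ d : ℝ, d = 2 * (msq 1 : ℝ) * CX / cz := ⟨_, rfl⟩
  have hδ₀pos : 0 < δ₀ := by
    rw [hδ₀eq]
    have h1 : (0:ℝ) < (msq 1 : ℝ) := by exact_mod_cast hmsqpos 1
    exact div_pos (by positivity) hcz
  refine ⟨δ₀, hδ₀pos, fun n => msq (n+1),
    fun i j hij => hmsqmono (by omega), fun n => hmsqpos (n+1), φ, hφs, ?_⟩
  intro N a haN
  set S : Set ℝ := {r : ℝ | ∃ (n : ℕ) (F : Finset ℕ), (∀ m ∈ F, n ≤ m) ∧ F.card ≤ msq (n+1) ∧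
    r = Function.update δ 0 δ₀ n * ‖∑ i ∈ F, a i • z i‖} with hSdef
  show ‖∑ i ∈ Finset.range N, a i • x (φ i)‖ ≤ sSup S
  have hw0 : Function.update δ 0 δ₀ 0 = δ₀ := Function.update_self 0 δ₀ δ
  have hwn : ∀ n, 1 ≤ n → Function.update δ 0 δ₀ n = δ n :=
    fun n hn => Function.update_of_ne (by omega) δ₀ δ
  have hwpos : ∀ n, 0 < Function.update δ 0 δ₀ n := by
    intro n
    rcases Nat.eq_zero_or_pos n with h | h
    · rw [h, hw0]; exact hδ₀pos
    · rw [hwn n h]; exact hδ n h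
  have hS0 : (0:ℝ) ∈ S := by
    refine ⟨0, ∅, by simp, by simp, by simp⟩
  have hSbdd : BddAbove S := by
    refine ⟨(∑ n ∈ Finset.range N, Function.update δ 0 δ₀ n) * (∑ i ∈ Finset.range N, ‖a i • z i‖), ?_⟩
    rintro r ⟨n, F, hFmin, _, rfl⟩
    have hsums_nonneg : (0:ℝ) ≤ ∑ i ∈ Finset.range N, ‖a i • z i‖ :=
      Finset.sum_nonneg fun i _ => norm_nonneg _
    have hw_nonneg : (0:ℝ) ≤ ∑ n ∈ Finset.range N, Function.update δ 0 δ₀ n :=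
      Finset.sum_nonneg fun k _ => (hwpos k).le
    by_cases hnN : N ≤ n
    · have hzero : ∑ i ∈ F, a i • z i = 0 := Finset.sum_eq_zero (fun i hi => by
        rw [haN i (le_trans hnN (hFmin i hi)), zero_smul])
      rw [hzero, norm_zero, mul_zero]
      exact mul_nonneg hw_nonneg hsums_nonneg
    · push_neg at hnN
      have h1 : Function.update δ 0 δ₀ n ≤ ∑ k ∈ Finset.range N, Function.update δ 0 δ₀ k :=
        Finset.single_le_sum (fun k _ => (hwpos k).le) (Finset.mem_range.mpr hnN)
      have h2 : ‖∑ i ∈ F, a i • z i‖ ≤ ∑ i ∈ Finset.range N, ‖a i • z i‖ := by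
        have hsub : ∑ i ∈ F, a i • z i = ∑ i ∈ F ∩ Finset.range N, a i • z i := by
          refine (Finset.sum_subset Finset.inter_subset_left (fun i hiF hi => ?_)).symm
          have hiN : ¬ i < N := fun h => hi (Finset.mem_inter.mpr ⟨hiF, Finset.mem_range.mpr h⟩)
          rw [haN i (not_lt.mp hiN), zero_smul]
        rw [hsub]
        calc ‖∑ i ∈ F ∩ Finset.range N, a i • z i‖
            ≤ ∑ i ∈ F ∩ Finset.range N, ‖a i • z i‖ := norm_sum_le _ _
          _ ≤ ∑ i ∈ Finset.range N, ‖a i • z i‖ :=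
              Finset.sum_le_sum_of_subset_of_nonneg Finset.inter_subset_right
                (fun i _ _ => norm_nonneg _)
      exact mul_le_mul h1 h2 (norm_nonneg _) hw_nonneg
  have hQ0 : 0 ≤ sSup S := le_csSup hSbdd hS0
  rcases eq_or_lt_of_le (norm_nonneg (∑ i ∈ Finset.range N, a i • x (φ i))) with h0 | hvpos
  · rw [← h0]; exact hQ0
  -- nonzero part of the support
  set v : ℝ := ‖∑ i ∈ Finset.range N, a i • x (φ i)‖ with hvdef
  set Kne : Finset ℕ := (Finset.range N).filter (fun i => a i ≠ 0) with hKne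
  have hKnene : Kne.Nonempty := by
    rw [Finset.filter_nonempty_iff]
    by_contra hempty
    push_neg at hempty
    have hzero : ∑ i ∈ Finset.range N, a i • x (φ i) = 0 :=
      Finset.sum_eq_zero (fun i hi => by rw [hempty i hi, zero_smul])
    rw [hvdef, hzero, norm_zero] at hvpos
    exact lt_irrefl _ hvpos
  have hμpos : 0 < Kne.inf' hKnene (fun i => |a i|) := by
    rw [Finset.lt_inf'_iff]
    intro i hi
    exact abs_pos.mpr (Finset.mem_filter.mp hi).2
  obtain ⟨T, hT⟩ := exists_pow_lt_of_lt_one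
    (div_pos hμpos hvpos) (show (1:ℝ)/2 < 1 by norm_num)
  have hTprop : ∀ i ∈ Kne, ρ (T+1) * v ≤ |a i| := by
    intro i hi
    have h1 : ρ (T+1) ≤ ((1:ℝ)/2)^(T+1) := hρsmall (T+1)
    have h2 : ((1:ℝ)/2)^(T+1) ≤ ((1:ℝ)/2)^T := by
      rw [pow_succ]
      have : (0:ℝ) ≤ (1/2:ℝ)^T := by positivity
      linarith
    have h4 : ((1:ℝ)/2)^T * v < Kne.inf' hKnene (fun i => |a i|) := (lt_div_iff₀ hvpos).mp hT
    have h5 : Kne.inf' hKnene (fun i => |a i|) ≤ |a i| := Finset.inf'_le _ hi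
    nlinarith [hvpos.le]
  -- level sets
  set J : ℕ → Finset ℕ := fun n => if n = 0 then Kne.filter (fun i => ρ 1 * v ≤ |a i|)
    else Kne.filter (fun i => ρ (n+1) * v ≤ |a i| ∧ |a i| < ρ n * v) with hJdef
  have hJlow : ∀ n, ∀ i ∈ J n, ρ (n+1) * v ≤ |a i| := by
    intro n i hi
    rw [hJdef] at hi; dsimp only at hi
    split_ifs at hi with h
    · subst h; exact (Finset.mem_filter.mp hi).2
    · exact (Finset.mem_filter.mp hi).2.1
  have hJup : ∀ n, 1 ≤ n → ∀ i ∈ J n, |a i| < ρ n * v := by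
    intro n hn i hi
    rw [hJdef] at hi; dsimp only at hi
    rw [if_neg (by omega)] at hi
    exact (Finset.mem_filter.mp hi).2.2
  have hJsub : ∀ n, J n ⊆ Kne := by
    intro n i hi
    rw [hJdef] at hi; dsimp only at hi
    split_ifs at hi
    exacts [(Finset.mem_filter.mp hi).1, (Finset.mem_filter.mp hi).1]
  have hdisj : (↑(Finset.range (T+1)) : Set ℕ).PairwiseDisjoint J := by
    have haux : ∀ n1 n2, n1 < n2 → ∀ i ∈ J n1, i ∉ J n2 := by
      intro n1 n2 h12 i hi1 hi2
      have hlow := hJlow n1 i hi1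
      have hup := hJup n2 (by omega) i hi2
      have hmono : ρ n2 ≤ ρ (n1+1) := hρanti (by omega)
      nlinarith [hvpos]
    intro n1 _ n2 _ hne
    rcases lt_or_gt_of_ne hne with h | h
    · exact Finset.disjoint_left.mpr (fun i hi1 hi2 => haux n1 n2 h i hi1 hi2)
    · exact Finset.disjoint_right.mpr (fun i hi2 hi1 => haux n2 n1 h i hi2 hi1)
  have hcover : Kne = (Finset.range (T+1)).biUnion J := by
    ext i
    constructor
    · intro hi
      rw [Finset.mem_biUnion]
      by_cases h0 : ρ 1 * v ≤ |a i|
      · exact ⟨0, Finset.mem_range.mpr (by omega), by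
          rw [hJdef]; dsimp only; rw [if_pos rfl]
          exact Finset.mem_filter.mpr ⟨hi, h0⟩⟩
      · have hex : ∃ n, ρ (n+1) * v ≤ |a i| := ⟨T, hTprop i hi⟩
        have hn₀ := Nat.find_spec hex
        have hn₀0 : Nat.find hex ≠ 0 := fun h => h0 (by rw [h] at hn₀; exact hn₀)
        have hn₀T : Nat.find hex ≤ T := Nat.find_min' hex (hTprop i hi)
        have hup : |a i| < ρ (Nat.find hex) * v := by
          have hmin := Nat.find_min hex (show Nat.find hex - 1 < Nat.find hex by omega)
          push_neg at hmin
          have heq : Nat.find hex - 1 + 1 = Nat.find hex := by omega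
          rwa [heq] at hmin
        exact ⟨Nat.find hex, Finset.mem_range.mpr (by omega), by
          rw [hJdef]; dsimp only; rw [if_neg hn₀0]
          exact Finset.mem_filter.mpr ⟨hi, hn₀, hup⟩⟩
    · intro hi
      obtain ⟨n, _, hin⟩ := Finset.mem_biUnion.mp hi
      exact hJsub n hin
  have hsplit : ∑ i ∈ Finset.range N, a i • x (φ i)
      = ∑ n ∈ Finset.range (T+1), ∑ i ∈ J n, a i • x (φ i) := by
    rw [← Finset.sum_biUnion hdisj, ← hcover, hKne]
    refine (Finset.sum_filter_of_ne fun i hi h => ?_).symm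
    intro hai
    exact h (by rw [hai, zero_smul])
  have hvle : v ≤ ∑ n ∈ Finset.range (T+1), ‖∑ i ∈ J n, a i • x (φ i)‖ := by
    rw [hvdef, hsplit]
    exact norm_sum_le _ _
  -- cardinality of levels
  have hJcard : ∀ n, (J n).card ≤ p (n+1) := by
    intro n
    have hsub : J n ⊆ (Finset.range N).filter
        (fun i => ρ (n+1) * ‖∑ i ∈ Finset.range N, a i • x (φ i)‖ ≤ |a i|) := by
      intro i hi
      refine Finset.mem_filter.mpr ⟨(Finset.mem_filter.mp (hJsub n hi)).1, ?_⟩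
      rw [← hvdef]
      exact hJlow n i hi
    refine (Finset.card_le_card hsub).trans ?_
    exact p2_transfer x φ hφs (ρ (n+1)) (p (n+1)) (hpprop (n+1)) N a hvpos
  -- level 0 bound
  have hlevel0 : ‖∑ i ∈ J 0, a i • x (φ i)‖ ≤ (1/2) * sSup S := by
    rcases Finset.eq_empty_or_nonempty (J 0) with h | hne0
    · rw [h]; simp; linarith
    obtain ⟨i₀, hi₀, hmax⟩ := Finset.exists_max_image (J 0) (fun i => |a i|) hne0
    have h1 : ‖∑ i ∈ J 0, a i • x (φ i)‖ ≤ ∑ i ∈ J 0, |a i| * CX := by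
      refine (norm_sum_le _ _).trans (Finset.sum_le_sum fun i _ => ?_)
      rw [norm_smul, Real.norm_eq_abs]
      exact mul_le_mul_of_nonneg_left (hxCX _) (abs_nonneg _)
    have h2 : ∑ i ∈ J 0, |a i| * CX ≤ ((J 0).card : ℝ) * (|a i₀| * CX) := by
      have := Finset.sum_le_card_nsmul (J 0) (fun i => |a i| * CX) (|a i₀| * CX)
        (fun i hi => mul_le_mul_of_nonneg_right (hmax i hi) hCX0.le)
      rwa [nsmul_eq_mul] at this
    have h3 : ((J 0).card : ℝ) ≤ (msq 1 : ℝ) := by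
      exact_mod_cast (hJcard 0).trans (hmsqge 1)
    have h4 : |a i₀| * cz ≤ ‖∑ i ∈ ({i₀} : Finset ℕ), a i • z i‖ := by
      rw [Finset.sum_singleton, norm_smul, Real.norm_eq_abs]
      exact mul_le_mul_of_nonneg_left (hzbnd i₀).1 (abs_nonneg _)
    have hrS : Function.update δ 0 δ₀ 0 * ‖∑ i ∈ ({i₀} : Finset ℕ), a i • z i‖ ∈ S := by
      refine ⟨0, {i₀}, by simp, ?_, rfl⟩
      rw [Finset.card_singleton]
      exact hmsqpos 1
    have h5 : Function.update δ 0 δ₀ 0 * ‖∑ i ∈ ({i₀} : Finset ℕ), a i • z i‖ ≤ sSup S :=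
      le_csSup hSbdd hrS
    rw [hw0] at h5
    have h6 : |a i₀| ≤ ‖∑ i ∈ ({i₀} : Finset ℕ), a i • z i‖ / cz := (le_div_iff₀ hcz).mpr h4
    have h7 : ((J 0).card : ℝ) * (|a i₀| * CX) ≤ (msq 1 : ℝ) * (|a i₀| * CX) :=
      mul_le_mul_of_nonneg_right h3 (by positivity)
    have h8 : (msq 1 : ℝ) * (|a i₀| * CX)
        ≤ (msq 1 : ℝ) * ((‖∑ i ∈ ({i₀} : Finset ℕ), a i • z i‖ / cz) * CX) := by
      refine mul_le_mul_of_nonneg_left ?_ (by positivity)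
      exact mul_le_mul_of_nonneg_right h6 hCX0.le
    have h9 : (msq 1 : ℝ) * ((‖∑ i ∈ ({i₀} : Finset ℕ), a i • z i‖ / cz) * CX)
        = (1/2) * (δ₀ * ‖∑ i ∈ ({i₀} : Finset ℕ), a i • z i‖) := by
      rw [hδ₀eq]; field_simp
    linarith
  -- level n ≥ 1 bound
  have hlevel : ∀ n, 1 ≤ n → ‖∑ i ∈ J n, a i • x (φ i)‖
      ≤ 3 * ((1:ℝ)/2)^(n+5) * v + ((1:ℝ)/2)^(n+2) * sSup S := by
    intro n hn
    have hρnv : 0 < ρ n * v := mul_pos (hρpos n) hvpos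
    have hpow : (0:ℝ) ≤ ((1:ℝ)/2)^(n+5) := by positivity
    have hcandn : ρ n ≤ cand n := by
      obtain ⟨m, rfl⟩ : ∃ m, n = m + 1 := ⟨n - 1, by omega⟩
      exact hρcand m
    have hρcb : ∀ c : ℝ, 0 ≤ c → c ≤ (n:ℝ) * CX + 3 * εsm 0 + δ' n / εf n + 1 →
        ρ n * c ≤ ((1:ℝ)/2)^(n+5) := by
      intro c hc0 hcle
      have h1 : ρ n * c ≤ cand n * c := mul_le_mul_of_nonneg_right hcandn hc0
      have h2 : cand n * c ≤ ((1:ℝ)/2)^(n+5) := by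
        rw [hcandeq, div_mul_eq_mul_div, div_le_iff₀ (hden n hn)]
        exact mul_le_mul_of_nonneg_left hcle hpow
      linarith
    have hdnn : (0:ℝ) ≤ δ' n / εf n := (div_pos (hδ'pos n hn) (hεfpos n)).le
    have hnCX : (0:ℝ) ≤ (n:ℝ) * CX := by positivity
    have hbA : ρ n * ((n:ℝ) * CX) ≤ ((1:ℝ)/2)^(n+5) :=
      hρcb _ hnCX (by linarith [hE0])
    have hbB : ρ n * (3 * εsm 0) ≤ ((1:ℝ)/2)^(n+5) :=
      hρcb _ (by linarith [hE0]) (by linarith)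
    have hbC : ρ n * (δ' n / εf n) ≤ ((1:ℝ)/2)^(n+5) :=
      hρcb _ hdnn (by linarith [hE0])
    -- split small indices
    have hsplit2 : ∑ i ∈ J n, a i • x (φ i)
        = ∑ i ∈ (J n).filter (fun i => i < n), a i • x (φ i)
          + ∑ i ∈ (J n).filter (fun i => ¬ i < n), a i • x (φ i) :=
      (Finset.sum_filter_add_sum_filter_not _ _ _).symm
    have hsmall : ‖∑ i ∈ (J n).filter (fun i => i < n), a i • x (φ i)‖
        ≤ ((1:ℝ)/2)^(n+5) * v := by
      have hc1 : ((J n).filter (fun i => i < n)).card ≤ n := by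
        have hsub : (J n).filter (fun i => i < n) ⊆ Finset.range n :=
          fun i hi => Finset.mem_range.mpr (Finset.mem_filter.mp hi).2
        simpa using Finset.card_le_card hsub
      have h1 : ‖∑ i ∈ (J n).filter (fun i => i < n), a i • x (φ i)‖
          ≤ ∑ i ∈ (J n).filter (fun i => i < n), (ρ n * v) * CX := by
        refine (norm_sum_le _ _).trans (Finset.sum_le_sum fun i hi => ?_)
        rw [norm_smul, Real.norm_eq_abs]
        have hup := hJup n hn i (Finset.mem_filter.mp hi).1
        have := hxCX (φ i)
        nlinarith [abs_nonneg (a i), norm_nonneg (x (φ i))]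
      have h2 : ∑ i ∈ (J n).filter (fun i => i < n), (ρ n * v) * CX
          ≤ (n:ℝ) * ((ρ n * v) * CX) := by
        rw [Finset.sum_const, nsmul_eq_mul]
        have hcast : (((J n).filter (fun i => i < n)).card : ℝ) ≤ (n:ℝ) := by exact_mod_cast hc1
        have : (0:ℝ) ≤ (ρ n * v) * CX := by positivity
        exact mul_le_mul_of_nonneg_right hcast this
      have h3 : (n:ℝ) * ((ρ n * v) * CX) = (ρ n * ((n:ℝ) * CX)) * v := by ring
      calc ‖∑ i ∈ (J n).filter (fun i => i < n), a i • x (φ i)‖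
          ≤ (n:ℝ) * ((ρ n * v) * CX) := h1.trans h2
        _ = (ρ n * ((n:ℝ) * CX)) * v := h3
        _ ≤ ((1:ℝ)/2)^(n+5) * v := mul_le_mul_of_nonneg_right hbA hvpos.le
    -- main part
    rcases Finset.eq_empty_or_nonempty ((J n).filter (fun i => ¬ i < n)) with hFe | hFne
    · rw [hsplit2, hFe]
      simp only [Finset.sum_empty, add_zero]
      have h1 : (0:ℝ) ≤ ((1:ℝ)/2)^(n+2) * sSup S := by positivity
      nlinarith [hsmall, hvpos.le]
    · set F : Finset ℕ := (J n).filter (fun i => ¬ i < n) with hFdef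
      have hFJ : F ⊆ J n := Finset.filter_subset _ _
      have hFmin : ∀ i ∈ F, n ≤ i := fun i hi => not_lt.mp (Finset.mem_filter.mp hi).2
      have hFcard : F.card ≤ msq (n+1) :=
        ((Finset.card_le_card hFJ).trans (hJcard n)).trans (hmsqge (n+1))
      have haF : ∀ i ∈ F, |a i| ≤ ρ n * v := fun i hi => (hJup n hn i (hFJ hi)).le
      have hcardφ : F.card ≤ φ (F.min' hFne) := by
        have h1 : n ≤ F.min' hFne := hFmin _ (F.min'_mem hFne)
        calc F.card ≤ msq (n+1) := hFcard
          _ ≤ msq (F.min' hFne + 1) := hmsqmono.monotone (by omega)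
          _ ≤ φ (F.min' hFne) := hφge _
      have hspread := spread_compare x xt εsm hεsm_anti hkey φ hφs.monotone F hFne hcardφ
        a (ρ n * v) hρnv haF hφs
      have hscb := sc_bound z xt (δ' n) (εf n) (hδ'pos n hn) (hεfpos n) (hεfprop n hn)
        F a (ρ n * v) hρnv haF
      have hFS : Function.update δ 0 δ₀ n * ‖∑ i ∈ F, a i • z i‖ ∈ S :=
        ⟨n, F, hFmin, hFcard, rfl⟩
      have hFQ : Function.update δ 0 δ₀ n * ‖∑ i ∈ F, a i • z i‖ ≤ sSup S := le_csSup hSbdd hFS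
      rw [hwn n hn] at hFQ
      have habs := (abs_le.mp hspread).2
      have hδz : δ' n * ‖∑ i ∈ F, a i • z i‖ ≤ ((1:ℝ)/2)^(n+2) * sSup S := by
        rw [hδ'eq]
        calc δ n * ((1:ℝ)/2)^(n+2) * ‖∑ i ∈ F, a i • z i‖
            = ((1:ℝ)/2)^(n+2) * (δ n * ‖∑ i ∈ F, a i • z i‖) := by ring
          _ ≤ ((1:ℝ)/2)^(n+2) * sSup S := by
              refine mul_le_mul_of_nonneg_left hFQ (by positivity)
      have hδρ : δ' n * ((ρ n * v) / εf n) ≤ ((1:ℝ)/2)^(n+5) * v := by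
        have : δ' n * ((ρ n * v) / εf n) = (ρ n * (δ' n / εf n)) * v := by
          field_simp
        rw [this]
        exact mul_le_mul_of_nonneg_right hbC hvpos.le
      have hEρ : 3 * εsm 0 * (ρ n * v) ≤ ((1:ℝ)/2)^(n+5) * v := by
        have : 3 * εsm 0 * (ρ n * v) = (ρ n * (3 * εsm 0)) * v := by ring
        rw [this]
        exact mul_le_mul_of_nonneg_right hbB hvpos.le
      have hFbound : ‖∑ i ∈ F, a i • x (φ i)‖
          ≤ ((1:ℝ)/2)^(n+2) * sSup S + 2 * ((1:ℝ)/2)^(n+5) * v := by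
        linarith
      calc ‖∑ i ∈ J n, a i • x (φ i)‖
          ≤ ‖∑ i ∈ (J n).filter (fun i => i < n), a i • x (φ i)‖
            + ‖∑ i ∈ F, a i • x (φ i)‖ := by rw [hsplit2]; exact norm_add_le _ _
        _ ≤ ((1:ℝ)/2)^(n+5) * v + (((1:ℝ)/2)^(n+2) * sSup S + 2 * ((1:ℝ)/2)^(n+5) * v) := by
            exact add_le_add hsmall hFbound
        _ = 3 * ((1:ℝ)/2)^(n+5) * v + ((1:ℝ)/2)^(n+2) * sSup S := by ring
  -- final assembly
  have hpeel : ∑ n ∈ Finset.range (T+1), ‖∑ i ∈ J n, a i • x (φ i)‖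
      = (∑ i ∈ Finset.range T, ‖∑ j ∈ J (i+1), a j • x (φ j)‖)
        + ‖∑ j ∈ J 0, a j • x (φ j)‖ := Finset.sum_range_succ' _ _
  have htail : ∑ i ∈ Finset.range T, ‖∑ j ∈ J (i+1), a j • x (φ j)‖
      ≤ (3/32) * v + (1/4) * sSup S := by
    have h1 : ∀ i ∈ Finset.range T, ‖∑ j ∈ J (i+1), a j • x (φ j)‖
        ≤ 3 * ((1:ℝ)/2)^(i+6) * v + ((1:ℝ)/2)^(i+3) * sSup S := by
      intro i _
      have := hlevel (i+1) (by omega)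
      have e1 : i + 1 + 5 = i + 6 := by omega
      have e2 : i + 1 + 2 = i + 3 := by omega
      rwa [e1, e2] at this
    calc ∑ i ∈ Finset.range T, ‖∑ j ∈ J (i+1), a j • x (φ j)‖
        ≤ ∑ i ∈ Finset.range T, (3 * ((1:ℝ)/2)^(i+6) * v + ((1:ℝ)/2)^(i+3) * sSup S) :=
          Finset.sum_le_sum h1
      _ = 3 * (∑ i ∈ Finset.range T, ((1:ℝ)/2)^(i+6)) * v
          + (∑ i ∈ Finset.range T, ((1:ℝ)/2)^(i+3)) * sSup S := by
          rw [Finset.sum_add_distrib, ← Finset.sum_mul, ← Finset.sum_mul, Finset.mul_sum]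
      _ ≤ 3 * (2 * ((1:ℝ)/2)^6) * v + (2 * ((1:ℝ)/2)^3) * sSup S := by
          have g1 := my_geom T 6
          have g2 := my_geom T 3
          have m1 : 3 * (∑ i ∈ Finset.range T, ((1:ℝ)/2)^(i+6)) * v
              ≤ 3 * (2 * ((1:ℝ)/2)^6) * v := by
            have : (∑ i ∈ Finset.range T, ((1:ℝ)/2)^(i+6)) ≤ 2 * ((1:ℝ)/2)^6 := g1
            nlinarith [hvpos.le]
          have m2 : (∑ i ∈ Finset.range T, ((1:ℝ)/2)^(i+3)) * sSup S
              ≤ (2 * ((1:ℝ)/2)^3) * sSup S := mul_le_mul_of_nonneg_right g2 hQ0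
          linarith
      _ ≤ (3/32) * v + (1/4) * sSup S := by norm_num
  have hfinal : v ≤ (1/2) * sSup S + ((3/32) * v + (1/4) * sSup S) := by
    calc v ≤ ∑ n ∈ Finset.range (T+1), ‖∑ i ∈ J n, a i • x (φ i)‖ := hvle
      _ = (∑ i ∈ Finset.range T, ‖∑ j ∈ J (i+1), a j • x (φ j)‖)
          + ‖∑ j ∈ J 0, a j • x (φ j)‖ := hpeel
      _ ≤ ((3/32) * v + (1/4) * sSup S) + (1/2) * sSup S := add_le_add htail hlevel0
      _ = (1/2) * sSup S + ((3/32) * v + (1/4) * sSup S) := by ring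
  show v ≤ sSup S
  linarith


end
end

section
/- Let (z_i) be a seminormalized basic sequence having a spreading model (z̃_i). If (z_i) has Property P1, then (z̃_i) has Property P1; and if (z_i) has Property P2, then (z̃_i) has Property P2. -/
open Filter

noncomputable section

private lemma indicator_sum_aux {W : Type*} [AddCommMonoid W] [Module ℝ W]
    (A : Finset ℕ) (n : ℕ) (h : A ⊆ Finset.range n) (v : ℕ → W) :
    ∑ i ∈ Finset.range n, (if i ∈ A then (1:ℝ) else 0) • v i = ∑ i ∈ A, v i := by
  rw [← Finset.sum_filter_add_sum_filter_not (Finset.range n) (· ∈ A)]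
  have h1 : (Finset.range n).filter (· ∈ A) = A := by
    ext x; simp only [Finset.mem_filter, Finset.mem_range, and_iff_right_iff_imp]
    intro hx; exact Finset.mem_range.mp (h hx)
  have h2 : ∑ i ∈ (Finset.range n).filter (¬ · ∈ A), (if i ∈ A then (1:ℝ) else 0) • v i = 0 := by
    apply Finset.sum_eq_zero
    intro i hi
    simp [(Finset.mem_filter.mp hi).2]
  rw [h2, add_zero, h1]
  apply Finset.sum_congr rfl
  intro i hi
  simp [hi]

private lemma div_smul_sum_aux {W : Type*} [AddCommGroup W] [Module ℝ W]
    (t : ℝ) (a : ℕ → ℝ) (v : ℕ → W) (s : Finset ℕ) :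
    ∑ i ∈ s, (a i / t) • v i = t⁻¹ • ∑ i ∈ s, a i • v i := by
  rw [Finset.smul_sum]
  refine Finset.sum_congr rfl fun i _ => ?_
  rw [div_eq_inv_mul, mul_smul]

/-- Proposition 3.7 (a). -/
theorem statement_15
    {Z V : Type*} [NormedAddCommGroup Z] [NormedSpace ℝ Z] [CompleteSpace Z]
    [NormedAddCommGroup V] [NormedSpace ℝ V]
    (z : ℕ → Z) (hzsn : IsSeminormalized z) (hzb : IsBasicSeq z)
    (zt : ℕ → V) (hzsm : IsSpreadingModelOf zt z) :
    (PropertyP1 z → PropertyP1 zt) ∧ (PropertyP2 z → PropertyP2 zt) := by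
  obtain ⟨c, Cb, hc, hbound⟩ := hzsn
  obtain ⟨hz0, C, hC1, hCbasic⟩ := hzb
  obtain ⟨ε, hεpos, hεanti, hεto, hsp⟩ := hzsm
  have hC0 : (0:ℝ) < C := lt_of_lt_of_le one_pos hC1
  have hcoeff : ∀ (b : ℕ → ℝ) (n i : ℕ), i < n →
      |b i| * c ≤ 2 * C * ‖∑ j ∈ Finset.range n, b j • z j‖ := by
    intro b n i hin
    have h1 : ‖∑ j ∈ Finset.range (i+1), b j • z j‖ ≤ C * ‖∑ j ∈ Finset.range n, b j • z j‖ :=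
      hCbasic b (i+1) n hin
    have h2 : ‖∑ j ∈ Finset.range i, b j • z j‖ ≤ C * ‖∑ j ∈ Finset.range n, b j • z j‖ :=
      hCbasic b i n (le_of_lt hin)
    have h3 : b i • z i = ∑ j ∈ Finset.range (i+1), b j • z j - ∑ j ∈ Finset.range i, b j • z j := by
      rw [Finset.sum_range_succ]; abel
    have h4 : ‖b i • z i‖ ≤ 2 * C * ‖∑ j ∈ Finset.range n, b j • z j‖ := by
      rw [h3]
      calc ‖∑ j ∈ Finset.range (i+1), b j • z j - ∑ j ∈ Finset.range i, b j • z j‖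
          ≤ ‖∑ j ∈ Finset.range (i+1), b j • z j‖ + ‖∑ j ∈ Finset.range i, b j • z j‖ :=
            norm_sub_le _ _
        _ ≤ 2 * C * ‖∑ j ∈ Finset.range n, b j • z j‖ := by linarith
    have h5 : c ≤ ‖z i‖ := (hbound i).1
    have h6 : ‖b i • z i‖ = |b i| * ‖z i‖ := norm_smul _ _
    nlinarith [abs_nonneg (b i)]
  constructor
  · -- P1
    intro hP1 R
    obtain ⟨N₂, hN₂⟩ := hP1 (R + 1)
    obtain ⟨N₁, hN₁⟩ : ∃ N₁, ε N₁ < 1 := (hεto.eventually (gt_mem_nhds one_pos)).exists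
    refine ⟨max N₁ N₂ + 1, ?_⟩
    intro A hA
    have hAne : A.Nonempty := Finset.card_pos.mp (by omega)
    set n := A.sup id + 1 with hn
    have hAsub : A ⊆ Finset.range n := by
      intro x hx
      simp only [Finset.mem_range, hn]
      exact Nat.lt_succ_of_le (Finset.le_sup (f := id) hx)
    have hcard_le : A.card ≤ n := le_trans (Finset.card_le_card hAsub) (by simp)
    have hnN : max N₁ N₂ + 1 ≤ n := le_trans hA hcard_le
    have hεn : ε n < 1 := lt_of_le_of_lt (hεanti (by omega)) hN₁
    have hsp' := hsp n (fun i => if i ∈ A then (1:ℝ) else 0)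
      (fun i _ => by by_cases h : i ∈ A <;> simp [h]) (fun i => n + i)
      (fun i j hij => by dsimp only; omega) (by simp)
    rw [indicator_sum_aux A n hAsub, indicator_sum_aux A n hAsub] at hsp'
    have himg : ∑ i ∈ A, z (n + i) = ∑ j ∈ A.image (n + ·), z j :=
      (Finset.sum_image (fun x _ y _ h => by omega)).symm
    have hcardimg : N₂ ≤ (A.image (n + ·)).card := by
      rw [Finset.card_image_of_injective _ (fun x y h => by omega)]
      omega
    have hR := hN₂ (A.image (n + ·)) hcardimg
    rw [himg] at hsp'
    have habs := abs_lt.mp hsp'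
    linarith [habs.1]
  · -- P2
    intro hP2 ρ hρ
    obtain ⟨M, hM⟩ := hP2 (2*ρ/3) (by linarith)
    set L : ℝ := 2*c + 4*C with hL
    have hL0 : (0:ℝ) < L := by positivity
    have hδ : (0:ℝ) < min (c/(4*C)) (c/(2*L)) := by positivity
    obtain ⟨N₀, hN₀⟩ : ∃ N₀, ε N₀ < min (c/(4*C)) (c/(2*L)) :=
      (hεto.eventually (gt_mem_nhds hδ)).exists
    refine ⟨M + N₀, ?_⟩
    intro N a hnorm
    by_cases hNcase : N ≤ N₀
    · calc ((Finset.range N).filter fun i => ρ ≤ |a i|).card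
          ≤ (Finset.range N).card := Finset.card_filter_le _ _
        _ ≤ M + N₀ := by simp; omega
    push_neg at hNcase
    have hNpos : 0 < N := lt_of_le_of_lt (Nat.zero_le _) hNcase
    have hε1 : ε N ≤ c/(4*C) :=
      le_trans (hεanti hNcase.le) (le_trans hN₀.le (min_le_left _ _))
    have hε2 : ε N ≤ c/(2*L) :=
      le_trans (hεanti hNcase.le) (le_trans hN₀.le (min_le_right _ _))
    have hεNpos : 0 < ε N := hεpos N
    have hne : (Finset.range N).Nonempty := ⟨0, Finset.mem_range.mpr hNpos⟩
    set t : ℝ := ((Finset.range N).sup' hne fun i => |a i|) ⊔ 1 with ht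
    have ht1 : (1:ℝ) ≤ t := le_max_right _ _
    have ht0 : (0:ℝ) < t := lt_of_lt_of_le one_pos ht1
    have hta : ∀ i < N, |a i| ≤ t := fun i hi =>
      le_trans (Finset.le_sup' (fun i => |a i|) (Finset.mem_range.mpr hi)) (le_max_left _ _)
    set s' : ℝ := ‖∑ i ∈ Finset.range N, a i • z (N + i)‖ with hs'
    have hs'0 : 0 ≤ s' := norm_nonneg _
    have hsp' := hsp N (fun i => a i / t)
      (fun i hi => by
        rw [abs_div, abs_of_pos ht0, div_le_one ht0]; exact hta i hi)
      (fun i => N + i) (fun i j hij => by dsimp only; omega) (by simp)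
    rw [div_smul_sum_aux, div_smul_sum_aux, norm_smul, norm_smul, hnorm,
      Real.norm_eq_abs, abs_inv, abs_of_pos ht0] at hsp'
    have hs'near : |s' - 1| < t * ε N := by
      have h7 : t⁻¹ * s' - t⁻¹ * 1 = t⁻¹ * (s' - 1) := by ring
      rw [h7, abs_mul, abs_inv, abs_of_pos ht0] at hsp'
      calc |s' - 1| = t * (t⁻¹ * |s' - 1|) := by field_simp
        _ < t * ε N := by
          exact mul_lt_mul_of_pos_left hsp' ht0
    set b : ℕ → ℝ := fun j => if N ≤ j then a (j - N) else 0 with hb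
    have hbsum : ∑ j ∈ Finset.range (N+N), b j • z j = ∑ i ∈ Finset.range N, a i • z (N+i) := by
      rw [Finset.range_eq_Ico, ← Finset.sum_Ico_consecutive _ (Nat.zero_le N) (Nat.le_add_right N N)]
      have h0 : ∑ j ∈ Finset.Ico 0 N, b j • z j = 0 := by
        apply Finset.sum_eq_zero
        intro j hj
        have : ¬ N ≤ j := by
          have := (Finset.mem_Ico.mp hj).2; omega
        simp [hb, this]
      rw [h0, zero_add, Finset.sum_Ico_eq_sum_range]
      apply Finset.sum_congr (by rw [Nat.add_sub_cancel, Finset.range_eq_Ico])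
      intro i _
      simp [hb, Nat.le_add_right]
    have hai : ∀ i < N, |a i| * c ≤ 2 * C * s' := by
      intro i hi
      have h8 := hcoeff b (N+N) (N+i) (by omega)
      rw [hbsum] at h8
      have h9 : b (N+i) = a i := by simp [hb, Nat.le_add_right]
      rwa [h9] at h8
    have htb : t * c ≤ c + 2*C*s' := by
      have h10 : t ≤ (c + 2*C*s')/c := by
        rw [ht]
        apply max_le
        · apply Finset.sup'_le
          intro i hi
          rw [le_div_iff₀ hc]
          have := hai i (Finset.mem_range.mp hi)
          linarith
        · rw [le_div_iff₀ hc]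
          nlinarith [mul_nonneg (mul_nonneg (by norm_num : (0:ℝ) ≤ 2) hC0.le) hs'0]
      calc t * c ≤ ((c + 2*C*s')/c) * c := mul_le_mul_of_nonneg_right h10 hc.le
        _ = c + 2*C*s' := by field_simp
    have hε1' : ε N * (4*C) ≤ c := by
      rw [← le_div_iff₀ (by positivity : (0:ℝ) < 4*C)]; exact hε1
    have hε2' : ε N * (2*L) ≤ c := by
      rw [← le_div_iff₀ (by positivity : (0:ℝ) < 2*L)]; exact hε2
    have hs'up : s' < 1 + t * ε N := by
      have := abs_lt.mp hs'near; linarith [this.2]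
    have htL : t * c ≤ L := by
      rw [hL]
      nlinarith [mul_le_mul_of_nonneg_left hs'up.le (by positivity : (0:ℝ) ≤ 2*C),
        mul_le_mul_of_nonneg_right hε1' ht0.le]
    have hKε : t * ε N ≤ 1/2 := by
      nlinarith [mul_le_mul_of_nonneg_right htL hεNpos.le,
        mul_le_mul_of_nonneg_right hε2' ht0.le, hc, hεNpos.le, ht0.le]
    have hs'lo : 1/2 < s' := by
      have := abs_lt.mp hs'near; linarith [this.1]
    have hs'hi : s' < 3/2 := by linarith
    have hs'pos : 0 < s' := by linarith
    have hnorm1 : ‖∑ j ∈ Finset.range (N+N), (b j / s') • z j‖ = 1 := by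
      rw [div_smul_sum_aux, norm_smul, Real.norm_eq_abs, abs_inv, abs_of_pos hs'pos, hbsum,
        ← hs', inv_mul_cancel₀ (ne_of_gt hs'pos)]
    have hcard := hM (N+N) (fun j => b j / s') hnorm1
    have hsubset : ((Finset.range N).filter fun i => ρ ≤ |a i|).image (fun i => N + i) ⊆
        (Finset.range (N+N)).filter fun j => 2*ρ/3 ≤ |b j / s'| := by
      intro j hj
      simp only [Finset.mem_image, Finset.mem_filter, Finset.mem_range] at hj ⊢
      obtain ⟨i, ⟨hiN, hρi⟩, rfl⟩ := hj
      refine ⟨by omega, ?_⟩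
      have hbj : b (N+i) = a i := by simp [hb, Nat.le_add_right]
      rw [hbj, abs_div, abs_of_pos hs'pos, le_div_iff₀ hs'pos]
      have h20 : 2*ρ/3*s' ≤ 2*ρ/3*(3/2) :=
        mul_le_mul_of_nonneg_left hs'hi.le (by positivity)
      have h21 : 2*ρ/3*(3/2) = ρ := by ring
      linarith
    calc ((Finset.range N).filter fun i => ρ ≤ |a i|).card
        = (((Finset.range N).filter fun i => ρ ≤ |a i|).image (fun i => N + i)).card :=
          (Finset.card_image_of_injective _ (fun x y h => by omega)).symm
      _ ≤ ((Finset.range (N+N)).filter fun j => 2*ρ/3 ≤ |b j / s'|).card :=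
          Finset.card_le_card hsubset
      _ ≤ M := hcard
      _ ≤ M + N₀ := Nat.le_add_right _ _


end
end
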